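/- arXiv:1907.04416 — 6 statements merged into one kernel-verified Lean document; each statement's English description precedes it below -/
import Mathlib

section
/- For every integer ℓ ≥ 3, every Steiner triple system of order v with v ≥ ℓ^6/16 has an ℓ-good sequencing. -/
/-- A Steiner triple system of order `v` on the point set `{1, …, v}`:
`B` is a set of 3-element blocks, each a subset of `{1, …, v}`, such that every pair of
distinct points of `{1, …, v}` lies in exactly one block. -/
def IsSTS (v : ℕ) (B : Finset (Finset ℕ)) : Prop :=
  (∀ b ∈ B, b ⊆ Finset.Icc 1 v ∧ b.card = 3) ∧
  ∀ p ∈ Finset.Icc 1 v, ∀ q ∈ Finset.Icc 1 v, p ≠ q →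
    ∃! b, b ∈ B ∧ p ∈ b ∧ q ∈ b

/-- `x` lists the points of `{1, …, v}` at positions `1, …, v` (a permutation of the points),
and no `ℓ` consecutive points `x i, x (i+1), …, x (i+ℓ-1)` of the sequencing contain a
block of `B`. -/
def IsGoodSeq (v ℓ : ℕ) (B : Finset (Finset ℕ)) (x : ℕ → ℕ) : Prop :=
  Set.BijOn x (Set.Icc 1 v) (Set.Icc 1 v) ∧
  ∀ i : ℕ, 1 ≤ i → ∀ b ∈ B,
    ¬ (↑b : Set ℕ) ⊆ x '' (Set.Icc i (i + ℓ - 1) ∩ Set.Icc 1 v)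

open Finset

namespace STSGood

open scoped Classical

set_option maxHeartbeats 4000000

noncomputable section

/-- number of reserved slots -/
def rr (ℓ : ℕ) : ℕ := ℓ ^ 5 / 16
/-- bound on the number of dangerous pairs near one slot -/
def bb (ℓ : ℕ) : ℕ := (2 * ℓ - 3) * (ℓ - 2)
/-- bound on number of window pairs -/
def ww (ℓ : ℕ) : ℕ := ℓ * (ℓ - 1) / 2

lemma rr_cube (ℓ : ℕ) (h : 8 ≤ ℓ) : 4 * ℓ^3 ≤ rr ℓ := by
  have h2 : 64 ≤ ℓ^2 := by nlinarith
  have : 16 * (4 * ℓ^3) ≤ ℓ^5 := by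
    calc 16 * (4 * ℓ^3) = 64 * ℓ^3 := by ring
    _ ≤ ℓ^2 * ℓ^3 := Nat.mul_le_mul_right _ h2
    _ = ℓ^5 := by ring
  have := Nat.div_le_div_right (c := 16) this
  simpa [rr, Nat.mul_div_cancel_left] using this

lemma rr_big (ℓ : ℕ) (hl : 3 ≤ ℓ) : bb ℓ + 8 ≤ rr ℓ := by
  rcases Nat.lt_or_ge ℓ 8 with h | h
  · interval_cases ℓ <;> norm_num [bb, rr]
  · have h1 := rr_cube ℓ h
    have h2 : bb ℓ + 8 ≤ 4 * ℓ^3 := by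
      have hb : bb ℓ ≤ 2*ℓ*ℓ := by
        unfold bb
        calc (2*ℓ-3)*(ℓ-2) ≤ (2*ℓ)*ℓ := Nat.mul_le_mul (by omega) (by omega)
        _ = 2*ℓ*ℓ := by ring
      nlinarith
    omega

lemma key_ineq (ℓ : ℕ) (hl : 3 ≤ ℓ) :
    ww ℓ * (rr ℓ - bb ℓ - 4) + 2 * (ℓ - 2) * (rr ℓ * bb ℓ) ≤ rr ℓ * (rr ℓ - bb ℓ - 4) := by
  rcases Nat.lt_or_ge ℓ 8 with h | h
  · interval_cases ℓ <;> norm_num [bb, rr, ww]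
  · obtain ⟨k, rfl⟩ : ∃ k, ℓ = k + 8 := ⟨ℓ - 8, by omega⟩
    set ℓ := k + 8 with hℓ
    have h1 := rr_cube ℓ (by omega)
    have hbbv : bb ℓ = (2*k+13) * (k+6) := by unfold bb; congr 1 <;> omega
    have hwwle : ww ℓ ≤ ℓ * ℓ := by
      unfold ww
      calc ℓ * (ℓ-1) / 2 ≤ ℓ * ℓ / 2 := by
            exact Nat.div_le_div_right (Nat.mul_le_mul_left _ (by omega))
      _ ≤ ℓ * ℓ := Nat.div_le_self _ _
    have hRbb : bb ℓ + 4 ≤ rr ℓ := by have := rr_big ℓ (by omega); omega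
    obtain ⟨d, hd⟩ : ∃ d, rr ℓ = d + bb ℓ + 4 := ⟨rr ℓ - bb ℓ - 4, by omega⟩
    have hdsub : rr ℓ - bb ℓ - 4 = d := by omega
    rw [hdsub, hd]
    -- main estimate : 2*(ℓ-2)*bb + ww ≤ d
    have hkey : 2 * (ℓ - 2) * bb ℓ + ww ℓ ≤ d := by
      have hl2 : ℓ - 2 = k + 6 := by omega
      have : 2 * (k+6) * ((2*k+13)*(k+6)) + ℓ * ℓ + ((2*k+13)*(k+6)) + 4 ≤ 4 * ℓ^3 := by
        simp only [hℓ]; nlinarith [sq_nonneg k]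
      calc 2 * (ℓ-2) * bb ℓ + ww ℓ ≤ 2*(k+6) * ((2*k+13)*(k+6)) + ℓ * ℓ := by
            rw [hl2, hbbv]; exact Nat.add_le_add_left hwwle _
      _ ≤ 4 * ℓ^3 - (bb ℓ + 4) := by rw [hbbv]; omega
      _ ≤ rr ℓ - (bb ℓ + 4) := by omega
      _ = d := by omega
    have hkey2 : 2 * (ℓ - 2) * bb ℓ ≤ d := by omega
    calc ww ℓ * d + 2*(ℓ-2) * ((d + bb ℓ + 4) * bb ℓ)
        = (ww ℓ + 2*(ℓ-2)*bb ℓ) * d + (2*(ℓ-2)*bb ℓ) * (bb ℓ + 4) := by ring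
      _ ≤ d * d + d * (bb ℓ + 4) := by
          exact Nat.add_le_add (by nlinarith) (Nat.mul_le_mul_right _ hkey2)
      _ = (d + bb ℓ + 4) * d := by ring

/-- main counting consequence used in the greedy step -/
lemma avail_ineq (ℓ : ℕ) (hl : 3 ≤ ℓ) {S : ℕ}
    (hS : S * (rr ℓ - bb ℓ - 4) ≤ rr ℓ * bb ℓ) :
    ww ℓ + 2 * (ℓ - 2) * S ≤ rr ℓ := by
  have hbig := rr_big ℓ hl
  set d := rr ℓ - bb ℓ - 4 with hd
  have hdpos : 0 < d := by omega
  have h1 : (ww ℓ + 2 * (ℓ - 2) * S) * d ≤ rr ℓ * d := by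
    have : 2 * (ℓ-2) * S * d ≤ 2 * (ℓ-2) * (rr ℓ * bb ℓ) := by
      calc 2 * (ℓ-2) * S * d = 2*(ℓ-2) * (S * d) := by ring
      _ ≤ 2*(ℓ-2) * (rr ℓ * bb ℓ) := Nat.mul_le_mul_left _ hS
    calc (ww ℓ + 2 * (ℓ - 2) * S) * d = ww ℓ * d + 2*(ℓ-2)*S*d := by ring
    _ ≤ ww ℓ * d + 2*(ℓ-2) * (rr ℓ * bb ℓ) := Nat.add_le_add_left this _
    _ ≤ rr ℓ * d := key_ineq ℓ hl
  exact Nat.le_of_mul_le_mul_right h1 hdpos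

lemma geom (ℓ v : ℕ) (hl : 3 ≤ ℓ) (h16 : ℓ^6 ≤ 16 * v) : rr ℓ * ℓ ≤ v := by
  have h1 : 16 * (rr ℓ * ℓ) ≤ ℓ^6 := by
    have : 16 * rr ℓ ≤ ℓ^5 := by
      have := Nat.div_mul_le_self (ℓ^5) 16
      unfold rr; omega
    calc 16 * (rr ℓ * ℓ) = (16 * rr ℓ) * ℓ := by ring
    _ ≤ ℓ^5 * ℓ := Nat.mul_le_mul_right _ this
    _ = ℓ^6 := by ring
  omega


/-- slot positions: multiples of ℓ up to rr·ℓ -/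
def slotF (ℓ : ℕ) : Finset ℕ := (Finset.Icc 1 (rr ℓ)).image (fun i => i * ℓ)

/-- the non-slot positions among 1..q -/
def DD (ℓ q : ℕ) : Finset ℕ := (Finset.Icc 1 q).filter (fun n => n ∉ slotF ℓ)

/-- positions s < t and p fit in a common window of ℓ consecutive positions -/
def spn (ℓ s t p : ℕ) : Prop := max t p ≤ min s p + (ℓ - 1)

lemma card_slotF (ℓ : ℕ) (hl : 3 ≤ ℓ) : (slotF ℓ).card = rr ℓ := by
  rw [slotF, Finset.card_image_of_injective _ (fun a b hab => by
    exact Nat.eq_of_mul_eq_mul_right (by omega) hab)]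
  simp

lemma slot_dvd {ℓ p : ℕ} (hp : p ∈ slotF ℓ) : ∃ i, 1 ≤ i ∧ i ≤ rr ℓ ∧ p = i * ℓ := by
  simp only [slotF, Finset.mem_image, Finset.mem_Icc] at hp
  obtain ⟨i, ⟨h1, h2⟩, rfl⟩ := hp
  exact ⟨i, h1, h2, rfl⟩

lemma slot_ge {ℓ p : ℕ} (hl : 3 ≤ ℓ) (hp : p ∈ slotF ℓ) : ℓ ≤ p := by
  obtain ⟨i, h1, h2, rfl⟩ := slot_dvd hp
  calc ℓ = 1 * ℓ := by ring
  _ ≤ i * ℓ := Nat.mul_le_mul_right _ h1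

lemma slot_le {ℓ p : ℕ} (hp : p ∈ slotF ℓ) : p ≤ rr ℓ * ℓ := by
  obtain ⟨i, h1, h2, rfl⟩ := slot_dvd hp
  exact Nat.mul_le_mul_right _ h2

lemma slotF_subset {ℓ v : ℕ} (hl : 3 ≤ ℓ) (hgeom : rr ℓ * ℓ ≤ v) :
    slotF ℓ ⊆ Finset.Icc 1 v := by
  intro p hp
  simp only [Finset.mem_Icc]
  exact ⟨le_trans (by omega) (slot_ge hl hp), le_trans (slot_le hp) hgeom⟩

/-- at most two slots lie in any fixed interval [x, x+2ℓ-2] -/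
lemma slots_near {ℓ : ℕ} (hl : 3 ≤ ℓ) (x : ℕ) :
    ((slotF ℓ).filter (fun p => x ≤ p ∧ p ≤ x + (2*ℓ - 2))).card ≤ 2 := by
  classical
  obtain ⟨c, hc⟩ : ∃ c, c = (x + ℓ - 1) / ℓ := ⟨_, rfl⟩
  have hdm := Nat.div_add_mod (x + ℓ - 1) ℓ
  rw [← hc] at hdm
  have hmlt : (x + ℓ - 1) % ℓ < ℓ := Nat.mod_lt _ (by omega)
  have hcomm : ℓ * c = c * ℓ := Nat.mul_comm _ _
  have hsub : ((slotF ℓ).filter (fun p => x ≤ p ∧ p ≤ x + (2*ℓ - 2))) ⊆ {c * ℓ, (c+1) * ℓ} := by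
    intro p hp
    simp only [Finset.mem_filter] at hp
    obtain ⟨hps, hx1, hx2⟩ := hp
    obtain ⟨i, hi1, hi2, rfl⟩ := slot_dvd hps
    have hci : c ≤ i := by
      have h1 : x + ℓ - 1 ≤ i * ℓ + (ℓ - 1) := by omega
      have h2 : (i * ℓ + (ℓ - 1)) / ℓ = i := by
        rw [show i * ℓ + (ℓ - 1) = (ℓ - 1) + i * ℓ by ring,
          Nat.add_mul_div_right _ _ (by omega : 0 < ℓ), Nat.div_eq_of_lt (by omega)]
        omega
      calc c = (x + ℓ - 1) / ℓ := hc
      _ ≤ (i * ℓ + (ℓ-1)) / ℓ := Nat.div_le_div_right h1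
      _ = i := h2
    have hcx : x ≤ c * ℓ := by omega
    have hc1 : (c+1) * ℓ = c * ℓ + ℓ := by ring
    have hc2 : (c+2) * ℓ = c * ℓ + 2 * ℓ := by ring
    have hile : i ≤ c + 1 := by
      by_contra hcon
      push_neg at hcon
      have : (c + 2) * ℓ ≤ i * ℓ := Nat.mul_le_mul_right _ (by omega)
      omega
    simp only [Finset.mem_insert, Finset.mem_singleton]
    rcases (by omega : i = c ∨ i = c + 1) with rfl | rfl
    · left; rfl
    · right; rfl
  calc _ ≤ ({c * ℓ, (c+1) * ℓ} : Finset ℕ).card := Finset.card_le_card hsub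
  _ ≤ 2 := Finset.card_insert_le _ _ |>.trans (by simp)


variable {v : ℕ} {B : Finset (Finset ℕ)}

/-- the block through two points (junk if not unique/existent) -/
def blk (B : Finset (Finset ℕ)) (p q : ℕ) : Finset ℕ :=
  if h : ∃ b, b ∈ B ∧ min p q ∈ b ∧ max p q ∈ b then h.choose else ∅

/-- the third point of the block through `p` and `q` -/
def thrd (B : Finset (Finset ℕ)) (p q : ℕ) : ℕ :=
  (((blk B p q).erase p).erase q).sum id

lemma blk_comm (B : Finset (Finset ℕ)) (p q : ℕ) : blk B p q = blk B q p := by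
  unfold blk; rw [min_comm, max_comm]

lemma thrd_comm (B : Finset (Finset ℕ)) (p q : ℕ) : thrd B p q = thrd B q p := by
  unfold thrd; rw [blk_comm, Finset.erase_right_comm]

lemma blk_eq (hSTS : IsSTS v B) {p q : ℕ} {b : Finset ℕ} (hb : b ∈ B)
    (hpb : p ∈ b) (hqb : q ∈ b) (hpq : p ≠ q) : blk B p q = b := by
  have hsub := (hSTS.1 b hb).1
  have hminb : min p q ∈ b := by rcases min_choice p q with h | h <;> rw [h] <;> assumption
  have hmaxb : max p q ∈ b := by rcases max_choice p q with h | h <;> rw [h] <;> assumption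
  have hex : ∃ bb, bb ∈ B ∧ min p q ∈ bb ∧ max p q ∈ bb := ⟨b, hb, hminb, hmaxb⟩
  have hblk : blk B p q = hex.choose := by unfold blk; rw [dif_pos hex]
  have hspec := hex.choose_spec
  have hmm : min p q ≠ max p q := by
    rcases min_choice p q with h | h <;> rcases max_choice p q with h' | h' <;> omega
  obtain ⟨b₀, _, hb₀uniq⟩ := hSTS.2 (min p q) (hsub hminb) (max p q) (hsub hmaxb) hmm
  rw [hblk, hb₀uniq _ hspec, ← hb₀uniq b ⟨hb, hminb, hmaxb⟩]

/-- key uniqueness property: any point of a block through p,q other than p,q is `thrd B p q`. -/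
lemma thrd_eq (hSTS : IsSTS v B) {p q z : ℕ} {b : Finset ℕ} (hb : b ∈ B)
    (hpb : p ∈ b) (hqb : q ∈ b) (hpq : p ≠ q) (hzb : z ∈ b) (hzp : z ≠ p) (hzq : z ≠ q) :
    z = thrd B p q := by
  have hblk := blk_eq hSTS hb hpb hqb hpq
  have hcard : ((b.erase p).erase q).card = 1 := by
    rw [Finset.card_erase_of_mem (Finset.mem_erase.mpr ⟨hpq.symm, hqb⟩),
      Finset.card_erase_of_mem hpb, (hSTS.1 b hb).2]
  obtain ⟨z₀, hz₀⟩ := Finset.card_eq_one.mp hcard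
  have hzmem : z ∈ (b.erase p).erase q := Finset.mem_erase.mpr ⟨hzq, Finset.mem_erase.mpr ⟨hzp, hzb⟩⟩
  rw [hz₀, Finset.mem_singleton] at hzmem
  unfold thrd
  rw [hblk, hz₀, Finset.sum_singleton, hzmem]
  rfl

/-- a block containing two given distinct points equals {p, q, thrd}. In particular membership
form: if `{a, c, y} ∈ B` (as a finset) with suitable distinctness, then `y = thrd B a c`. -/
lemma mem_block_card3 (hSTS : IsSTS v B) {b : Finset ℕ} (hb : b ∈ B) : b.card = 3 :=
  (hSTS.1 b hb).2

/-- distinctness of elements of a 3-element set literal -/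
lemma triple_distinct {a c y : ℕ} (h : ({a, c, y} : Finset ℕ).card = 3) :
    a ≠ c ∧ a ≠ y ∧ c ≠ y := by
  by_contra hcon
  push_neg at hcon
  rcases Classical.em (a = c) with h1 | h1
  · subst h1
    have he : ({a, a, y} : Finset ℕ) = {a, y} := by
      ext z; simp [Finset.mem_insert]
    rw [he] at h
    have := Finset.card_insert_le a ({y} : Finset ℕ)
    simp at this; omega
  · rcases Classical.em (a = y) with h2 | h2
    · subst h2
      have he : ({a, c, a} : Finset ℕ) = {a, c} := by
        ext z; simp [Finset.mem_insert]; tauto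
      rw [he] at h
      have := Finset.card_insert_le a ({c} : Finset ℕ)
      simp at this; omega
    · have h3 := hcon h1 h2
      subst h3
      have he : ({a, c, c} : Finset ℕ) = {a, c} := by
        ext z; simp [Finset.mem_insert]
      rw [he] at h
      have := Finset.card_insert_le a ({c} : Finset ℕ)
      simp at this; omega

/-- if {a, c, y} ∈ B and a ≠ c then y = thrd B a c -/
lemma thrd_of_triple (hSTS : IsSTS v B) {a c y : ℕ} (hmem : ({a, c, y} : Finset ℕ) ∈ B) :
    y = thrd B a c := by
  have hcard := mem_block_card3 hSTS hmem
  obtain ⟨hac, hay, hcy⟩ := triple_distinct hcard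
  exact thrd_eq hSTS hmem (by simp) (by simp) hac (by simp) (Ne.symm hay) (Ne.symm hcy)

/-- uniqueness of the third point: if {a,c,y} and {a,c,y'} are both blocks, y = y' -/
lemma third_unique (hSTS : IsSTS v B) {a c y y' : ℕ}
    (h1 : ({a, c, y} : Finset ℕ) ∈ B) (h2 : ({a, c, y'} : Finset ℕ) ∈ B) : y = y' := by
  rw [thrd_of_triple hSTS h1, thrd_of_triple hSTS h2]

/-- uniqueness in the first coordinate: if {u,w,y} ∈ B and {u',w,y} ∈ B then u = u' -/
lemma first_unique (hSTS : IsSTS v B) {u u' w y : ℕ}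
    (h1 : ({u, w, y} : Finset ℕ) ∈ B) (h2 : ({u', w, y} : Finset ℕ) ∈ B) : u = u' := by
  have c1 := triple_distinct (mem_block_card3 hSTS h1)
  have c2 := triple_distinct (mem_block_card3 hSTS h2)
  have e1 : u = thrd B w y :=
    thrd_eq hSTS h1 (by simp) (by simp) c1.2.2 (by simp) c1.1 c1.2.1
  have e2 : u' = thrd B w y :=
    thrd_eq hSTS h2 (by simp) (by simp) c2.2.2 (by simp) c2.1 c2.2.1
  rw [e1, e2]


/-! ### Counting lemmas -/

/-- dangerous pairs near the slot p : pairs of non-slot positions fitting in a window with p -/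
def PN (ℓ q p : ℕ) : Finset (ℕ × ℕ) :=
  ((DD ℓ q) ×ˢ (DD ℓ q)).filter (fun st => st.1 < st.2 ∧ spn ℓ st.1 st.2 p)

lemma mem_DD {ℓ q n : ℕ} (h : n ∈ DD ℓ q) : 1 ≤ n ∧ n ≤ q ∧ n ∉ slotF ℓ := by
  simp only [DD, Finset.mem_filter, Finset.mem_Icc] at h
  exact ⟨h.1.1, h.1.2, h.2⟩

lemma mem_DD_iff {ℓ q n : ℕ} : n ∈ DD ℓ q ↔ 1 ≤ n ∧ n ≤ q ∧ n ∉ slotF ℓ := by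
  simp only [DD, Finset.mem_filter, Finset.mem_Icc]; tauto

lemma card_PN {ℓ p : ℕ} (hl : 3 ≤ ℓ) (hp : p ∈ slotF ℓ) (q : ℕ) :
    (PN ℓ q p).card ≤ bb ℓ := by
  classical
  have hpℓ : ℓ ≤ p := slot_ge hl hp
  set SS : Finset ℕ := (Finset.Icc (p+1-ℓ) (p+ℓ-2)).erase p with hSS
  set TT : ℕ → Finset ℕ :=
    fun s => (Finset.Ioc s (min (s+(ℓ-1)) (p+(ℓ-1)))).erase p with hTT
  have hsub : PN ℓ q p ⊆ SS.biUnion (fun s => {s} ×ˢ TT s) := by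
    rintro ⟨s, t⟩ hst
    simp only [PN, Finset.mem_filter, Finset.mem_product] at hst
    obtain ⟨⟨hs, ht⟩, hlt, hspn⟩ := hst
    obtain ⟨hs1, hs2, hs3⟩ := mem_DD hs
    obtain ⟨ht1, ht2, ht3⟩ := mem_DD ht
    have hsne : s ≠ p := fun h => hs3 (h ▸ hp)
    have htne : t ≠ p := fun h => ht3 (h ▸ hp)
    unfold spn at hspn
    have hmax1 : t ≤ max t p := le_max_left _ _
    have hmax2 : p ≤ max t p := le_max_right _ _
    have hmin1 : min s p ≤ s := min_le_left _ _
    have hmin2 : min s p ≤ p := min_le_right _ _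
    simp only [Finset.mem_biUnion, Finset.mem_product, Finset.mem_singleton]
    refine ⟨s, ?_, rfl, ?_⟩
    · rw [hSS]
      simp only [Finset.mem_erase, Finset.mem_Icc]
      exact ⟨hsne, by omega, by omega⟩
    · rw [hTT]
      simp only [Finset.mem_erase, Finset.mem_Ioc, le_min_iff]
      exact ⟨htne, hlt, by omega, by omega⟩
  have hcardTT : ∀ s ∈ SS, ((fun s => {s} ×ˢ TT s) s).card ≤ ℓ - 2 := by
    intro s hsSS
    rw [hSS] at hsSS
    simp only [Finset.mem_erase, Finset.mem_Icc] at hsSS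
    obtain ⟨hsne, hs1, hs2⟩ := hsSS
    have hcard : (TT s).card ≤ ℓ - 2 := by
      rcases Nat.lt_or_ge s p with hsp | hsp
      · have hmin : min (s+(ℓ-1)) (p+(ℓ-1)) = s+(ℓ-1) := min_eq_left (by omega)
        rw [hTT]
        simp only [hmin]
        rw [Finset.card_erase_of_mem (by simp only [Finset.mem_Ioc]; omega), Nat.card_Ioc]
        omega
      · have hps : p < s := by omega
        rw [hTT]
        calc ((Finset.Ioc s (min (s+(ℓ-1)) (p+(ℓ-1)))).erase p).card
            ≤ (Finset.Ioc s (min (s+(ℓ-1)) (p+(ℓ-1)))).card := Finset.card_erase_le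
        _ ≤ (Finset.Ioc s (p+(ℓ-1))).card :=
            Finset.card_le_card (Finset.Ioc_subset_Ioc_right (min_le_right _ _))
        _ = (p+(ℓ-1)) - s := Nat.card_Ioc _ _
        _ ≤ ℓ - 2 := by omega
    calc ({s} ×ˢ TT s).card = (TT s).card := by simp
    _ ≤ ℓ - 2 := hcard
  have hcardSS : SS.card ≤ 2*ℓ - 3 := by
    rw [hSS, Finset.card_erase_of_mem (by simp only [Finset.mem_Icc]; omega), Nat.card_Icc]
    omega
  calc (PN ℓ q p).card ≤ (SS.biUnion (fun s => {s} ×ˢ TT s)).card := Finset.card_le_card hsub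
  _ ≤ ∑ s ∈ SS, ({s} ×ˢ TT s).card := Finset.card_biUnion_le
  _ ≤ SS.card * (ℓ - 2) := Finset.sum_le_card_nsmul _ _ _ hcardTT
  _ ≤ (2*ℓ - 3) * (ℓ - 2) := Nat.mul_le_mul_right _ hcardSS
  _ = bb ℓ := rfl

/-- the global incidence set: (dangerous pair, slot) incidences -/
def GS (ℓ q : ℕ) : Finset ((ℕ × ℕ) × ℕ) :=
  (((DD ℓ q) ×ˢ (DD ℓ q)) ×ˢ (slotF ℓ)).filter
    (fun e => e.1.1 < e.1.2 ∧ spn ℓ e.1.1 e.1.2 e.2)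

lemma card_GS {ℓ : ℕ} (hl : 3 ≤ ℓ) (q : ℕ) : (GS ℓ q).card ≤ rr ℓ * bb ℓ := by
  classical
  have hsub : GS ℓ q ⊆ (slotF ℓ).biUnion (fun p => (PN ℓ q p).image (fun st => (st, p))) := by
    rintro ⟨⟨s, t⟩, p⟩ he
    simp only [GS, Finset.mem_filter, Finset.mem_product] at he
    simp only [Finset.mem_biUnion, Finset.mem_image]
    exact ⟨p, he.1.2, ⟨(s,t), by simp only [PN, Finset.mem_filter, Finset.mem_product]; tauto, rfl⟩⟩
  calc (GS ℓ q).card ≤ _ := Finset.card_le_card hsub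
  _ ≤ ∑ p ∈ slotF ℓ, ((PN ℓ q p).image (fun st => (st, p))).card := Finset.card_biUnion_le
  _ ≤ (slotF ℓ).card * bb ℓ := Finset.sum_le_card_nsmul _ _ _ (fun p hp => by
        calc ((PN ℓ q p).image (fun st => (st, p))).card ≤ (PN ℓ q p).card :=
              Finset.card_image_le
        _ ≤ bb ℓ := card_PN hl hp q)
  _ = rr ℓ * bb ℓ := by rw [card_slotF ℓ hl]

/-- incidences whose third point is y -/
def incSet (ℓ q : ℕ) (B : Finset (Finset ℕ)) (f : ℕ → ℕ) (y : ℕ) : Finset ((ℕ × ℕ) × ℕ) :=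
  (GS ℓ q).filter (fun e => ({f e.1.1, f e.1.2, y} : Finset ℕ) ∈ B)

/-- currently capped unused points -/
def capped (ℓ v q : ℕ) (B : Finset (Finset ℕ)) (f : ℕ → ℕ) : Finset ℕ :=
  ((Finset.Icc 1 v) \ (DD ℓ q).image f).filter
    (fun y => rr ℓ - bb ℓ - 4 ≤ (incSet ℓ q B f y).card)

lemma capped_card {ℓ v q : ℕ} {B : Finset (Finset ℕ)} {f : ℕ → ℕ}
    (hSTS : IsSTS v B) (hl : 3 ≤ ℓ) :
    (capped ℓ v q B f).card * (rr ℓ - bb ℓ - 4) ≤ rr ℓ * bb ℓ := by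
  classical
  have hdisj : ∀ y₁ ∈ capped ℓ v q B f, ∀ y₂ ∈ capped ℓ v q B f, y₁ ≠ y₂ →
      Disjoint (incSet ℓ q B f y₁) (incSet ℓ q B f y₂) := by
    intro y₁ _ y₂ _ hne
    rw [Finset.disjoint_left]
    intro e he1 he2
    simp only [incSet, Finset.mem_filter] at he1 he2
    exact hne (third_unique hSTS he1.2 he2.2)
  have h1 : ∑ y ∈ capped ℓ v q B f, (incSet ℓ q B f y).card ≤ (GS ℓ q).card := by
    rw [← Finset.card_biUnion hdisj]
    apply Finset.card_le_card
    intro e he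
    simp only [Finset.mem_biUnion] at he
    obtain ⟨y, _, he⟩ := he
    exact Finset.mem_of_mem_filter _ he
  have h2 : (capped ℓ v q B f).card * (rr ℓ - bb ℓ - 4) ≤
      ∑ y ∈ capped ℓ v q B f, (incSet ℓ q B f y).card := by
    have := Finset.card_nsmul_le_sum (capped ℓ v q B f)
      (fun y => (incSet ℓ q B f y).card) (rr ℓ - bb ℓ - 4)
      (fun y hy => by simp only [capped, Finset.mem_filter] at hy; exact hy.2)
    simpa [smul_eq_mul, mul_comm] using this
  exact le_trans h2 (le_trans h1 (card_GS hl q))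

/-- positions relevant to protection at step q+1 -/
def relA (ℓ q : ℕ) : Finset ℕ := (DD ℓ q).filter (fun a => ∃ p ∈ slotF ℓ, spn ℓ a (q+1) p)

/-- the at most two slots near position q+1 -/
def PnearQ (ℓ q : ℕ) : Finset ℕ :=
  (slotF ℓ).filter (fun p => q + 2 ≤ p + ℓ ∧ p ≤ q + (ℓ - 1))

lemma card_PnearQ {ℓ : ℕ} (hl : 3 ≤ ℓ) (q : ℕ) : (PnearQ ℓ q).card ≤ 2 := by
  have hsub : PnearQ ℓ q ⊆ (slotF ℓ).filter
      (fun p => (q + 2 - ℓ) ≤ p ∧ p ≤ (q + 2 - ℓ) + (2*ℓ - 2)) := by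
    intro p hp
    simp only [PnearQ, Finset.mem_filter] at hp ⊢
    exact ⟨hp.1, by omega, by omega⟩
  exact le_trans (Finset.card_le_card hsub) (slots_near hl _)

lemma spn_near {ℓ a q p : ℕ} (hl : 3 ≤ ℓ) (ha : a ≤ q) (hspn : spn ℓ a (q+1) p) :
    q + 2 ≤ p + ℓ ∧ p ≤ q + (ℓ - 1) := by
  unfold spn at hspn
  have h1 : q + 1 ≤ max (q+1) p := le_max_left _ _
  have h2 : p ≤ max (q+1) p := le_max_right _ _
  have h3 : min a p ≤ a := min_le_left _ _
  have h4 : min a p ≤ p := min_le_right _ _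
  omega

lemma card_relA {ℓ q : ℕ} (hl : 3 ≤ ℓ) (hq : q + 1 ∉ slotF ℓ) :
    (relA ℓ q).card ≤ 2 * (ℓ - 2) := by
  classical
  set Aset : ℕ → Finset ℕ := fun p =>
    if p ≤ q then (Finset.Icc (q+2-ℓ) q).erase p else Finset.Icc (p+1-ℓ) q with hAset
  have hsub : relA ℓ q ⊆ (PnearQ ℓ q).biUnion Aset := by
    intro a ha
    simp only [relA, Finset.mem_filter] at ha
    obtain ⟨haD, p, hpS, hspn⟩ := ha
    obtain ⟨ha1, ha2, ha3⟩ := mem_DD haD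
    have hnear := spn_near hl ha2 hspn
    simp only [Finset.mem_biUnion]
    refine ⟨p, by simp only [PnearQ, Finset.mem_filter]; exact ⟨hpS, hnear⟩, ?_⟩
    unfold spn at hspn
    have h1 : q + 1 ≤ max (q+1) p := le_max_left _ _
    have h3 : min a p ≤ a := min_le_left _ _
    have h4 : min a p ≤ p := min_le_right _ _
    have h2 : p ≤ max (q+1) p := le_max_right _ _
    rw [hAset]
    by_cases hpq : p ≤ q
    · simp only [if_pos hpq, Finset.mem_erase, Finset.mem_Icc]
      exact ⟨fun h => ha3 (h ▸ hpS), by omega, ha2⟩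
    · simp only [if_neg hpq, Finset.mem_Icc]
      have hpge : q + 2 ≤ p := by
        have hne : p ≠ q + 1 := fun hh => hq (hh ▸ hpS)
        omega
      constructor
      · -- a ≥ p+1-ℓ : since p > a we have min a p = a
        have hmin : min a p = a := min_eq_left (by omega)
        rw [hmin] at hspn
        omega
      · exact ha2
  have hcards : ∀ p ∈ PnearQ ℓ q, (Aset p).card ≤ ℓ - 2 := by
    intro p hp
    simp only [PnearQ, Finset.mem_filter] at hp
    obtain ⟨hpS, hnear1, hnear2⟩ := hp
    rw [hAset]
    by_cases hpq : p ≤ q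
    · simp only [if_pos hpq]
      rw [Finset.card_erase_of_mem (by simp only [Finset.mem_Icc]; omega), Nat.card_Icc]
      omega
    · simp only [if_neg hpq]
      rw [Nat.card_Icc]
      have hpge : q + 2 ≤ p := by
        have : p ≠ q + 1 := fun h => hq (h ▸ hpS)
        omega
      omega
  calc (relA ℓ q).card ≤ ((PnearQ ℓ q).biUnion Aset).card := Finset.card_le_card hsub
  _ ≤ ∑ p ∈ PnearQ ℓ q, (Aset p).card := Finset.card_biUnion_le
  _ ≤ (PnearQ ℓ q).card * (ℓ - 2) := Finset.sum_le_card_nsmul _ _ _ hcards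
  _ ≤ 2 * (ℓ - 2) := Nat.mul_le_mul_right _ (card_PnearQ hl q)


/-! ### the greedy construction (phase 1) -/

/-- invariant for the partial sequencing on the non-slot positions 1..q -/
structure Inv (ℓ v : ℕ) (B : Finset (Finset ℕ)) (q : ℕ) (f : ℕ → ℕ) : Prop where
  maps : ∀ a ∈ DD ℓ q, f a ∈ Finset.Icc 1 v
  inj : ∀ a ∈ DD ℓ q, ∀ a' ∈ DD ℓ q, f a = f a' → a = a'
  win : ∀ a ∈ DD ℓ q, ∀ c ∈ DD ℓ q, ∀ e ∈ DD ℓ q, a < c → c < e → e ≤ a + (ℓ - 1) →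
        ({f a, f c, f e} : Finset ℕ) ∉ B
  cap : ∀ y ∈ Finset.Icc 1 v, y ∉ (DD ℓ q).image f →
        (incSet ℓ q B f y).card ≤ rr ℓ - bb ℓ - 3

lemma DD_zero (ℓ : ℕ) : DD ℓ 0 = ∅ := by
  unfold DD; simp

lemma DD_succ_slot {ℓ q : ℕ} (h : q + 1 ∈ slotF ℓ) : DD ℓ (q+1) = DD ℓ q := by
  ext n
  simp only [mem_DD_iff]
  constructor
  · rintro ⟨h1, h2, h3⟩
    refine ⟨h1, ?_, h3⟩
    rcases Nat.lt_or_ge n (q+1) with h4 | h4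
    · omega
    · exact absurd (by omega : n = q + 1) (fun hh => h3 (hh ▸ h))
  · rintro ⟨h1, h2, h3⟩; exact ⟨h1, by omega, h3⟩

lemma DD_succ_nonslot {ℓ q : ℕ} (h : q + 1 ∉ slotF ℓ) :
    DD ℓ (q+1) = insert (q+1) (DD ℓ q) := by
  ext n
  simp only [mem_DD_iff, Finset.mem_insert]
  constructor
  · rintro ⟨h1, h2, h3⟩
    rcases Nat.lt_or_ge n (q+1) with h4 | h4
    · exact Or.inr ⟨h1, by omega, h3⟩
    · exact Or.inl (by omega)
  · rintro (rfl | ⟨h1, h2, h3⟩)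
    · exact ⟨by omega, le_refl _, h⟩
    · exact ⟨h1, by omega, h3⟩

lemma notmem_DD_self {ℓ q : ℕ} : q + 1 ∉ DD ℓ q := by
  simp only [mem_DD_iff]; omega

lemma card_DD_v {ℓ v : ℕ} (hl : 3 ≤ ℓ) (hgeom : rr ℓ * ℓ ≤ v) :
    (DD ℓ v).card = v - rr ℓ := by
  have hDD : DD ℓ v = Finset.Icc 1 v \ slotF ℓ := by
    unfold DD
    rw [Finset.sdiff_eq_filter]
  rw [hDD, Finset.card_sdiff_of_subset (slotF_subset hl hgeom), card_slotF ℓ hl, Nat.card_Icc]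
  omega

lemma DD_subset {ℓ q v : ℕ} (h : q ≤ v) : DD ℓ q ⊆ DD ℓ v := by
  intro n hn
  rw [mem_DD_iff] at hn ⊢
  exact ⟨hn.1, le_trans hn.2.1 h, hn.2.2⟩

/-- The main extension step of the greedy algorithm. -/
lemma extend {ℓ v q : ℕ} {B : Finset (Finset ℕ)} {f : ℕ → ℕ}
    (hl : 3 ≤ ℓ) (hSTS : IsSTS v B) (hgeom : rr ℓ * ℓ ≤ v)
    (hq : q + 1 ≤ v) (hqs : q + 1 ∉ slotF ℓ) (hf : Inv ℓ v B q f) :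
    ∃ f', Inv ℓ v B (q+1) f' := by
  classical
  -- the sets of forbidden points
  set IW : Finset ℕ := (DD ℓ q).filter (fun a => q + 2 ≤ a + ℓ) with hIW
  set F1 : Finset ℕ := IW.sym2.image
    (Sym2.lift ⟨fun a a' => thrd B (f a) (f a'), fun a a' => thrd_comm B (f a) (f a')⟩) with hF1
  set F2 : Finset ℕ := ((relA ℓ q) ×ˢ (capped ℓ v q B f)).image
    (fun az => thrd B (f az.1) az.2) with hF2
  set Un : Finset ℕ := Finset.Icc 1 v \ (DD ℓ q).image f with hUn
  -- cardinality bounds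
  have hcardIW : IW.card ≤ ℓ - 1 := by
    have hsub : IW ⊆ Finset.Icc (q + 2 - ℓ) q := by
      intro a ha
      simp only [hIW, Finset.mem_filter, mem_DD_iff] at ha
      simp only [Finset.mem_Icc]
      omega
    calc IW.card ≤ (Finset.Icc (q + 2 - ℓ) q).card := Finset.card_le_card hsub
    _ = q + 1 - (q + 2 - ℓ) := Nat.card_Icc _ _
    _ ≤ ℓ - 1 := by omega
  have hcardF1 : F1.card ≤ ww ℓ := by
    calc F1.card ≤ IW.sym2.card := Finset.card_image_le
    _ = Nat.choose (IW.card + 1) 2 := Finset.card_sym2 _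
    _ ≤ Nat.choose ℓ 2 := Nat.choose_le_choose _ (by omega)
    _ = ℓ * (ℓ - 1) / 2 := Nat.choose_two_right _
    _ = ww ℓ := rfl
  have hcardF2 : F2.card ≤ 2 * (ℓ - 2) * (capped ℓ v q B f).card := by
    calc F2.card ≤ ((relA ℓ q) ×ˢ (capped ℓ v q B f)).card := Finset.card_image_le
    _ = (relA ℓ q).card * (capped ℓ v q B f).card := Finset.card_product _ _
    _ ≤ 2 * (ℓ - 2) * (capped ℓ v q B f).card :=
        Nat.mul_le_mul_right _ (card_relA hl hqs)
  have hcardUn : rr ℓ + 1 ≤ Un.card := by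
    have himcard : ((DD ℓ q).image f).card ≤ (DD ℓ q).card := Finset.card_image_le
    have hDDq : (DD ℓ q).card ≤ v - rr ℓ - 1 := by
      have hsub : DD ℓ q ⊆ (DD ℓ v).erase (q+1) := by
        intro n hn
        have hn' := hn
        rw [mem_DD_iff] at hn'
        rw [Finset.mem_erase]
        exact ⟨by omega, DD_subset (by omega) hn⟩
      calc (DD ℓ q).card ≤ ((DD ℓ v).erase (q+1)).card := Finset.card_le_card hsub
      _ = (DD ℓ v).card - 1 := Finset.card_erase_of_mem (by rw [mem_DD_iff]; exact ⟨by omega, hq, hqs⟩)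
      _ = v - rr ℓ - 1 := by rw [card_DD_v hl hgeom]
    have hUnc : Un.card = v - ((DD ℓ q).image f).card := by
      rw [hUn, Finset.card_sdiff_of_subset, Nat.card_Icc]
      · omega
      · intro y hy
        obtain ⟨a, ha, rfl⟩ := Finset.mem_image.mp hy
        exact hf.maps a ha
    have hrv : rr ℓ + 1 ≤ v := by
      have := rr_big ℓ hl
      calc rr ℓ + 1 ≤ rr ℓ * ℓ := by nlinarith
      _ ≤ v := hgeom
    omega
  have hSbound := capped_card (q := q) (f := f) hSTS hl
  have havail : ww ℓ + 2 * (ℓ - 2) * (capped ℓ v q B f).card ≤ rr ℓ :=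
    avail_ineq ℓ hl hSbound
  -- choose the new point z
  have hnonempty : ((Un \ F1) \ F2).Nonempty := by
    rw [← Finset.card_pos]
    have h1 : Un.card - F1.card - F2.card ≤ ((Un \ F1) \ F2).card := by
      have a1 := Finset.le_card_sdiff F1 Un
      have a2 := Finset.le_card_sdiff F2 (Un \ F1)
      omega
    omega
  obtain ⟨z, hz⟩ := hnonempty
  simp only [Finset.mem_sdiff, hUn] at hz
  obtain ⟨⟨⟨hzv, hzim⟩, hzF1⟩, hzF2⟩ := hz
  -- define the extension
  refine ⟨Function.update f (q+1) z, ?_⟩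
  have hDD1 : DD ℓ (q+1) = insert (q+1) (DD ℓ q) := DD_succ_nonslot hqs
  have hfeq : ∀ a ∈ DD ℓ q, Function.update f (q+1) z a = f a := by
    intro a ha
    have h2 := (mem_DD ha).2.1
    exact Function.update_of_ne (by omega) _ _
  have hfq : Function.update f (q+1) z (q+1) = z := Function.update_self _ _ _
  have himage : (DD ℓ (q+1)).image (Function.update f (q+1) z)
      = insert z ((DD ℓ q).image f) := by
    rw [hDD1, Finset.image_insert, hfq]
    congr 1
    exact Finset.image_congr (fun a ha => hfeq a ha)
  have hbig := rr_big ℓ hl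
  refine ⟨?_, ?_, ?_, ?_⟩
  · -- maps
    intro a ha
    rw [hDD1, Finset.mem_insert] at ha
    rcases ha with rfl | ha
    · rw [hfq]; exact hzv
    · rw [hfeq a ha]; exact hf.maps a ha
  · -- inj
    intro a ha a' ha' heq
    rw [hDD1, Finset.mem_insert] at ha ha'
    rcases ha with rfl | ha <;> rcases ha' with rfl | ha'
    · rfl
    · rw [hfq, hfeq a' ha'] at heq
      exact absurd (by rw [heq]; exact Finset.mem_image_of_mem f ha') hzim
    · rw [hfq, hfeq a ha] at heq
      exact absurd (by rw [← heq]; exact Finset.mem_image_of_mem f ha) hzim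
    · rw [hfeq a ha, hfeq a' ha'] at heq
      exact hf.inj a ha a' ha' heq
  · -- win
    intro a ha c hc e he hac hce hea
    rw [hDD1, Finset.mem_insert] at ha hc he
    rcases he with rfl | he
    · -- e = q+1 : the new case
      have haq : a ∈ DD ℓ q := by
        rcases ha with rfl | ha
        · exfalso
          rcases hc with rfl | hc
          · omega
          · have := (mem_DD hc).2.1; omega
        · exact ha
      have hcq : c ∈ DD ℓ q := by
        rcases hc with rfl | hc
        · omega
        · exact hc
      rw [hfeq a haq, hfeq c hcq, hfq]
      intro hmem
      apply hzF1
      have hthrd := thrd_of_triple hSTS hmem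
      have haIW : a ∈ IW := by
        rw [hIW, Finset.mem_filter]
        exact ⟨haq, by omega⟩
      have hcIW : c ∈ IW := by
        rw [hIW, Finset.mem_filter]
        exact ⟨hcq, by omega⟩
      rw [hF1]
      apply Finset.mem_image.mpr
      refine ⟨s(a, c), Finset.mk_mem_sym2_iff.mpr ⟨haIW, hcIW⟩, ?_⟩
      rw [Sym2.lift_mk]
      exact hthrd.symm
    · -- e old : all three old
      have heq' := (mem_DD he).2.1
      have haq : a ∈ DD ℓ q := by
        rcases ha with rfl | ha
        · omega
        · exact ha
      have hcq : c ∈ DD ℓ q := by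
        rcases hc with rfl | hc
        · omega
        · exact hc
      rw [hfeq a haq, hfeq c hcq, hfeq e he]
      exact hf.win a haq c hcq e he hac hce hea
  · -- cap
    intro y hyv hyim
    rw [himage, Finset.mem_insert] at hyim
    push_neg at hyim
    obtain ⟨hyz, hyim⟩ := hyim
    by_cases hycap : y ∈ capped ℓ v q B f
    · -- capped case : no new incidences at all
      have hsubinc : incSet ℓ (q+1) B (Function.update f (q+1) z) y ⊆ incSet ℓ q B f y := by
        rintro ⟨⟨s, t⟩, p⟩ he
        simp only [incSet, GS, Finset.mem_filter, Finset.mem_product] at he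
        obtain ⟨⟨⟨⟨hs, ht⟩, hp⟩, hlt, hspn⟩, hB⟩ := he
        rw [hDD1, Finset.mem_insert] at hs ht
        have hsq : s ∈ DD ℓ q := by
          rcases hs with rfl | hs
          · exfalso
            rcases ht with rfl | ht
            · omega
            · have := (mem_DD ht).2.1; omega
          · exact hs
        rcases ht with rfl | ht
        · -- new incidence: impossible since y is capped (z ∉ F2)
          exfalso
          apply hzF2
          rw [hfeq s hsq, hfq] at hB
          have hBs : ({f s, y, z} : Finset ℕ) ∈ B := by
            have : ({f s, z, y} : Finset ℕ) = {f s, y, z} := by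
              rw [Finset.pair_comm z y]
            rwa [this] at hB
          have hthrd := thrd_of_triple hSTS hBs
          rw [hF2]
          apply Finset.mem_image.mpr
          refine ⟨(s, y), Finset.mem_product.mpr ⟨?_, hycap⟩, hthrd.symm⟩
          simp only [relA, Finset.mem_filter]
          exact ⟨hsq, p, hp, hspn⟩
        · rw [hfeq s hsq, hfeq t ht] at hB
          simp only [incSet, GS, Finset.mem_filter, Finset.mem_product]
          exact ⟨⟨⟨⟨hsq, ht⟩, hp⟩, hlt, hspn⟩, hB⟩
      calc (incSet ℓ (q+1) B (Function.update f (q+1) z) y).card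
          ≤ (incSet ℓ q B f y).card := Finset.card_le_card hsubinc
      _ ≤ rr ℓ - bb ℓ - 3 := hf.cap y hyv hyim
    · -- uncapped case : at most 2 new incidences
      have hpre : (incSet ℓ q B f y).card ≤ rr ℓ - bb ℓ - 5 := by
        have : ¬ (rr ℓ - bb ℓ - 4 ≤ (incSet ℓ q B f y).card) := by
          intro hcon
          apply hycap
          simp only [capped, Finset.mem_filter, Finset.mem_sdiff]
          exact ⟨⟨hyv, hyim⟩, hcon⟩
        omega
      set Ay : Finset ℕ := (DD ℓ q).filter (fun a => ({f a, z, y} : Finset ℕ) ∈ B) with hAy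
      have hsubinc : incSet ℓ (q+1) B (Function.update f (q+1) z) y ⊆
          incSet ℓ q B f y ∪ (Ay ×ˢ {q+1}) ×ˢ (PnearQ ℓ q) := by
        rintro ⟨⟨s, t⟩, p⟩ he
        simp only [incSet, GS, Finset.mem_filter, Finset.mem_product] at he
        obtain ⟨⟨⟨⟨hs, ht⟩, hp⟩, hlt, hspn⟩, hB⟩ := he
        rw [hDD1, Finset.mem_insert] at hs ht
        have hsq : s ∈ DD ℓ q := by
          rcases hs with rfl | hs
          · exfalso
            rcases ht with rfl | ht
            · omega
            · have := (mem_DD ht).2.1; omega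
          · exact hs
        rw [Finset.mem_union]
        rcases ht with rfl | ht
        · right
          rw [hfeq s hsq, hfq] at hB
          have hnear := spn_near hl (mem_DD hsq).2.1 hspn
          simp only [Finset.mem_product, Finset.mem_singleton]
          refine ⟨⟨?_, by simp⟩, ?_⟩
          · rw [hAy, Finset.mem_filter]; exact ⟨hsq, hB⟩
          · simp only [PnearQ, Finset.mem_filter]; exact ⟨hp, hnear⟩
        · left
          rw [hfeq s hsq, hfeq t ht] at hB
          simp only [incSet, GS, Finset.mem_filter, Finset.mem_product]
          exact ⟨⟨⟨⟨hsq, ht⟩, hp⟩, hlt, hspn⟩, hB⟩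
      have hAycard : Ay.card ≤ 1 := by
        rw [Finset.card_le_one]
        intro a ha a' ha'
        rw [hAy, Finset.mem_filter] at ha ha'
        exact hf.inj a ha.1 a' ha'.1 (first_unique hSTS ha.2 ha'.2)
      have hnewcard : ((Ay ×ˢ {q+1}) ×ˢ (PnearQ ℓ q)).card ≤ 2 := by
        rw [Finset.card_product, Finset.card_product]
        have := card_PnearQ hl q
        have : Ay.card * ({q+1} : Finset ℕ).card * (PnearQ ℓ q).card ≤ 1 * 1 * 2 := by
          apply Nat.mul_le_mul
          · apply Nat.mul_le_mul hAycard
            simp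
          · exact card_PnearQ hl q
        omega
      calc (incSet ℓ (q+1) B (Function.update f (q+1) z) y).card
          ≤ (incSet ℓ q B f y ∪ (Ay ×ˢ {q+1}) ×ˢ (PnearQ ℓ q)).card :=
            Finset.card_le_card hsubinc
      _ ≤ (incSet ℓ q B f y).card + ((Ay ×ˢ {q+1}) ×ˢ (PnearQ ℓ q)).card :=
            Finset.card_union_le _ _
      _ ≤ rr ℓ - bb ℓ - 3 := by omega


lemma phase1 {ℓ v : ℕ} {B : Finset (Finset ℕ)} (hl : 3 ≤ ℓ) (hSTS : IsSTS v B)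
    (hgeom : rr ℓ * ℓ ≤ v) : ∃ f, Inv ℓ v B v f := by
  classical
  suffices h : ∀ q, q ≤ v → ∃ f, Inv ℓ v B q f from h v le_rfl
  intro q
  induction q with
  | zero =>
    intro _
    refine ⟨fun _ => 0, ?_, ?_, ?_, ?_⟩
    · intro a ha; rw [DD_zero] at ha; exact absurd ha (Finset.notMem_empty a)
    · intro a ha; rw [DD_zero] at ha; exact absurd ha (Finset.notMem_empty a)
    · intro a ha; rw [DD_zero] at ha; exact absurd ha (Finset.notMem_empty a)
    · intro y _ _
      have hGS : GS ℓ 0 = ∅ := by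
        unfold GS
        rw [DD_zero]
        simp
      unfold incSet
      rw [hGS]
      simp
  | succ q ih =>
    intro hq1
    obtain ⟨f, hf⟩ := ih (by omega)
    by_cases hqs : q + 1 ∈ slotF ℓ
    · have hDD := DD_succ_slot hqs
      have hGS : GS ℓ (q+1) = GS ℓ q := by unfold GS; rw [hDD]
      have hinc : ∀ y, incSet ℓ (q+1) B f y = incSet ℓ q B f y := by
        intro y; unfold incSet; rw [hGS]
      refine ⟨f, ?_, ?_, ?_, ?_⟩
      · rw [hDD]; exact hf.maps
      · rw [hDD]; exact hf.inj
      · rw [hDD]; exact hf.win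
      · intro y h1 h2
        rw [hinc]
        exact hf.cap y h1 (by rwa [hDD] at h2)
    · exact extend hl hSTS hgeom hq1 hqs hf


/-! ### phase 2 : Hall matching of the leftover points into the slots -/

/-- leftover points after phase 1 -/
def RS (ℓ v : ℕ) (f : ℕ → ℕ) : Finset ℕ := Finset.Icc 1 v \ (DD ℓ v).image f

/-- slots admissible for leftover point y -/
def adm (ℓ v : ℕ) (B : Finset (Finset ℕ)) (f : ℕ → ℕ) (y : ℕ) : Finset ℕ :=
  (slotF ℓ).filter (fun p => ∀ st ∈ PN ℓ v p, ({f st.1, f st.2, y} : Finset ℕ) ∉ B)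

lemma card_RS {ℓ v : ℕ} {B : Finset (Finset ℕ)} {f : ℕ → ℕ}
    (hl : 3 ≤ ℓ) (hgeom : rr ℓ * ℓ ≤ v) (hf : Inv ℓ v B v f) :
    (RS ℓ v f).card = rr ℓ := by
  have himcard : ((DD ℓ v).image f).card = (DD ℓ v).card :=
    Finset.card_image_of_injOn (fun a ha a' ha' h => hf.inj a ha a' ha' h)
  have hsub : (DD ℓ v).image f ⊆ Finset.Icc 1 v := by
    intro y hy
    obtain ⟨a, ha, rfl⟩ := Finset.mem_image.mp hy
    exact hf.maps a ha
  rw [RS, Finset.card_sdiff_of_subset hsub, himcard, card_DD_v hl hgeom, Nat.card_Icc]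
  have hrl : rr ℓ ≤ rr ℓ * ℓ := Nat.le_mul_of_pos_right _ (by omega)
  omega

lemma adm_card {ℓ v y : ℕ} {B : Finset (Finset ℕ)} {f : ℕ → ℕ}
    (hl : 3 ≤ ℓ) (hSTS : IsSTS v B) (hf : Inv ℓ v B v f)
    (hy : y ∈ RS ℓ v f) : bb ℓ + 3 ≤ (adm ℓ v B f y).card := by
  classical
  rw [RS, Finset.mem_sdiff] at hy
  have hcap := hf.cap y hy.1 hy.2
  have hsub : slotF ℓ \ adm ℓ v B f y ⊆ (incSet ℓ v B f y).image (fun e => e.2) := by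
    intro p hp
    rw [Finset.mem_sdiff] at hp
    obtain ⟨hp1, hp2⟩ := hp
    simp only [adm, Finset.mem_filter, not_and, not_forall] at hp2
    obtain ⟨st, hst, hstB⟩ := hp2 hp1
    simp only [PN, Finset.mem_filter, Finset.mem_product] at hst
    rw [not_not] at hstB
    apply Finset.mem_image.mpr
    refine ⟨((st.1, st.2), p), ?_, rfl⟩
    simp only [incSet, GS, Finset.mem_filter, Finset.mem_product]
    exact ⟨⟨⟨⟨hst.1.1, hst.1.2⟩, hp1⟩, hst.2.1, hst.2.2⟩, hstB⟩
  have h1 : (slotF ℓ \ adm ℓ v B f y).card ≤ rr ℓ - bb ℓ - 3 := by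
    calc (slotF ℓ \ adm ℓ v B f y).card ≤ ((incSet ℓ v B f y).image (fun e => e.2)).card :=
        Finset.card_le_card hsub
    _ ≤ (incSet ℓ v B f y).card := Finset.card_image_le
    _ ≤ rr ℓ - bb ℓ - 3 := hcap
  have hadm_sub : adm ℓ v B f y ⊆ slotF ℓ := Finset.filter_subset _ _
  have h2 : (slotF ℓ \ adm ℓ v B f y).card = rr ℓ - (adm ℓ v B f y).card := by
    rw [Finset.card_sdiff_of_subset hadm_sub, card_slotF ℓ hl]
  have h3 : (adm ℓ v B f y).card ≤ rr ℓ := by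
    rw [← card_slotF ℓ hl]; exact Finset.card_le_card hadm_sub
  have hbig := rr_big ℓ hl
  omega

lemma bad_card {ℓ v p : ℕ} {B : Finset (Finset ℕ)} {f : ℕ → ℕ}
    (hl : 3 ≤ ℓ) (hp : p ∈ slotF ℓ) :
    ((PN ℓ v p).image (fun st => thrd B (f st.1) (f st.2))).card ≤ bb ℓ :=
  le_trans Finset.card_image_le (card_PN hl hp v)

lemma hall_matching {ℓ v : ℕ} {B : Finset (Finset ℕ)} {f : ℕ → ℕ}
    (hl : 3 ≤ ℓ) (hSTS : IsSTS v B) (hgeom : rr ℓ * ℓ ≤ v) (hf : Inv ℓ v B v f) :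
    ∃ g : {y // y ∈ RS ℓ v f} → ℕ,
      Function.Injective g ∧ ∀ y : {y // y ∈ RS ℓ v f}, g y ∈ adm ℓ v B f (y : ℕ) := by
  classical
  apply (Finset.all_card_le_biUnion_card_iff_exists_injective
    (fun (y : {y // y ∈ RS ℓ v f}) => adm ℓ v B f (y : ℕ))).mp
  intro s
  rcases Finset.eq_empty_or_nonempty s with rfl | ⟨y₀, hy₀⟩
  · simp
  rcases Nat.lt_or_ge s.card (bb ℓ + 4) with hsmall | hlarge
  · have hsub : adm ℓ v B f (y₀ : ℕ) ⊆ s.biUnion (fun y => adm ℓ v B f (y : ℕ)) :=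
      Finset.subset_biUnion_of_mem (fun y : {y // y ∈ RS ℓ v f} => adm ℓ v B f ↑y) hy₀
    calc s.card ≤ bb ℓ + 3 := by omega
    _ ≤ (adm ℓ v B f (y₀ : ℕ)).card := adm_card hl hSTS hf y₀.2
    _ ≤ _ := Finset.card_le_card hsub
  · -- every slot is admissible for some member of s
    have hslot_sub : slotF ℓ ⊆ s.biUnion (fun y => adm ℓ v B f (y : ℕ)) := by
      intro p hp
      have hbad := bad_card (v := v) (B := B) (f := f) hl hp
      by_contra hcon
      have hall_bad : (s.image (fun y => y.1)) ⊆
          (PN ℓ v p).image (fun st => thrd B (f st.1) (f st.2)) := by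
        intro ycoe hyc
        obtain ⟨y, hys, rfl⟩ := Finset.mem_image.mp hyc
        have hpnotadm : p ∉ adm ℓ v B f (y : ℕ) := by
          intro hmem
          exact hcon (Finset.mem_biUnion.mpr ⟨y, hys, hmem⟩)
        simp only [adm, Finset.mem_filter, not_and, not_forall] at hpnotadm
        obtain ⟨st, hst, hstB⟩ := hpnotadm hp
        rw [not_not] at hstB
        apply Finset.mem_image.mpr
        exact ⟨st, hst, (thrd_of_triple hSTS hstB).symm⟩
      have hcards : s.card ≤ bb ℓ := by
        calc s.card = (s.image (fun y => y.1)).card :=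
            (Finset.card_image_of_injective _ Subtype.val_injective).symm
        _ ≤ _ := Finset.card_le_card hall_bad
        _ ≤ bb ℓ := hbad
      omega
    calc s.card ≤ Fintype.card {y // y ∈ RS ℓ v f} := Finset.card_le_univ s
    _ = (RS ℓ v f).card := Fintype.card_coe _
    _ = rr ℓ := card_RS hl hgeom hf
    _ = (slotF ℓ).card := (card_slotF ℓ hl).symm
    _ ≤ _ := Finset.card_le_card hslot_sub


lemma slot_gap {ℓ p p' : ℕ} (hl : 3 ≤ ℓ) (hp : p ∈ slotF ℓ) (hp' : p' ∈ slotF ℓ)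
    (hlt : p < p') : p + ℓ ≤ p' := by
  obtain ⟨i, hi1, hi2, rfl⟩ := slot_dvd hp
  obtain ⟨j, hj1, hj2, rfl⟩ := slot_dvd hp'
  have hij : i < j := by
    by_contra hcon
    push_neg at hcon
    exact absurd (Nat.mul_le_mul_right ℓ hcon) (by omega)
  calc i * ℓ + ℓ = (i + 1) * ℓ := by ring
  _ ≤ j * ℓ := Nat.mul_le_mul_right _ (by omega)

/-- the full construction -/
lemma main0 {ℓ v : ℕ} {B : Finset (Finset ℕ)} (hl : 3 ≤ ℓ) (hSTS : IsSTS v B)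
    (hgeom : rr ℓ * ℓ ≤ v) : ∃ x : ℕ → ℕ, IsGoodSeq v ℓ B x := by
  classical
  obtain ⟨f, hf⟩ := phase1 hl hSTS hgeom
  obtain ⟨g, hginj, hgadm⟩ := hall_matching hl hSTS hgeom hf
  have hgsub : ∀ y : {y // y ∈ RS ℓ v f}, g y ∈ slotF ℓ :=
    fun y => (Finset.mem_filter.mp (hgadm y)).1
  have himg : (Finset.univ.image g) = slotF ℓ := by
    apply Finset.eq_of_subset_of_card_le
    · intro p hp
      obtain ⟨y, _, rfl⟩ := Finset.mem_image.mp hp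
      exact hgsub y
    · rw [card_slotF ℓ hl, Finset.card_image_of_injective _ hginj, Finset.card_univ,
        Fintype.card_coe, card_RS hl hgeom hf]
  set xx : ℕ → ℕ := fun n =>
    if h : ∃ yy : {y // y ∈ RS ℓ v f}, g yy = n then ((h.choose : {y // y ∈ RS ℓ v f}) : ℕ)
    else if n ∈ DD ℓ v then f n else n with hxx
  have hxx_nonslot : ∀ n ∈ DD ℓ v, xx n = f n := by
    intro n hn
    have hnot : ¬ ∃ yy : {y // y ∈ RS ℓ v f}, g yy = n := by
      rintro ⟨yy, rfl⟩
      exact (mem_DD hn).2.2 (hgsub yy)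
    rw [hxx]
    simp only [dif_neg hnot, if_pos hn]
  have hxx_slot : ∀ p ∈ slotF ℓ, ∃ yy : {y // y ∈ RS ℓ v f}, g yy = p ∧ xx p = ↑yy := by
    intro p hp
    have hex : ∃ yy : {y // y ∈ RS ℓ v f}, g yy = p := by
      rw [← himg] at hp
      obtain ⟨yy, _, h⟩ := Finset.mem_image.mp hp
      exact ⟨yy, h⟩
    refine ⟨hex.choose, hex.choose_spec, ?_⟩
    rw [hxx]
    simp only [dif_pos hex]
  have hRS_Icc : ∀ y ∈ RS ℓ v f, y ∈ Finset.Icc 1 v := by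
    intro y hy
    rw [RS, Finset.mem_sdiff] at hy
    exact hy.1
  have hRS_notim : ∀ y ∈ RS ℓ v f, y ∉ (DD ℓ v).image f := by
    intro y hy
    rw [RS, Finset.mem_sdiff] at hy
    exact hy.2
  have hDD_or : ∀ n ∈ Finset.Icc 1 v, n ∈ DD ℓ v ∨ n ∈ slotF ℓ := by
    intro n hn
    rw [Finset.mem_Icc] at hn
    by_cases h : n ∈ slotF ℓ
    · exact Or.inr h
    · exact Or.inl (mem_DD_iff.mpr ⟨hn.1, hn.2, h⟩)
  -- basic mapping facts
  have hmaps : ∀ n ∈ Finset.Icc 1 v, xx n ∈ Finset.Icc 1 v := by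
    intro n hn
    rcases hDD_or n hn with h | h
    · rw [hxx_nonslot n h]; exact hf.maps n h
    · obtain ⟨yy, _, hxp⟩ := hxx_slot n h
      rw [hxp]
      exact hRS_Icc _ yy.2
  have hinj : ∀ n ∈ Finset.Icc 1 v, ∀ n' ∈ Finset.Icc 1 v, xx n = xx n' → n = n' := by
    intro n hn n' hn' heq
    rcases hDD_or n hn with h | h <;> rcases hDD_or n' hn' with h' | h'
    · rw [hxx_nonslot n h, hxx_nonslot n' h'] at heq
      exact hf.inj n h n' h' heq
    · obtain ⟨yy, _, hxp⟩ := hxx_slot n' h'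
      rw [hxx_nonslot n h, hxp] at heq
      exact absurd (heq ▸ Finset.mem_image_of_mem f h) (hRS_notim _ yy.2)
    · obtain ⟨yy, _, hxp⟩ := hxx_slot n h
      rw [hxx_nonslot n' h', hxp] at heq
      exact absurd (heq ▸ Finset.mem_image_of_mem f h') (hRS_notim _ yy.2)
    · obtain ⟨yy, hgy, hxp⟩ := hxx_slot n h
      obtain ⟨yy', hgy', hxp'⟩ := hxx_slot n' h'
      rw [hxp, hxp'] at heq
      have : yy = yy' := Subtype.val_injective heq
      rw [← hgy, ← hgy', this]
  have hsurj : ∀ u ∈ Finset.Icc 1 v, ∃ n ∈ Finset.Icc 1 v, xx n = u := by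
    intro u hu
    by_cases h : u ∈ (DD ℓ v).image f
    · obtain ⟨n, hn, rfl⟩ := Finset.mem_image.mp h
      refine ⟨n, ?_, hxx_nonslot n hn⟩
      rw [mem_DD_iff] at hn
      rw [Finset.mem_Icc]
      omega
    · have huRS : u ∈ RS ℓ v f := by rw [RS, Finset.mem_sdiff]; exact ⟨hu, h⟩
      set n := g ⟨u, huRS⟩ with hn
      have hnslot : n ∈ slotF ℓ := hgsub _
      refine ⟨n, slotF_subset hl hgeom hnslot, ?_⟩
      obtain ⟨yy, hgy, hxp⟩ := hxx_slot n hnslot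
      have : yy = ⟨u, huRS⟩ := hginj (by rw [hgy, hn])
      rw [hxp, this]
  -- windows property core : sorted triples
  have hcore : ∀ s t w, s ∈ DD ℓ v → t ∈ DD ℓ v → w ∈ slotF ℓ → s < t →
      spn ℓ s t w → ({f s, f t, xx w} : Finset ℕ) ∉ B := by
    intro s t w hs ht hw hst hspn
    obtain ⟨yy, hgy, hxp⟩ := hxx_slot w hw
    rw [hxp]
    have hadm := hgadm yy
    rw [hgy] at hadm
    rw [adm, Finset.mem_filter] at hadm
    refine hadm.2 (s, t) ?_
    simp only [PN, Finset.mem_filter, Finset.mem_product]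
    exact ⟨⟨hs, ht⟩, hst, hspn⟩
  have key2 : ∀ a c e, a ∈ Finset.Icc 1 v → c ∈ Finset.Icc 1 v → e ∈ Finset.Icc 1 v →
      (∃ i0, i0 ≤ a ∧ i0 ≤ c ∧ i0 ≤ e ∧ a ≤ i0 + ℓ - 1 ∧ c ≤ i0 + ℓ - 1 ∧ e ≤ i0 + ℓ - 1) →
      a < c → c < e → ({xx a, xx c, xx e} : Finset ℕ) ∈ B → False := by
    intro a c e ha hc he hwin hac hce hmem
    obtain ⟨i0, hw1, hw2, hw3, hw4, hw5, hw6⟩ := hwin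
    -- at most one slot
    rcases hDD_or a ha with hA | hA <;> rcases hDD_or c hc with hC | hC <;>
      rcases hDD_or e he with hE | hE
    · -- no slots
      rw [hxx_nonslot a hA, hxx_nonslot c hC, hxx_nonslot e hE] at hmem
      exact hf.win a hA c hC e hE hac hce (by omega) hmem
    · -- e slot
      rw [hxx_nonslot a hA, hxx_nonslot c hC] at hmem
      refine hcore a c e hA hC hE hac ?_ hmem
      unfold spn
      have h1 := le_max_left c e
      have h2 := le_max_right c e
      have h3 := min_le_left a e
      have h4 := min_le_right a e
      rcases le_total i0 (min a e) with h5 | h5 <;> rcases max_choice c e with h6 | h6 <;>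
        rcases min_choice a e with h7 | h7 <;> omega
    · -- c slot
      rw [hxx_nonslot a hA, hxx_nonslot e hE] at hmem
      have hset : ({f a, xx c, f e} : Finset ℕ) = {f a, f e, xx c} := by
        ext z; simp only [Finset.mem_insert, Finset.mem_singleton]; tauto
      rw [hset] at hmem
      refine hcore a e c hA hE hC (by omega) ?_ hmem
      unfold spn
      rcases max_choice e c with h6 | h6 <;> rcases min_choice a c with h7 | h7 <;> omega
    · -- c, e slots : impossible
      have := slot_gap hl hC hE hce
      omega
    · -- a slot
      rw [hxx_nonslot c hC, hxx_nonslot e hE] at hmem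
      have hset : ({xx a, f c, f e} : Finset ℕ) = {f c, f e, xx a} := by
        ext z; simp only [Finset.mem_insert, Finset.mem_singleton]; tauto
      rw [hset] at hmem
      refine hcore c e a hC hE hA hce ?_ hmem
      unfold spn
      rcases max_choice e a with h6 | h6 <;> rcases min_choice c a with h7 | h7 <;> omega
    · have := slot_gap hl hA hE (by omega)
      omega
    · have := slot_gap hl hA hC hac
      omega
    · have := slot_gap hl hA hC hac
      omega
  refine ⟨xx, ⟨?_, ?_, ?_⟩, ?_⟩
  · -- MapsTo
    intro n hn
    rw [Set.mem_Icc] at hn ⊢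
    have := hmaps n (Finset.mem_Icc.mpr hn)
    rwa [Finset.mem_Icc] at this
  · -- InjOn
    intro n hn n' hn' heq
    rw [Set.mem_Icc] at hn hn'
    exact hinj n (Finset.mem_Icc.mpr hn) n' (Finset.mem_Icc.mpr hn') heq
  · -- SurjOn
    intro u hu
    rw [Set.mem_Icc] at hu
    obtain ⟨n, hn, hxn⟩ := hsurj u (Finset.mem_Icc.mpr hu)
    rw [Finset.mem_Icc] at hn
    exact ⟨n, Set.mem_Icc.mpr hn, hxn⟩
  · -- goodness
    intro i hi bk hbk hsub
    -- positions of bk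
    set Q : Finset ℕ := ((Finset.Icc i (i + ℓ - 1)) ∩ Finset.Icc 1 v).filter
      (fun n => xx n ∈ bk) with hQ
    have hQIcc : Q ⊆ Finset.Icc 1 v := by
      intro n hn
      rw [hQ, Finset.mem_filter, Finset.mem_inter] at hn
      exact hn.1.2
    have hbQ : bk ⊆ Q.image xx := by
      intro u hu
      obtain ⟨n, hnmem, hxn⟩ := hsub hu
      obtain ⟨⟨hn1, hn2⟩, hn3, hn4⟩ := hnmem
      apply Finset.mem_image.mpr
      refine ⟨n, ?_, hxn⟩
      rw [hQ, Finset.mem_filter, Finset.mem_inter, Finset.mem_Icc, Finset.mem_Icc]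
      exact ⟨⟨⟨hn1, hn2⟩, hn3, hn4⟩, hxn ▸ hu⟩
    have hQb : Q.image xx ⊆ bk := by
      intro u hu
      obtain ⟨n, hn, rfl⟩ := Finset.mem_image.mp hu
      rw [hQ, Finset.mem_filter] at hn
      exact hn.2
    have himgQ : Q.image xx = bk := Finset.Subset.antisymm hQb hbQ
    have hQcard : Q.card = 3 := by
      have h1 : (Q.image xx).card = Q.card :=
        Finset.card_image_of_injOn (fun n hn n' hn' heq => hinj n (hQIcc hn) n' (hQIcc hn') heq)
      rw [himgQ] at h1
      rw [← h1, (hSTS.1 bk hbk).2]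
    obtain ⟨a, c, e, hac, hae, hce, hQabc⟩ := Finset.card_eq_three.mp hQcard
    have hmemQ : ∀ n ∈ Q, i ≤ n ∧ n ≤ i + ℓ - 1 ∧ 1 ≤ n ∧ n ≤ v := by
      intro n hn
      rw [hQ, Finset.mem_filter, Finset.mem_inter, Finset.mem_Icc, Finset.mem_Icc] at hn
      exact ⟨hn.1.1.1, hn.1.1.2, hn.1.2⟩
    have haQ : a ∈ Q := by rw [hQabc]; simp
    have hcQ : c ∈ Q := by rw [hQabc]; simp
    have heQ : e ∈ Q := by rw [hQabc]; simp
    have hbk_eq : ({xx a, xx c, xx e} : Finset ℕ) = bk := by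
      rw [← himgQ, hQabc]
      rw [Finset.image_insert, Finset.image_insert, Finset.image_singleton]
    have hmem : ({xx a, xx c, xx e} : Finset ℕ) ∈ B := hbk_eq ▸ hbk
    obtain ⟨ha1, ha2, ha3, ha4⟩ := hmemQ a haQ
    obtain ⟨hc1, hc2, hc3, hc4⟩ := hmemQ c hcQ
    obtain ⟨he1, he2, he3, he4⟩ := hmemQ e heQ
    have haI : a ∈ Finset.Icc 1 v := Finset.mem_Icc.mpr ⟨ha3, ha4⟩
    have hcI : c ∈ Finset.Icc 1 v := Finset.mem_Icc.mpr ⟨hc3, hc4⟩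
    have heI : e ∈ Finset.Icc 1 v := Finset.mem_Icc.mpr ⟨he3, he4⟩
    -- sort the three positions and conclude
    have happ : ∀ a' c' e', a' < c' → c' < e' →
        a' ∈ Finset.Icc 1 v → c' ∈ Finset.Icc 1 v → e' ∈ Finset.Icc 1 v →
        (i ≤ a' ∧ a' ≤ i + ℓ - 1) → (i ≤ c' ∧ c' ≤ i + ℓ - 1) → (i ≤ e' ∧ e' ≤ i + ℓ - 1) →
        ({xx a', xx c', xx e'} : Finset ℕ) ∈ B → False := by
      intro a' c' e' h1 h2 h3 h4 h5 h6 h7 h8 h9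
      exact key2 a' c' e' h3 h4 h5 ⟨i, h6.1, h7.1, h8.1, h6.2, h7.2, h8.2⟩ h1 h2 h9
    rcases lt_trichotomy a c with h1 | h1 | h1
    · rcases lt_trichotomy c e with h2 | h2 | h2
      · exact happ a c e h1 h2 haI hcI heI ⟨ha1, ha2⟩ ⟨hc1, hc2⟩ ⟨he1, he2⟩ hmem
      · exact hce h2
      · rcases lt_trichotomy a e with h3 | h3 | h3
        · -- a < e < c
          have hset : ({xx a, xx c, xx e} : Finset ℕ) = {xx a, xx e, xx c} := by
            ext z; simp only [Finset.mem_insert, Finset.mem_singleton]; tauto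
          exact happ a e c h3 h2 haI heI hcI ⟨ha1, ha2⟩ ⟨he1, he2⟩ ⟨hc1, hc2⟩ (hset ▸ hmem)
        · exact hae h3
        · -- e < a < c
          have hset : ({xx a, xx c, xx e} : Finset ℕ) = {xx e, xx a, xx c} := by
            ext z; simp only [Finset.mem_insert, Finset.mem_singleton]; tauto
          exact happ e a c h3 h1 heI haI hcI ⟨he1, he2⟩ ⟨ha1, ha2⟩ ⟨hc1, hc2⟩ (hset ▸ hmem)
    · exact hac h1
    · rcases lt_trichotomy a e with h2 | h2 | h2
      · -- c < a < e
        have hset : ({xx a, xx c, xx e} : Finset ℕ) = {xx c, xx a, xx e} := by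
          ext z; simp only [Finset.mem_insert, Finset.mem_singleton]; tauto
        exact happ c a e h1 h2 hcI haI heI ⟨hc1, hc2⟩ ⟨ha1, ha2⟩ ⟨he1, he2⟩ (hset ▸ hmem)
      · exact hae h2
      · rcases lt_trichotomy c e with h3 | h3 | h3
        · -- c < e < a
          have hset : ({xx a, xx c, xx e} : Finset ℕ) = {xx c, xx e, xx a} := by
            ext z; simp only [Finset.mem_insert, Finset.mem_singleton]; tauto
          exact happ c e a h3 h2 hcI heI haI ⟨hc1, hc2⟩ ⟨he1, he2⟩ ⟨ha1, ha2⟩ (hset ▸ hmem)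
        · exact hce h3
        · -- e < c < a
          have hset : ({xx a, xx c, xx e} : Finset ℕ) = {xx e, xx c, xx a} := by
            ext z; simp only [Finset.mem_insert, Finset.mem_singleton]; tauto
          exact happ e c a h3 h1 heI hcI haI ⟨he1, he2⟩ ⟨hc1, hc2⟩ ⟨ha1, ha2⟩ (hset ▸ hmem)


end

end STSGood

/-- For every integer `ℓ ≥ 3`, every Steiner triple system of order `v` with `v ≥ ℓ^6/16`
has an `ℓ`-good sequencing. -/
theorem sts_good_sequencing_of_ge_pow_six_div_sixteen
    (ℓ v : ℕ) (hℓ : 3 ≤ ℓ) (B : Finset (Finset ℕ)) (hSTS : IsSTS v B)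
    (hv : (ℓ : ℚ) ^ 6 / 16 ≤ (v : ℚ)) :
    ∃ x : ℕ → ℕ, IsGoodSeq v ℓ B x := by
  have h16 : ℓ ^ 6 ≤ 16 * v := by
    have h2 : (ℓ : ℚ) ^ 6 ≤ (v : ℚ) * 16 := (div_le_iff₀ (by norm_num : (0:ℚ) < 16)).mp hv
    have h3 : (ℓ : ℚ) ^ 6 ≤ ((16 * v : ℕ) : ℚ) := by push_cast; linarith
    exact_mod_cast h3
  exact STSGood.main0 hℓ hSTS (STSGood.geom ℓ v hℓ h16)
end

section
/- For every integer ℓ ≥ 3, there exists an integer n(ℓ) such that every Steiner triple system of order v with v > n(ℓ) has an ℓ-good sequencing. -/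
open Finset
open scoped Classical

noncomputable section GS

def clos (ℓ q q' : ℕ) : Prop := q' ≤ q + (ℓ - 1) ∧ q ≤ q' + (ℓ - 1)

instance (ℓ q q' : ℕ) : Decidable (clos ℓ q q') := by unfold clos; infer_instance

def isBlk (B : Finset (Finset ℕ)) (y z u : ℕ) : Prop := ∃ b ∈ B, y ∈ b ∧ z ∈ b ∧ u ∈ b

def ctr (ℓ : ℕ) (B : Finset (Finset ℕ)) (S : Finset ℕ) (f : ℕ → ℕ) (z : ℕ) : ℕ :=
  ((S ×ˢ S).filter (fun e => e.1 < e.2 ∧ clos ℓ e.1 e.2 ∧ isBlk B (f e.1) (f e.2) z)).card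

def blkPts (B : Finset (Finset ℕ)) (y z : ℕ) : Finset ℕ :=
  (B.filter (fun b => y ∈ b ∧ z ∈ b)).biUnion id

lemma blkPts_card {v : ℕ} {B : Finset (Finset ℕ)} (hSTS : IsSTS v B)
    {y z : ℕ} (hy : y ∈ Icc 1 v) (hz : z ∈ Icc 1 v) (hyz : y ≠ z) :
    (blkPts B y z).card ≤ 3 := by
  obtain ⟨b0, hb0, hb0u⟩ := hSTS.2 y hy z hz hyz
  have hsub : blkPts B y z ⊆ b0 := by
    intro u hu
    simp only [blkPts, Finset.mem_biUnion, Finset.mem_filter, id] at hu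
    obtain ⟨b, ⟨hbB, hyb, hzb⟩, hub⟩ := hu
    have : b = b0 := hb0u b ⟨hbB, hyb, hzb⟩
    rwa [this] at hub
  calc (blkPts B y z).card ≤ b0.card := Finset.card_le_card hsub
    _ = 3 := (hSTS.1 b0 hb0.1).2

lemma mem_blkPts {B : Finset (Finset ℕ)} {y z u : ℕ} {b : Finset ℕ}
    (hb : b ∈ B) (hy : y ∈ b) (hz : z ∈ b) (hu : u ∈ b) : u ∈ blkPts B y z := by
  simp only [blkPts, Finset.mem_biUnion, Finset.mem_filter, id]
  exact ⟨b, ⟨hb, hy, hz⟩, hu⟩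

lemma E_card {ℓ v : ℕ} {S : Finset ℕ} (hS : S ⊆ Icc 1 v) (hℓ : 1 ≤ ℓ) :
    ((S ×ˢ S).filter (fun e => e.1 < e.2 ∧ clos ℓ e.1 e.2)).card ≤ v * ℓ := by
  have h : ((S ×ˢ S).filter (fun e => e.1 < e.2 ∧ clos ℓ e.1 e.2)).card
      ≤ ((Icc 1 v) ×ˢ (Icc 1 ℓ)).card := by
    apply Finset.card_le_card_of_injOn (fun e => (e.1, e.2 - e.1))
    · rintro ⟨a, b⟩ he
      simp only [Finset.mem_coe, Finset.mem_filter, Finset.mem_product] at he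
      obtain ⟨⟨ha, hb⟩, hab, hc1, hc2⟩ := he
      have ha' := hS ha
      have hb' := hS hb
      simp only [Finset.mem_coe, Finset.mem_Icc, Finset.mem_product] at *
      omega
    · rintro ⟨a1, b1⟩ h1 ⟨a2, b2⟩ h2 heq
      simp only [Finset.coe_filter, Set.mem_setOf_eq, Finset.mem_product] at h1 h2
      simp only [Prod.mk.injEq] at heq
      have : a1 = a2 := heq.1
      refine Prod.ext this ?_
      omega
  calc _ ≤ _ := h
    _ = v * ℓ := by simp [Nat.card_Icc]

lemma sum_ctr {ℓ v : ℕ} {B : Finset (Finset ℕ)} {S : Finset ℕ} {f : ℕ → ℕ}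
    (hSTS : IsSTS v B) (hℓ : 1 ≤ ℓ) (hS : S ⊆ Icc 1 v)
    (hP : ∀ q ∈ S, f q ∈ Icc 1 v)
    (hinj : ∀ q1 ∈ S, ∀ q2 ∈ S, f q1 = f q2 → q1 = q2) :
    ∑ z ∈ Icc 1 v, ctr ℓ B S f z ≤ 3 * (v * ℓ) := by
  classical
  have hswap : ∑ z ∈ Icc 1 v, ctr ℓ B S f z
      = ∑ e ∈ S ×ˢ S, ((Icc 1 v).filter
          (fun z => e.1 < e.2 ∧ clos ℓ e.1 e.2 ∧ isBlk B (f e.1) (f e.2) z)).card := by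
    simp_rw [ctr, Finset.card_filter]
    rw [Finset.sum_comm]
  rw [hswap]
  set E := (S ×ˢ S).filter (fun e => e.1 < e.2 ∧ clos ℓ e.1 e.2) with hE
  have hzero : ∀ e ∈ S ×ˢ S, e ∉ E →
      ((Icc 1 v).filter
        (fun z => e.1 < e.2 ∧ clos ℓ e.1 e.2 ∧ isBlk B (f e.1) (f e.2) z)).card = 0 := by
    intro e he heE
    rw [Finset.card_eq_zero, Finset.filter_eq_empty_iff]
    intro z _hz hcontra
    exact heE (by rw [hE]; exact Finset.mem_filter.2 ⟨he, hcontra.1, hcontra.2.1⟩)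
  rw [← Finset.sum_subset (Finset.filter_subset _ _) hzero]
  have hbound : ∀ e ∈ E, ((Icc 1 v).filter
      (fun z => e.1 < e.2 ∧ clos ℓ e.1 e.2 ∧ isBlk B (f e.1) (f e.2) z)).card ≤ 3 := by
    intro e heE
    rw [hE, Finset.mem_filter, Finset.mem_product] at heE
    obtain ⟨⟨h1, h2⟩, hlt, hcl⟩ := heE
    have hne : f e.1 ≠ f e.2 := by
      intro hcontra
      exact absurd (hinj _ h1 _ h2 hcontra) (Nat.ne_of_lt hlt)
    have hsub : (Icc 1 v).filter
        (fun z => e.1 < e.2 ∧ clos ℓ e.1 e.2 ∧ isBlk B (f e.1) (f e.2) z)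
        ⊆ blkPts B (f e.1) (f e.2) := by
      intro z hz
      rw [Finset.mem_filter] at hz
      obtain ⟨b, hb, hy, hz2, hu⟩ := hz.2.2.2
      exact mem_blkPts hb hy hz2 hu
    calc _ ≤ (blkPts B (f e.1) (f e.2)).card := Finset.card_le_card hsub
      _ ≤ 3 := blkPts_card hSTS (hP _ h1) (hP _ h2) hne
  calc ∑ e ∈ E, _ ≤ ∑ _e ∈ E, 3 := Finset.sum_le_sum hbound
    _ = 3 * E.card := by rw [Finset.sum_const]; ring
    _ ≤ 3 * (v * ℓ) := Nat.mul_le_mul_left 3 (by rw [hE]; exact E_card hS hℓ)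

lemma maxed_card {ℓ v : ℕ} {B : Finset (Finset ℕ)} {S : Finset ℕ} {f : ℕ → ℕ}
    (hSTS : IsSTS v B) (hℓ : 1 ≤ ℓ) (hS : S ⊆ Icc 1 v)
    (hP : ∀ q ∈ S, f q ∈ Icc 1 v)
    (hinj : ∀ q1 ∈ S, ∀ q2 ∈ S, f q1 = f q2 → q1 = q2) :
    ((Icc 1 v).filter (fun z => 144*ℓ^3 < ctr ℓ B S f z)).card * (144*ℓ^3 + 1)
      ≤ 3 * (v * ℓ) := by
  classical
  set M := (Icc 1 v).filter (fun z => 144*ℓ^3 < ctr ℓ B S f z) with hM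
  have h1 : M.card * (144*ℓ^3 + 1) ≤ ∑ z ∈ M, ctr ℓ B S f z := by
    rw [← smul_eq_mul, ← Finset.sum_const]
    apply Finset.sum_le_sum
    intro z hz
    rw [hM, Finset.mem_filter] at hz
    omega
  have h2 : ∑ z ∈ M, ctr ℓ B S f z ≤ ∑ z ∈ Icc 1 v, ctr ℓ B S f z :=
    Finset.sum_le_sum_of_subset (by rw [hM]; exact Finset.filter_subset _ _)
  have h3 := sum_ctr hSTS hℓ hS hP hinj
  omega


section GS3
open Finset

lemma clos_symm {ℓ a b : ℕ} (h : clos ℓ a b) : clos ℓ b a := ⟨h.2, h.1⟩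

lemma card_pair_le (a b : ℕ) : ({a, b} : Finset ℕ).card ≤ 2 := by
  apply le_trans (Finset.card_insert_le _ _); simp

lemma cover3 {b : Finset ℕ} (hcard : b.card = 3) {y1 y2 y3 : ℕ}
    (h : (↑b : Set ℕ) ⊆ {y1, y2, y3}) :
    y1 ∈ b ∧ y2 ∈ b ∧ y3 ∈ b ∧ y1 ≠ y2 ∧ y1 ≠ y3 ∧ y2 ≠ y3 := by
  classical
  have hsub : b ⊆ ({y1, y2, y3} : Finset ℕ) := by
    intro u hu
    have := h (by exact_mod_cast hu)
    simp only [Set.mem_insert_iff, Set.mem_singleton_iff] at this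
    simp only [Finset.mem_insert, Finset.mem_singleton]
    exact this
  have hcard3 : ({y1, y2, y3} : Finset ℕ).card ≤ 3 := by
    apply le_trans (Finset.card_insert_le _ _)
    have := card_pair_le y2 y3
    omega
  have heq : b = ({y1, y2, y3} : Finset ℕ) :=
    Finset.eq_of_subset_of_card_le hsub (by omega)
  have hy1 : y1 ∈ b := by rw [heq]; simp
  have hy2 : y2 ∈ b := by rw [heq]; simp
  have hy3 : y3 ∈ b := by rw [heq]; simp
  refine ⟨hy1, hy2, hy3, ?_, ?_, ?_⟩
  · rintro rfl
    rw [heq, Finset.insert_idem] at hcard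
    have := card_pair_le y1 y3
    omega
  · rintro rfl
    rw [heq] at hcard
    have hss : ({y1, y2, y1} : Finset ℕ) ⊆ {y1, y2} := by
      intro u hu; simp at hu ⊢; tauto
    have := Finset.card_le_card hss
    have := card_pair_le y1 y2
    omega
  · rintro rfl
    rw [heq] at hcard
    have hss : ({y1, y2, y2} : Finset ℕ) ⊆ {y1, y2} := by
      intro u hu; simp at hu ⊢; tauto
    have := Finset.card_le_card hss
    have := card_pair_le y1 y2
    omega
end GS3

section GS1b
open Finset

def FF (ℓ v : ℕ) : Finset ℕ := (Icc 1 v).filter (fun p => 2*ℓ ∣ p)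
def NN (ℓ v : ℕ) : Finset ℕ := (Icc 1 v).filter (fun p => ¬ 2*ℓ ∣ p)

def Inva (ℓ v : ℕ) (B : Finset (Finset ℕ)) (S : Finset ℕ) (f : ℕ → ℕ) : Prop :=
  (∀ q ∈ S, f q ∈ Icc 1 v) ∧
  (∀ q1 ∈ S, ∀ q2 ∈ S, f q1 = f q2 → q1 = q2) ∧
  (∀ b ∈ B, ∀ q1 ∈ S, ∀ q2 ∈ S, ∀ q3 ∈ S, clos ℓ q1 q2 → clos ℓ q1 q3 → clos ℓ q2 q3 →
      ¬((b : Set ℕ) ⊆ {f q1, f q2, f q3})) ∧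
  (∀ z ∈ Icc 1 v, z ∉ S.image f → ctr ℓ B S f z ≤ 144*ℓ^3 + 3*ℓ)

lemma card_FF (ℓ v : ℕ) : (FF ℓ v).card = v / (2*ℓ) := by
  have h : Icc 1 v = Ioc 0 v := by
    ext a; simp; omega
  unfold FF
  rw [h]
  exact Nat.Ioc_filter_dvd_card_eq_div v (2*ℓ)

lemma card_NN (ℓ v : ℕ) : (NN ℓ v).card = v - v / (2*ℓ) := by
  have h := Finset.card_filter_add_card_filter_not (s := Icc 1 v)
    (p := fun p => 2*ℓ ∣ p)
  have hIcc : (Icc 1 v).card = v := by simp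
  have := card_FF ℓ v
  unfold FF at this
  unfold NN
  omega
end GS1b

section GS4
open Finset

lemma arith1 {ℓ v b1 mx b2 : ℕ} (hℓ : 3 ≤ ℓ) (hv : 1000*ℓ^4 < v)
    (hb1 : b1 ≤ 27*ℓ^2) (hmx : mx * (144*ℓ^3 + 1) ≤ 3*(v*ℓ))
    (hb2 : b2 ≤ 9*ℓ*mx) : b1 + b2 ≤ v / (2*ℓ) := by
  have hdm := Nat.div_add_mod v (2*ℓ)
  have hmod : v % (2*ℓ) < 2*ℓ := Nat.mod_lt _ (by positivity)
  set r := v / (2*ℓ) with hr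
  -- multiply target by 16 ℓ^2
  have key : (b1 + b2) * (16*ℓ^2) ≤ r * (16*ℓ^2) := by
    have h1 : b1 * (16*ℓ^2) ≤ 432*ℓ^4 := by nlinarith
    have h2 : b2 * (16*ℓ^2) ≤ 144*ℓ^3*mx := by nlinarith
    have h3 : 144*ℓ^3*mx ≤ 3*(v*ℓ) := by nlinarith
    have h4 : 8*ℓ*v ≤ r * (16*ℓ^2) + 16*ℓ^2 := by nlinarith
    have h5a : 5*ℓ*(1000*ℓ^4) ≤ 5*ℓ*v := Nat.mul_le_mul_left _ hv.le
    have e1 : 3*ℓ^4 ≤ ℓ^5 := by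
      calc 3*ℓ^4 ≤ ℓ*ℓ^4 := Nat.mul_le_mul_right _ hℓ
        _ = ℓ^5 := by ring
    have e2 : ℓ^2 ≤ ℓ^4 := by
      calc ℓ^2 = ℓ^2*1 := by ring
        _ ≤ ℓ^2*ℓ^2 := Nat.mul_le_mul_left _ (by nlinarith)
        _ = ℓ^4 := by ring
    have h5 : 432*ℓ^4 + 3*(v*ℓ) + 16*ℓ^2 ≤ 8*ℓ*v := by nlinarith [h5a, e1, e2]
    nlinarith
  have hpos : 0 < 16*ℓ^2 := by positivity
  exact Nat.le_of_mul_le_mul_right key hpos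

lemma Sp_card {ℓ v p : ℕ} {S : Finset ℕ} (hS : S ⊆ Icc 1 v) (hp : 1 ≤ p) :
    (S.filter (fun q => clos ℓ q p)).card ≤ 2*ℓ + 1 := by
  have hsub : S.filter (fun q => clos ℓ q p) ⊆ Icc (p - ℓ) (p + ℓ) := by
    intro q hq
    rw [Finset.mem_filter] at hq
    obtain ⟨hqS, hc1, hc2⟩ := hq
    rw [Finset.mem_Icc]
    omega
  calc _ ≤ (Icc (p - ℓ) (p + ℓ)).card := Finset.card_le_card hsub
    _ ≤ 2*ℓ + 1 := by rw [Nat.card_Icc]; omega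
end GS4

section GS5
open Finset

lemma extend {ℓ v : ℕ} {B : Finset (Finset ℕ)} (hℓ : 3 ≤ ℓ) (hv : 1000*ℓ^4 < v)
    (hSTS : IsSTS v B) {S : Finset ℕ} {f : ℕ → ℕ}
    (hSN : S ⊆ NN ℓ v) (hlt : S.card < (NN ℓ v).card) (hI : Inva ℓ v B S f) :
    ∃ S' f', S' ⊆ NN ℓ v ∧ S'.card = S.card + 1 ∧ Inva ℓ v B S' f' := by
  classical
  obtain ⟨hP, hinj, hblk, hctr⟩ := hI
  have hSIcc : S ⊆ Icc 1 v := hSN.trans (Finset.filter_subset _ _)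
  have hne : (NN ℓ v \ S).Nonempty := by
    rw [← Finset.card_pos, Finset.card_sdiff_of_subset hSN]; omega
  obtain ⟨p, hp⟩ := hne
  rw [Finset.mem_sdiff] at hp
  obtain ⟨hpN, hpS⟩ := hp
  have hpIcc : p ∈ Icc 1 v := (Finset.filter_subset _ _) hpN
  have hp1 : 1 ≤ p := (Finset.mem_Icc.1 hpIcc).1
  set Sp := S.filter (fun q => clos ℓ q p) with hSp
  have hSpS : Sp ⊆ S := Finset.filter_subset _ _
  have hSpcard : Sp.card ≤ 2*ℓ+1 := Sp_card hSIcc hp1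
  set Bad1 := ((Sp ×ˢ Sp).filter (fun e => e.1 ≠ e.2)).biUnion
      (fun e => blkPts B (f e.1) (f e.2)) with hBad1
  have hBad1card : Bad1.card ≤ 27*ℓ^2 := by
    have h1 : Bad1.card ≤ ((Sp ×ˢ Sp).filter (fun e => e.1 ≠ e.2)).card * 3 := by
      apply Finset.card_biUnion_le_card_mul
      intro e he
      rw [Finset.mem_filter, Finset.mem_product] at he
      exact blkPts_card hSTS (hP _ (hSpS he.1.1)) (hP _ (hSpS he.1.2))
        (fun hc => he.2 (hinj _ (hSpS he.1.1) _ (hSpS he.1.2) hc))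
    have h2 : ((Sp ×ˢ Sp).filter (fun e => e.1 ≠ e.2)).card ≤ Sp.card * Sp.card := by
      calc _ ≤ (Sp ×ˢ Sp).card := Finset.card_filter_le _ _
        _ = Sp.card * Sp.card := Finset.card_product _ _
    have h3 : Sp.card * Sp.card ≤ (2*ℓ+1) * (2*ℓ+1) := Nat.mul_le_mul hSpcard hSpcard
    nlinarith
  set Mx := (Icc 1 v).filter (fun z => z ∉ S.image f ∧ 144*ℓ^3 < ctr ℓ B S f z) with hMx
  have hMxcard : Mx.card * (144*ℓ^3+1) ≤ 3*(v*ℓ) := by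
    have hsub : Mx ⊆ (Icc 1 v).filter (fun z => 144*ℓ^3 < ctr ℓ B S f z) := by
      intro z hz; rw [hMx, Finset.mem_filter] at hz
      exact Finset.mem_filter.2 ⟨hz.1, hz.2.2⟩
    exact le_trans (Nat.mul_le_mul_right _ (Finset.card_le_card hsub))
      (maxed_card hSTS (by omega) hSIcc hP hinj)
  set Bad2 := (Sp ×ˢ Mx).biUnion (fun e => blkPts B (f e.1) e.2) with hBad2
  have hBad2card : Bad2.card ≤ 9*ℓ*Mx.card := by
    have h1 : Bad2.card ≤ (Sp ×ˢ Mx).card * 3 := by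
      apply Finset.card_biUnion_le_card_mul
      intro e he
      rw [Finset.mem_product] at he
      have hz := he.2
      rw [hMx, Finset.mem_filter] at hz
      refine blkPts_card hSTS (hP _ (hSpS he.1)) hz.1 ?_
      intro hc
      exact hz.2.1 (hc ▸ Finset.mem_image_of_mem f (hSpS he.1))
    have h2 : (Sp ×ˢ Mx).card = Sp.card * Mx.card := Finset.card_product _ _
    have h3 : Sp.card * Mx.card ≤ (2*ℓ+1) * Mx.card := Nat.mul_le_mul_right _ hSpcard
    nlinarith
  -- choose the new point x
  have hpool : ∃ x, x ∈ Icc 1 v ∧ x ∉ S.image f ∧ x ∉ Bad1 ∧ x ∉ Bad2 := by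
    set U := S.image f ∪ Bad1 ∪ Bad2 with hU
    have hUcard : U.card ≤ S.card + Bad1.card + Bad2.card := by
      have h1 := Finset.card_union_le (S.image f ∪ Bad1) Bad2
      have h2 := Finset.card_union_le (S.image f) Bad1
      have h3 := Finset.card_image_le (s := S) (f := f)
      rw [hU]; omega
    have hNNcard : (NN ℓ v).card = v - v/(2*ℓ) := card_NN ℓ v
    have harith := arith1 hℓ hv hBad1card hMxcard hBad2card
    have hrle : v/(2*ℓ) ≤ v := Nat.div_le_self _ _
    have hIcc : (Icc 1 v).card = v := by rw [Nat.card_Icc]; omega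
    have hcard : U.card < (Icc 1 v).card := by omega
    have hne2 : ((Icc 1 v) \ U).Nonempty := by
      rw [← Finset.card_pos]
      have := Finset.le_card_sdiff U (Icc 1 v)
      omega
    obtain ⟨x, hx⟩ := hne2
    rw [Finset.mem_sdiff, hU] at hx
    refine ⟨x, hx.1, ?_, ?_, ?_⟩ <;>
    · intro hc
      apply hx.2
      simp only [Finset.mem_union]
      tauto
  obtain ⟨x, hxIcc, hxim, hxB1, hxB2⟩ := hpool
  set f' := Function.update f p x with hf'
  have hfS : ∀ q ∈ S, f' q = f q := by
    intro q hq
    exact Function.update_of_ne (fun h => hpS (by rw [← h]; exact hq)) _ _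
  have hfp : f' p = x := Function.update_self _ _ _
  refine ⟨insert p S, f', Finset.insert_subset hpN hSN,
    Finset.card_insert_of_notMem hpS, ?_, ?_, ?_, ?_⟩
  · -- (i) maps into Icc
    intro q hq
    rcases Finset.mem_insert.1 hq with rfl | hq'
    · rw [hfp]; exact hxIcc
    · rw [hfS q hq']; exact hP q hq'
  · -- (ii) injective
    intro q1 h1 q2 h2 heq
    rcases Finset.mem_insert.1 h1 with rfl | h1' <;> rcases Finset.mem_insert.1 h2 with rfl | h2'
    · rfl
    · exfalso; rw [hfp, hfS _ h2'] at heq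
      exact hxim (heq ▸ Finset.mem_image_of_mem f h2')
    · exfalso; rw [hfp, hfS _ h1'] at heq
      exact hxim (heq ▸ Finset.mem_image_of_mem f h1')
    · rw [hfS _ h1', hfS _ h2'] at heq; exact hinj _ h1' _ h2' heq
  · -- (iii) no close block
    intro b hb q1 h1 q2 h2 q3 h3 c12 c13 c23 hsub
    have hbcard := (hSTS.1 b hb).2
    obtain ⟨m1, m2, m3, d12, d13, d23⟩ := cover3 hbcard hsub
    have hq12 : q1 ≠ q2 := fun h => d12 (by rw [h])
    have hq13 : q1 ≠ q3 := fun h => d13 (by rw [h])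
    have hq23 : q2 ≠ q3 := fun h => d23 (by rw [h])
    -- helper to derive contradiction when exactly one index is p
    have key : ∀ qa qb : ℕ, qa ∈ S → qb ∈ S → qa ≠ qb → clos ℓ qa p → clos ℓ qb p →
        f qa ∈ b → f qb ∈ b → x ∈ b → False := by
      intro qa qb ha hb' hne' ca cb hma hmb hmx
      apply hxB1
      rw [hBad1]
      apply Finset.mem_biUnion.2
      refine ⟨(qa, qb), ?_, mem_blkPts hb hma hmb hmx⟩
      rw [Finset.mem_filter, Finset.mem_product]
      exact ⟨⟨Finset.mem_filter.2 ⟨ha, ca⟩, Finset.mem_filter.2 ⟨hb', cb⟩⟩, hne'⟩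
    rcases Finset.mem_insert.1 h1 with rfl | h1' <;>
      rcases Finset.mem_insert.1 h2 with rfl | h2' <;>
      rcases Finset.mem_insert.1 h3 with rfl | h3'
    · exact hq12 rfl
    · exact hq12 rfl
    · exact hq13 rfl
    · -- q1 = p, q2 q3 ∈ S
      rw [hfp] at m1
      rw [hfS _ h2'] at m2
      rw [hfS _ h3'] at m3
      exact key q2 q3 h2' h3' hq23 (clos_symm c12) (clos_symm c13) m2 m3 m1
    · exact hq23 rfl
    · -- q2 = p
      rw [hfp] at m2
      rw [hfS _ h1'] at m1
      rw [hfS _ h3'] at m3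
      exact key q1 q3 h1' h3' hq13 c12 (clos_symm c23) m1 m3 m2
    · -- q3 = p
      rw [hfp] at m3
      rw [hfS _ h1'] at m1
      rw [hfS _ h2'] at m2
      exact key q1 q2 h1' h2' hq12 c13 c23 m1 m2 m3
    · -- none is p
      rw [hfS _ h1'] at m1
      rw [hfS _ h2'] at m2
      rw [hfS _ h3'] at m3
      have hsub' : (↑b : Set ℕ) ⊆ {f q1, f q2, f q3} := by
        intro u hu
        have := hsub hu
        simp only [Set.mem_insert_iff, Set.mem_singleton_iff] at this ⊢
        rw [hfS _ h1', hfS _ h2', hfS _ h3'] at this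
        exact this
      exact hblk b hb q1 h1' q2 h2' q3 h3' c12 c13 c23 hsub'
  · -- (iv) counters stay bounded
    intro z hz hzim
    have hz1 : z ∉ S.image f := by
      intro hc
      apply hzim
      obtain ⟨q, hq, rfl⟩ := Finset.mem_image.1 hc
      rw [← hfS q hq]
      exact Finset.mem_image_of_mem f' (Finset.mem_insert_of_mem hq)
    have hz2 : z ≠ x := by
      intro hc
      apply hzim
      rw [hc, ← hfp]
      exact Finset.mem_image_of_mem f' (Finset.mem_insert_self p S)
    set V := ((insert p S) ×ˢ (insert p S)).filter
        (fun e => (e.1 = p ∨ e.2 = p) ∧ e.1 < e.2 ∧ clos ℓ e.1 e.2 ∧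
          isBlk B (f' e.1) (f' e.2) z) with hV
    have hsplit : ((insert p S) ×ˢ (insert p S)).filter
        (fun e => e.1 < e.2 ∧ clos ℓ e.1 e.2 ∧ isBlk B (f' e.1) (f' e.2) z)
        ⊆ ((S ×ˢ S).filter
            (fun e => e.1 < e.2 ∧ clos ℓ e.1 e.2 ∧ isBlk B (f e.1) (f e.2) z)) ∪ V := by
      intro e he
      rw [Finset.mem_filter, Finset.mem_product] at he
      obtain ⟨⟨he1, he2⟩, hlt', hcl', hbk'⟩ := he
      by_cases hcase : e.1 = p ∨ e.2 = p
      · apply Finset.mem_union_right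
        rw [hV, Finset.mem_filter, Finset.mem_product]
        exact ⟨⟨he1, he2⟩, hcase, hlt', hcl', hbk'⟩
      · push_neg at hcase
        apply Finset.mem_union_left
        have he1' : e.1 ∈ S := (Finset.mem_insert.1 he1).resolve_left hcase.1
        have he2' : e.2 ∈ S := (Finset.mem_insert.1 he2).resolve_left hcase.2
        rw [Finset.mem_filter, Finset.mem_product]
        rw [hfS _ he1', hfS _ he2'] at hbk'
        exact ⟨⟨he1', he2'⟩, hlt', hcl', hbk'⟩
    have hctrle : ctr ℓ B (insert p S) f' z ≤ ctr ℓ B S f z + V.card := by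
      unfold ctr
      calc _ ≤ (((S ×ˢ S).filter
            (fun e => e.1 < e.2 ∧ clos ℓ e.1 e.2 ∧ isBlk B (f e.1) (f e.2) z)) ∪ V).card :=
          Finset.card_le_card hsplit
        _ ≤ _ := Finset.card_union_le _ _
    have hVcard : V.card ≤ Sp.card := by
      apply Finset.card_le_card_of_injOn (fun e => if e.1 = p then e.2 else e.1)
      · intro e he
        rw [Finset.mem_coe]
        simp only [Finset.mem_coe, hV, Finset.mem_filter, Finset.mem_product] at he
        obtain ⟨⟨he1, he2⟩, hor, hlt', hcl', _⟩ := he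
        by_cases h : e.1 = p
        · simp only [h, if_pos]
          have hne2 : e.2 ≠ p := by omega
          have he2' : e.2 ∈ S := (Finset.mem_insert.1 he2).resolve_left hne2
          rw [hSp, Finset.mem_filter]
          refine ⟨he2', ?_⟩
          rw [← h]
          exact clos_symm hcl'
        · simp only [h, if_neg, if_false]
          have h2 : e.2 = p := hor.resolve_left h
          have he1' : e.1 ∈ S := (Finset.mem_insert.1 he1).resolve_left h
          rw [hSp, Finset.mem_filter]
          refine ⟨he1', ?_⟩
          rw [← h2]
          exact hcl'
      · intro e he e' he' heq
        have heV : e ∈ V := Finset.mem_coe.1 he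
        have heV' : e' ∈ V := Finset.mem_coe.1 he'
        rw [hV, Finset.mem_filter, Finset.mem_product] at heV heV'
        obtain ⟨_, hor, hlt1, _, _⟩ := heV
        obtain ⟨_, hor', hlt2, _, _⟩ := heV'
        have heq : (if e.1 = p then e.2 else e.1) = (if e'.1 = p then e'.2 else e'.1) := heq
        by_cases h : e.1 = p <;> by_cases h' : e'.1 = p
        · rw [if_pos h, if_pos h'] at heq
          exact Prod.ext (h.trans h'.symm) heq
        · exfalso
          rw [if_pos h, if_neg h'] at heq
          have : e'.2 = p := hor'.resolve_left h'
          omega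
        · exfalso
          rw [if_neg h, if_pos h'] at heq
          have : e.2 = p := hor.resolve_left h
          omega
        · rw [if_neg h, if_neg h'] at heq
          have h2 : e.2 = p := hor.resolve_left h
          have h2' : e'.2 = p := hor'.resolve_left h'
          exact Prod.ext heq (h2.trans h2'.symm)
    by_cases hmax : 144*ℓ^3 < ctr ℓ B S f z
    · have hzMx : z ∈ Mx := by
        rw [hMx, Finset.mem_filter]; exact ⟨hz, hz1, hmax⟩
      have hVempty : V = ∅ := by
        rw [Finset.eq_empty_iff_forall_notMem]
        intro e he
        rw [hV, Finset.mem_filter, Finset.mem_product] at he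
        obtain ⟨⟨he1, he2⟩, hor, hlt', hcl', hbk'⟩ := he
        obtain ⟨b, hb, hy1, hy2, hy3⟩ := hbk'
        apply hxB2
        rw [hBad2]
        apply Finset.mem_biUnion.2
        rcases hor with h | h
        · have hne2 : e.2 ≠ p := by omega
          have he2' : e.2 ∈ S := (Finset.mem_insert.1 he2).resolve_left hne2
          have hq : e.2 ∈ Sp := by
            rw [hSp, Finset.mem_filter]
            exact ⟨he2', by rw [← h]; exact clos_symm hcl'⟩
          refine ⟨(e.2, z), Finset.mem_product.2 ⟨hq, hzMx⟩, ?_⟩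
          rw [hfS _ he2'] at hy2
          rw [h, hfp] at hy1
          exact mem_blkPts hb hy2 hy3 hy1
        · have hne1 : e.1 ≠ p := by omega
          have he1' : e.1 ∈ S := (Finset.mem_insert.1 he1).resolve_left hne1
          have hq : e.1 ∈ Sp := by
            rw [hSp, Finset.mem_filter]
            exact ⟨he1', by rw [← h]; exact hcl'⟩
          refine ⟨(e.1, z), Finset.mem_product.2 ⟨hq, hzMx⟩, ?_⟩
          rw [hfS _ he1'] at hy1
          rw [h, hfp] at hy2
          exact mem_blkPts hb hy1 hy3 hy2
      have := hctr z hz hz1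
      rw [hVempty] at hctrle
      simp only [Finset.card_empty] at hctrle
      omega
    · have := hctr z hz hz1
      omega
end GS5

section GS6
open Finset

lemma main_phase {ℓ v : ℕ} {B : Finset (Finset ℕ)} (hℓ : 3 ≤ ℓ) (hv : 1000*ℓ^4 < v)
    (hSTS : IsSTS v B) : ∃ f, Inva ℓ v B (NN ℓ v) f := by
  classical
  suffices h : ∀ k, k ≤ (NN ℓ v).card → ∃ S f, S ⊆ NN ℓ v ∧ S.card = k ∧ Inva ℓ v B S f by
    obtain ⟨S, f, hSN, hcard, hI⟩ := h (NN ℓ v).card le_rfl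
    have hEq : S = NN ℓ v := Finset.eq_of_subset_of_card_le hSN (by omega)
    exact ⟨f, hEq ▸ hI⟩
  intro k
  induction k with
  | zero =>
    intro _
    refine ⟨∅, id, Finset.empty_subset _, Finset.card_empty, ?_, ?_, ?_, ?_⟩
    · intro q hq; exact absurd hq (Finset.notMem_empty q)
    · intro q1 hq; exact absurd hq (Finset.notMem_empty q1)
    · intro b _ q1 hq; exact absurd hq (Finset.notMem_empty q1)
    · intro z _ _
      unfold ctr
      simp
  | succ k ih =>
    intro hk
    obtain ⟨S, f, h1, h2, h3⟩ := ih (by omega)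
    obtain ⟨S', f', h4, h5, h6⟩ := extend hℓ hv hSTS h1 (by omega) h3
    exact ⟨S', f', h4, by omega, h6⟩

lemma arith2 {ℓ v : ℕ} (hℓ : 3 ≤ ℓ) (hv : 1000*ℓ^4 < v) :
    27*ℓ^2 + (144*ℓ^3 + 3*ℓ) + 1 ≤ v / (2*ℓ) := by
  rw [Nat.le_div_iff_mul_le (by omega : 0 < 2*ℓ)]
  nlinarith [hv, hℓ, sq_nonneg ℓ]
end GS6

section GS7
open Finset

theorem exists_bound_for_good_sequencing' (ℓ : ℕ) (hℓ : 3 ≤ ℓ) :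
    ∃ n : ℕ, ∀ v : ℕ, n < v → ∀ B : Finset (Finset ℕ), IsSTS v B →
      ∃ x : ℕ → ℕ, IsGoodSeq v ℓ B x := by
  classical
  refine ⟨1000*ℓ^4, fun v hv B hSTS => ?_⟩
  obtain ⟨f, hP, hinj, hblk, hctr⟩ := main_phase hℓ hv hSTS
  set r := v / (2*ℓ) with hr
  have hNNIcc : NN ℓ v ⊆ Icc 1 v := Finset.filter_subset _ _
  have hFFIcc : FF ℓ v ⊆ Icc 1 v := Finset.filter_subset _ _
  have hNNcard : (NN ℓ v).card = v - r := card_NN ℓ v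
  have hFFcard : (FF ℓ v).card = r := card_FF ℓ v
  have hrv : r ≤ v := Nat.div_le_self _ _
  have hIccv : (Icc 1 v).card = v := by rw [Nat.card_Icc]; omega
  set R := (Icc 1 v) \ ((NN ℓ v).image f) with hR
  have himgsub : (NN ℓ v).image f ⊆ Icc 1 v := by
    intro u hu
    obtain ⟨q, hq, rfl⟩ := Finset.mem_image.1 hu
    exact hP q hq
  have himgcard : ((NN ℓ v).image f).card = v - r := by
    rw [Finset.card_image_of_injOn (fun a ha b hb h => hinj a ha b hb h)]
    exact hNNcard
  have hRcard : R.card = r := by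
    rw [hR, Finset.card_sdiff_of_subset himgsub, himgcard, hIccv]
    omega
  have hRIcc : R ⊆ Icc 1 v := by rw [hR]; exact Finset.sdiff_subset
  set Excl := (fun p : ℕ => ((NN ℓ v ×ˢ NN ℓ v).filter
      (fun e => e.1 < e.2 ∧ clos ℓ e.1 p ∧ clos ℓ e.2 p ∧ clos ℓ e.1 e.2)).biUnion
      (fun e => blkPts B (f e.1) (f e.2))) with hExcl
  have hExclcard : ∀ p ∈ FF ℓ v, (Excl p).card ≤ 27*ℓ^2 := by
    intro p hpF
    have hp1 : 1 ≤ p := (Finset.mem_Icc.1 (hFFIcc hpF)).1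
    set SpF := (NN ℓ v).filter (fun q => clos ℓ q p) with hSpF
    have hcard1 : SpF.card ≤ 2*ℓ+1 := Sp_card hNNIcc hp1
    have hsub : ((NN ℓ v ×ˢ NN ℓ v).filter
        (fun e => e.1 < e.2 ∧ clos ℓ e.1 p ∧ clos ℓ e.2 p ∧ clos ℓ e.1 e.2)) ⊆ SpF ×ˢ SpF := by
      intro e he
      rw [Finset.mem_filter, Finset.mem_product] at he
      rw [Finset.mem_product, hSpF, Finset.mem_filter, Finset.mem_filter]
      exact ⟨⟨he.1.1, he.2.2.1⟩, he.1.2, he.2.2.2.1⟩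
    have hb1 : (Excl p).card ≤ ((NN ℓ v ×ˢ NN ℓ v).filter
        (fun e => e.1 < e.2 ∧ clos ℓ e.1 p ∧ clos ℓ e.2 p ∧ clos ℓ e.1 e.2)).card * 3 := by
      rw [hExcl]
      apply Finset.card_biUnion_le_card_mul
      intro e he
      rw [Finset.mem_filter, Finset.mem_product] at he
      refine blkPts_card hSTS (hP _ he.1.1) (hP _ he.1.2) ?_
      intro hc
      exact absurd (hinj _ he.1.1 _ he.1.2 hc) (Nat.ne_of_lt he.2.1)
    have hb2 := Finset.card_le_card hsub
    have hb3 : (SpF ×ˢ SpF).card = SpF.card * SpF.card := Finset.card_product _ _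
    have hb4 : SpF.card * SpF.card ≤ (2*ℓ+1)*(2*ℓ+1) := Nat.mul_le_mul hcard1 hcard1
    nlinarith
  have hExclPt : ∀ u ∈ R, ((FF ℓ v).filter (fun p => u ∈ Excl p)).card ≤ 144*ℓ^3+3*ℓ := by
    intro u hu
    have huIcc : u ∈ Icc 1 v := hRIcc hu
    have huim : u ∉ (NN ℓ v).image f := by
      rw [hR, Finset.mem_sdiff] at hu
      exact hu.2
    have hctru : ctr ℓ B (NN ℓ v) f u ≤ 144*ℓ^3+3*ℓ := hctr u huIcc huim
    set CS := ((NN ℓ v ×ˢ NN ℓ v).filter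
      (fun e => e.1 < e.2 ∧ clos ℓ e.1 e.2 ∧ isBlk B (f e.1) (f e.2) u)) with hCS
    have hCScard : CS.card = ctr ℓ B (NN ℓ v) f u := rfl
    have hkey : ∀ p ∈ (FF ℓ v).filter (fun p => u ∈ Excl p),
        ∃ e, e ∈ CS ∧ clos ℓ e.1 p ∧ clos ℓ e.2 p := by
      intro p hp
      rw [Finset.mem_filter] at hp
      have hue := hp.2
      rw [hExcl] at hue
      obtain ⟨e, he, hub⟩ := Finset.mem_biUnion.1 hue
      rw [Finset.mem_filter, Finset.mem_product] at he
      have hblk' : isBlk B (f e.1) (f e.2) u := by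
        simp only [blkPts, Finset.mem_biUnion, Finset.mem_filter, id] at hub
        obtain ⟨b, ⟨hbB, h1, h2⟩, h3⟩ := hub
        exact ⟨b, hbB, h1, h2, h3⟩
      refine ⟨e, ?_, he.2.2.1, he.2.2.2.1⟩
      rw [hCS, Finset.mem_filter, Finset.mem_product]
      exact ⟨he.1, he.2.1, he.2.2.2.2, hblk'⟩
    have hinject : ((FF ℓ v).filter (fun p => u ∈ Excl p)).card ≤ CS.card := by
      apply Finset.card_le_card_of_injOn
        (fun p => if h : ∃ e, e ∈ CS ∧ clos ℓ e.1 p ∧ clos ℓ e.2 p then h.choose else (0,0))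
      · intro p hp
        have hx := hkey p hp
        simp only [Finset.mem_coe]
        rw [dif_pos hx]
        exact hx.choose_spec.1
      · intro p hp p' hp' heq
        have hpm := Finset.mem_coe.1 hp
        have hpm' := Finset.mem_coe.1 hp'
        have hx := hkey p hpm
        have hx' := hkey p' hpm'
        have heq : (if h : ∃ e, e ∈ CS ∧ clos ℓ e.1 p ∧ clos ℓ e.2 p then h.choose
            else ((0,0) : ℕ × ℕ))
            = (if h : ∃ e, e ∈ CS ∧ clos ℓ e.1 p' ∧ clos ℓ e.2 p' then h.choose
            else ((0,0) : ℕ × ℕ)) := heq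
        rw [dif_pos hx, dif_pos hx'] at heq
        obtain ⟨he, hc1, hc2⟩ := hx.choose_spec
        obtain ⟨he', hc1', hc2'⟩ := hx'.choose_spec
        rw [heq] at hc1 hc2
        -- p and p' are both multiples of 2ℓ close to the same position
        have hdp : 2*ℓ ∣ p := by
          have := Finset.mem_filter.1 hpm
          have := (Finset.mem_filter.1 this.1).2
          exact this
        have hdp' : 2*ℓ ∣ p' := by
          have := Finset.mem_filter.1 hpm'
          have := (Finset.mem_filter.1 this.1).2
          exact this
        by_contra hne
        rcases Nat.lt_or_ge p p' with hlt | hge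
        · have hdvd : 2*ℓ ∣ (p' - p) := Nat.dvd_sub hdp' hdp
          have hle := Nat.le_of_dvd (by omega) hdvd
          unfold clos at hc1 hc1'
          omega
        · have hlt : p' < p := by omega
          have hdvd : 2*ℓ ∣ (p - p') := Nat.dvd_sub hdp hdp'
          have hle := Nat.le_of_dvd (by omega) hdvd
          unfold clos at hc1 hc1'
          omega
    omega
  -- Hall's condition
  set t := (fun p : {p // p ∈ FF ℓ v} => R \ Excl p.val) with ht
  have hHall : ∀ s : Finset {p // p ∈ FF ℓ v}, s.card ≤ (s.biUnion t).card := by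
    intro s
    rcases s.eq_empty_or_nonempty with rfl | ⟨p0, hp0⟩
    · simp
    by_cases hbig : s.card ≤ 144*ℓ^3+3*ℓ
    · have h1 : t p0 ⊆ s.biUnion t := Finset.subset_biUnion_of_mem t hp0
      have h2 : R.card - (Excl p0.val).card ≤ (t p0).card := by
        rw [ht]
        exact Finset.le_card_sdiff _ _
      have h3 := hExclcard p0.val p0.2
      have h4 := Finset.card_le_card h1
      have h5 := arith2 hℓ hv
      omega
    · push_neg at hbig
      have hsub2 : R ⊆ s.biUnion t := by
        intro u hu
        by_contra hnot
        have hall : ∀ p ∈ s, u ∈ Excl p.val := by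
          intro p hp
          by_contra hxx
          exact hnot (Finset.mem_biUnion.2 ⟨p, hp, by
            rw [ht]; exact Finset.mem_sdiff.2 ⟨hu, hxx⟩⟩)
        have hmap : s.card ≤ ((FF ℓ v).filter (fun p => u ∈ Excl p)).card := by
          apply Finset.card_le_card_of_injOn (fun p => p.val)
          · intro p hp
            exact Finset.mem_filter.2 ⟨p.2, hall p hp⟩
          · intro a _ b _ h
            exact Subtype.ext h
        have := hExclPt u hu
        omega
      have hRsub : s.biUnion t ⊆ R := by
        intro u hu
        obtain ⟨p, _, hup⟩ := Finset.mem_biUnion.1 hu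
        rw [ht] at hup
        exact (Finset.mem_sdiff.1 hup).1
      have hEq : s.biUnion t = R := Finset.Subset.antisymm hRsub hsub2
      rw [hEq, hRcard]
      calc s.card ≤ Finset.univ.card := Finset.card_le_univ s
        _ = Fintype.card {p // p ∈ FF ℓ v} := Finset.card_univ
        _ = (FF ℓ v).card := Fintype.card_coe _
        _ = r := hFFcard
  obtain ⟨m, hminj, hmem⟩ := (Finset.all_card_le_biUnion_card_iff_exists_injective t).1 hHall
  have hmR : ∀ p : {p // p ∈ FF ℓ v}, m p ∈ R := by
    intro p
    have := hmem p
    rw [ht] at this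
    exact (Finset.mem_sdiff.1 this).1
  have hmE : ∀ p : {p // p ∈ FF ℓ v}, m p ∉ Excl p.val := by
    intro p
    have := hmem p
    rw [ht] at this
    exact (Finset.mem_sdiff.1 this).2
  have hmimg : (Finset.univ.image m) = R := by
    apply Finset.eq_of_subset_of_card_le
    · intro u hu
      obtain ⟨p, _, rfl⟩ := Finset.mem_image.1 hu
      exact hmR p
    · rw [Finset.card_image_of_injective _ hminj, hRcard, Finset.card_univ, Fintype.card_coe,
        hFFcard]
  -- the sequencing
  set x := (fun q : ℕ => if hq : q ∈ NN ℓ v then f q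
    else if hq2 : q ∈ FF ℓ v then m ⟨q, hq2⟩ else q) with hxdef
  have hcov : ∀ q ∈ Icc 1 v, q ∈ NN ℓ v ∨ q ∈ FF ℓ v := by
    intro q hq
    by_cases h : 2*ℓ ∣ q
    · right; exact Finset.mem_filter.2 ⟨hq, h⟩
    · left; exact Finset.mem_filter.2 ⟨hq, h⟩
  have hdisj : ∀ q, q ∈ FF ℓ v → q ∉ NN ℓ v := by
    intro q hqF hqN
    exact (Finset.mem_filter.1 hqN).2 (Finset.mem_filter.1 hqF).2
  have hxN : ∀ q ∈ NN ℓ v, x q = f q := by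
    intro q hq
    rw [hxdef]
    exact dif_pos hq
  have hxF : ∀ q, (h : q ∈ FF ℓ v) → x q = m ⟨q, h⟩ := by
    intro q h
    rw [hxdef]
    simp only
    rw [dif_neg (hdisj q h), dif_pos h]
  have hIccIff : ∀ q : ℕ, q ∈ Set.Icc (1:ℕ) v ↔ q ∈ Icc 1 v := by
    intro q
    rw [Set.mem_Icc, Finset.mem_Icc]
  refine ⟨x, ⟨?_, ?_, ?_⟩, ?_⟩
  · -- MapsTo
    intro q hq
    have hq' := (hIccIff q).1 hq
    rcases hcov q hq' with h | h
    · rw [hxN q h]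
      exact (hIccIff _).2 (hP q h)
    · rw [hxF q h]
      exact (hIccIff _).2 (hRIcc (hmR ⟨q, h⟩))
  · -- InjOn
    intro a ha b hb heq
    have ha' := (hIccIff a).1 ha
    have hb' := (hIccIff b).1 hb
    rcases hcov a ha' with h1 | h1 <;> rcases hcov b hb' with h2 | h2
    · rw [hxN a h1, hxN b h2] at heq
      exact hinj a h1 b h2 heq
    · exfalso
      rw [hxN a h1, hxF b h2] at heq
      have := hmR ⟨b, h2⟩
      rw [hR, Finset.mem_sdiff] at this
      exact this.2 (heq ▸ Finset.mem_image_of_mem f h1)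
    · exfalso
      rw [hxF a h1, hxN b h2] at heq
      have := hmR ⟨a, h1⟩
      rw [hR, Finset.mem_sdiff] at this
      exact this.2 (heq ▸ Finset.mem_image_of_mem f h2)
    · rw [hxF a h1, hxF b h2] at heq
      have := hminj heq
      exact congrArg Subtype.val this
  · -- SurjOn
    intro u hu
    have hu' := (hIccIff u).1 hu
    by_cases h : u ∈ (NN ℓ v).image f
    · obtain ⟨q, hq, rfl⟩ := Finset.mem_image.1 h
      exact ⟨q, (hIccIff q).2 (hNNIcc hq), hxN q hq⟩
    · have huR : u ∈ R := by rw [hR, Finset.mem_sdiff]; exact ⟨hu', h⟩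
      rw [← hmimg] at huR
      obtain ⟨p, _, rfl⟩ := Finset.mem_image.1 huR
      refine ⟨p.val, (hIccIff _).2 (hFFIcc p.2), ?_⟩
      rw [hxF p.val p.2]
  · -- no block in a window
    intro i hi b hb hsub
    have hb3 := (hSTS.1 b hb).2
    obtain ⟨u1, u2, u3, h12, h13, h23, hbeq⟩ := Finset.card_eq_three.1 hb3
    have hu1 : u1 ∈ (↑b : Set ℕ) := by rw [hbeq]; simp
    have hu2 : u2 ∈ (↑b : Set ℕ) := by rw [hbeq]; simp
    have hu3 : u3 ∈ (↑b : Set ℕ) := by rw [hbeq]; simp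
    obtain ⟨q1, hq1, hxq1⟩ := hsub hu1
    obtain ⟨q2, hq2, hxq2⟩ := hsub hu2
    obtain ⟨q3, hq3, hxq3⟩ := hsub hu3
    obtain ⟨hq1w, hq1v⟩ := hq1
    obtain ⟨hq2w, hq2v⟩ := hq2
    obtain ⟨hq3w, hq3v⟩ := hq3
    have hq1I := (hIccIff q1).1 hq1v
    have hq2I := (hIccIff q2).1 hq2v
    have hq3I := (hIccIff q3).1 hq3v
    rw [Set.mem_Icc] at hq1w hq2w hq3w
    have hc12 : clos ℓ q1 q2 := by unfold clos; omega
    have hc13 : clos ℓ q1 q3 := by unfold clos; omega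
    have hc23 : clos ℓ q2 q3 := by unfold clos; omega
    have hne12 : q1 ≠ q2 := by rintro rfl; rw [hxq1] at hxq2; exact h12 hxq2
    have hne13 : q1 ≠ q3 := by rintro rfl; rw [hxq1] at hxq3; exact h13 hxq3
    have hne23 : q2 ≠ q3 := by rintro rfl; rw [hxq2] at hxq3; exact h23 hxq3
    have hbmem : ∀ w, w ∈ b → w = x q1 ∨ w = x q2 ∨ w = x q3 := by
      intro w hw
      rw [hbeq, Finset.mem_insert, Finset.mem_insert, Finset.mem_singleton] at hw
      rcases hw with rfl | rfl | rfl
      · exact Or.inl hxq1.symm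
      · exact Or.inr (Or.inl hxq2.symm)
      · exact Or.inr (Or.inr hxq3.symm)
    -- helper: two window positions cannot both be in FF
    have hFFpair : ∀ a c : ℕ, a ∈ FF ℓ v → c ∈ FF ℓ v → a ≠ c → clos ℓ a c → False := by
      intro a c haF hcF hne hcl
      have hda : 2*ℓ ∣ a := (Finset.mem_filter.1 haF).2
      have hdc : 2*ℓ ∣ c := (Finset.mem_filter.1 hcF).2
      unfold clos at hcl
      rcases Nat.lt_or_ge a c with hlt | hge
      · have := Nat.le_of_dvd (by omega) (Nat.dvd_sub hdc hda)
        omega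
      · have hlt : c < a := by omega
        have := Nat.le_of_dvd (by omega) (Nat.dvd_sub hda hdc)
        omega
    -- helper: exactly one window position in FF
    have hone : ∀ qa qb qk : ℕ, qa ∈ NN ℓ v → qb ∈ NN ℓ v → ∀ hk : qk ∈ FF ℓ v,
        qa ≠ qb → clos ℓ qa qk → clos ℓ qb qk → clos ℓ qa qb →
        f qa ∈ b → f qb ∈ b → x qk ∈ b → False := by
      intro qa qb qk haN hbN hk hne hca hcb hcab hfa hfb hxk
      have hux : x qk = m ⟨qk, hk⟩ := hxF qk hk
      apply hmE ⟨qk, hk⟩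
      rw [hExcl]
      apply Finset.mem_biUnion.2
      rcases Nat.lt_or_ge qa qb with hlt | hge
      · refine ⟨(qa, qb), ?_, ?_⟩
        · rw [Finset.mem_filter, Finset.mem_product]
          exact ⟨⟨haN, hbN⟩, hlt, hca, hcb, hcab⟩
        · rw [← hux]
          exact mem_blkPts hb hfa hfb hxk
      · have hlt : qb < qa := by omega
        refine ⟨(qb, qa), ?_, ?_⟩
        · rw [Finset.mem_filter, Finset.mem_product]
          exact ⟨⟨hbN, haN⟩, hlt, hcb, hca, clos_symm hcab⟩
        · rw [← hux]
          exact mem_blkPts hb hfb hfa hxk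
    rcases hcov q1 hq1I with hN1 | hF1 <;> rcases hcov q2 hq2I with hN2 | hF2 <;>
      rcases hcov q3 hq3I with hN3 | hF3
    · -- all in NN
      have hsub' : (↑b : Set ℕ) ⊆ {f q1, f q2, f q3} := by
        intro w hw
        have := hbmem w hw
        rw [hxN q1 hN1, hxN q2 hN2, hxN q3 hN3] at this
        simp only [Set.mem_insert_iff, Set.mem_singleton_iff]
        exact this
      exact hblk b hb q1 hN1 q2 hN2 q3 hN3 hc12 hc13 hc23 hsub'
    · -- q3 ∈ FF
      refine hone q1 q2 q3 hN1 hN2 hF3 hne12 hc13 hc23 hc12 ?_ ?_ ?_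
      · rw [← hxN q1 hN1, hxq1]; exact hbeq ▸ (by simp)
      · rw [← hxN q2 hN2, hxq2]; exact hbeq ▸ (by simp)
      · rw [hxq3]; exact hbeq ▸ (by simp)
    · -- q2 ∈ FF
      refine hone q1 q3 q2 hN1 hN3 hF2 hne13 hc12 (clos_symm hc23) hc13 ?_ ?_ ?_
      · rw [← hxN q1 hN1, hxq1]; exact hbeq ▸ (by simp)
      · rw [← hxN q3 hN3, hxq3]; exact hbeq ▸ (by simp)
      · rw [hxq2]; exact hbeq ▸ (by simp)
    · exact hFFpair q2 q3 hF2 hF3 hne23 hc23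
    · -- q1 ∈ FF
      refine hone q2 q3 q1 hN2 hN3 hF1 hne23 (clos_symm hc12) (clos_symm hc13) hc23 ?_ ?_ ?_
      · rw [← hxN q2 hN2, hxq2]; exact hbeq ▸ (by simp)
      · rw [← hxN q3 hN3, hxq3]; exact hbeq ▸ (by simp)
      · rw [hxq1]; exact hbeq ▸ (by simp)
    · exact hFFpair q1 q3 hF1 hF3 hne13 hc13
    · exact hFFpair q1 q2 hF1 hF2 hne12 hc12
    · exact hFFpair q1 q2 hF1 hF2 hne12 hc12
end GS7

end GS

/-- For every integer `ℓ ≥ 3`, there exists an integer `n` such that every Steiner triple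
system of order `v` with `v > n` has an `ℓ`-good sequencing. -/
theorem exists_bound_for_good_sequencing (ℓ : ℕ) (hℓ : 3 ≤ ℓ) :
    ∃ n : ℕ, ∀ v : ℕ, n < v → ∀ B : Finset (Finset ℕ), IsSTS v B →
      ∃ x : ℕ → ℕ, IsGoodSeq v ℓ B x :=
  exists_bound_for_good_sequencing' ℓ hℓ
end

section
/- If a Steiner triple system of order v with v ≥ 7 has an ℓ-good sequencing (where ℓ ≥ 3), then 3ℓ ≤ v + 2. -/
section GoodSeqAux

open Finset

lemma third_elt {t : Finset ℕ} (hcard : t.card = 3) {i j : ℕ} (hi : i ∈ t) (hj : j ∈ t)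
    (hij : i ≠ j) : ∃ k, k ∈ t ∧ k ≠ i ∧ k ≠ j ∧ ∀ z ∈ t, z = i ∨ z = j ∨ z = k := by
  obtain ⟨a, b, c, hab, hac, hbc, rfl⟩ := Finset.card_eq_three.mp hcard
  simp only [Finset.mem_insert, Finset.mem_singleton] at hi hj ⊢
  rcases hi with rfl | rfl | rfl <;> rcases hj with rfl | rfl | rfl <;>
    first
      | exact absurd rfl hij
      | (refine ⟨c, ?_, ?_, ?_, ?_⟩ <;> tauto)
      | (refine ⟨b, ?_, ?_, ?_, ?_⟩ <;> tauto)
      | (refine ⟨a, ?_, ?_, ?_, ?_⟩ <;> tauto)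

lemma stair_card (d n : ℕ) :
    2 * ((Finset.Icc 1 n).biUnion
      (fun a => (Finset.Icc (a + d) (d + n)).image (Prod.mk a))).card = n * (n + 1) := by
  rw [Finset.card_biUnion]
  · have h1 : ∀ a ∈ Finset.Icc 1 n,
        ((Finset.Icc (a + d) (d + n)).image (Prod.mk a)).card = n + 1 - a := by
      intro a _
      rw [Finset.card_image_of_injective _ (fun x y h => congrArg Prod.snd h)]
      rw [Nat.card_Icc]; omega
    rw [Finset.sum_congr rfl h1]
    have h2 : ∑ a ∈ Finset.Icc 1 n, (n + 1 - a) = ∑ a ∈ Finset.Icc 1 n, a := by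
      refine Finset.sum_nbij' (fun a => n + 1 - a) (fun a => n + 1 - a) ?_ ?_ ?_ ?_ ?_ <;>
        intro a ha <;> simp only [Finset.mem_Icc] at * <;> omega
    rw [h2]
    have h3 : ∑ a ∈ Finset.Icc 1 n, a = ∑ a ∈ Finset.range (n + 1), a := by
      refine Finset.sum_subset ?_ ?_
      · intro a ha; simp only [Finset.mem_Icc, Finset.mem_range] at ha ⊢; omega
      · intro a ha hb; simp only [Finset.mem_Icc, Finset.mem_range] at ha hb; omega
    rw [h3]
    have h4 : (∑ a ∈ Finset.range (n + 1), a) * 2 = (n + 1) * n := by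
      simpa using Finset.sum_range_id_mul_two (n + 1)
    have h5 : (n + 1) * n = n * (n + 1) := Nat.mul_comm _ _
    omega
  · intro t1 h1 t2 h2 hne
    simp only [Function.onFun]
    rw [Finset.disjoint_left]
    rintro ⟨p, q⟩ hp hq
    simp only [Finset.mem_image] at hp hq
    obtain ⟨b1, _, hb1⟩ := hp
    obtain ⟨b2, _, hb2⟩ := hq
    apply hne
    have := (Prod.mk.injEq _ _ _ _).mp hb1
    have := (Prod.mk.injEq _ _ _ _).mp hb2
    omega

section STSPos

variable {v ℓ : ℕ} {T : Finset (Finset ℕ)}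

lemma uniq_block
    (hT1 : ∀ t ∈ T, t ⊆ Finset.Icc 1 v ∧ t.card = 3)
    (hT2 : ∀ i ∈ Finset.Icc 1 v, ∀ j ∈ Finset.Icc 1 v, i ≠ j →
      ∃! t, t ∈ T ∧ i ∈ t ∧ j ∈ t)
    {t1 t2 : Finset ℕ} (ht1 : t1 ∈ T) (ht2 : t2 ∈ T) {i j : ℕ} (hij : i ≠ j)
    (hi1 : i ∈ t1) (hj1 : j ∈ t1) (hi2 : i ∈ t2) (hj2 : j ∈ t2) : t1 = t2 := by
  obtain ⟨t, -, hu⟩ := hT2 i ((hT1 t1 ht1).1 hi1) j ((hT1 t1 ht1).1 hj1) hij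
  exact (hu t1 ⟨ht1, hi1, hj1⟩).trans (hu t2 ⟨ht2, hi2, hj2⟩).symm

lemma card_cross
    (hT1 : ∀ t ∈ T, t ⊆ Finset.Icc 1 v ∧ t.card = 3)
    (hT2 : ∀ i ∈ Finset.Icc 1 v, ∀ j ∈ Finset.Icc 1 v, i ≠ j →
      ∃! t, t ∈ T ∧ i ∈ t ∧ j ∈ t)
    {S1 S2 : Finset ℕ} (h1 : S1 ⊆ Finset.Icc 1 v) (h2 : S2 ⊆ Finset.Icc 1 v)
    (hd : Disjoint S1 S2) :
    S1.card * S2.card = ∑ t ∈ T, (t ∩ S1).card * (t ∩ S2).card := by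
  have hcover : S1 ×ˢ S2 = T.biUnion (fun t => (t ∩ S1) ×ˢ (t ∩ S2)) := by
    ext ⟨i, j⟩
    simp only [Finset.mem_product, Finset.mem_biUnion, Finset.mem_inter]
    constructor
    · rintro ⟨hi, hj⟩
      have hij : i ≠ j := fun h => Finset.disjoint_left.mp hd hi (h ▸ hj)
      obtain ⟨t, ⟨ht, hit, hjt⟩, -⟩ := hT2 i (h1 hi) j (h2 hj) hij
      exact ⟨t, ht, ⟨hit, hi⟩, hjt, hj⟩
    · rintro ⟨t, ht, ⟨hit, hi⟩, hjt, hj⟩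
      exact ⟨hi, hj⟩
  have hdisj : ∀ t1 ∈ T, ∀ t2 ∈ T, t1 ≠ t2 →
      Disjoint ((t1 ∩ S1) ×ˢ (t1 ∩ S2)) ((t2 ∩ S1) ×ˢ (t2 ∩ S2)) := by
    intro t1 ht1 t2 ht2 hne
    rw [Finset.disjoint_left]
    rintro ⟨i, j⟩ hp hq
    simp only [Finset.mem_product, Finset.mem_inter] at hp hq
    have hij : i ≠ j := fun h => Finset.disjoint_left.mp hd hp.1.2 (h ▸ hp.2.2)
    exact hne (uniq_block hT1 hT2 ht1 ht2 hij hp.1.1 hp.2.1 hq.1.1 hq.2.1)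
  rw [← Finset.card_product, hcover, Finset.card_biUnion hdisj]
  exact Finset.sum_congr rfl fun t _ => Finset.card_product _ _

lemma card_diag
    (hT1 : ∀ t ∈ T, t ⊆ Finset.Icc 1 v ∧ t.card = 3)
    (hT2 : ∀ i ∈ Finset.Icc 1 v, ∀ j ∈ Finset.Icc 1 v, i ≠ j →
      ∃! t, t ∈ T ∧ i ∈ t ∧ j ∈ t)
    {S : Finset ℕ} (hS : S ⊆ Finset.Icc 1 v) :
    S.card * S.card - S.card
      = ∑ t ∈ T, ((t ∩ S).card * (t ∩ S).card - (t ∩ S).card) := by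
  have hcover : S.offDiag = T.biUnion (fun t => (t ∩ S).offDiag) := by
    ext ⟨i, j⟩
    simp only [Finset.mem_offDiag, Finset.mem_biUnion, Finset.mem_inter]
    constructor
    · rintro ⟨hi, hj, hij⟩
      obtain ⟨t, ⟨ht, hit, hjt⟩, -⟩ := hT2 i (hS hi) j (hS hj) hij
      exact ⟨t, ht, ⟨hit, hi⟩, ⟨hjt, hj⟩, hij⟩
    · rintro ⟨t, ht, ⟨hit, hi⟩, ⟨hjt, hj⟩, hij⟩
      exact ⟨hi, hj, hij⟩
  have hdisj : ∀ t1 ∈ T, ∀ t2 ∈ T, t1 ≠ t2 →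
      Disjoint ((t1 ∩ S).offDiag) ((t2 ∩ S).offDiag) := by
    intro t1 ht1 t2 ht2 hne
    rw [Finset.disjoint_left]
    rintro ⟨i, j⟩ hp hq
    simp only [Finset.mem_offDiag, Finset.mem_inter] at hp hq
    exact hne (uniq_block hT1 hT2 ht1 ht2 hp.2.2 hp.1.1 hp.2.1.1 hq.1.1 hq.2.1.1)
  rw [← Finset.offDiag_card, hcover, Finset.card_biUnion hdisj]
  exact Finset.sum_congr rfl fun t _ => Finset.offDiag_card _

lemma count_two
    (hT1 : ∀ t ∈ T, t ⊆ Finset.Icc 1 v ∧ t.card = 3)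
    (hT2 : ∀ i ∈ Finset.Icc 1 v, ∀ j ∈ Finset.Icc 1 v, i ≠ j →
      ∃! t, t ∈ T ∧ i ∈ t ∧ j ∈ t)
    {S : Finset ℕ} (hS : S ⊆ Finset.Icc 1 v)
    (hsmall : ∀ t ∈ T, (t ∩ S).card ≤ 2) :
    2 * (T.filter (fun t => (t ∩ S).card = 2)).card = S.card * S.card - S.card := by
  rw [card_diag hT1 hT2 hS]
  rw [← Finset.sum_filter_add_sum_filter_not T (fun t => (t ∩ S).card = 2)]
  have hA : ∀ t ∈ T.filter (fun t => (t ∩ S).card = 2),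
      (t ∩ S).card * (t ∩ S).card - (t ∩ S).card = 2 := by
    intro t ht
    have := (Finset.mem_filter.mp ht).2
    rw [this]
  have hB : ∀ t ∈ T.filter (fun t => ¬ (t ∩ S).card = 2),
      (t ∩ S).card * (t ∩ S).card - (t ∩ S).card = 0 := by
    intro t ht
    obtain ⟨htT, hne⟩ := Finset.mem_filter.mp ht
    have h2 := hsmall t htT
    have h01 : (t ∩ S).card = 0 ∨ (t ∩ S).card = 1 := by omega
    rcases h01 with h | h <;> rw [h]
  rw [Finset.sum_congr rfl hA, Finset.sum_congr rfl hB, Finset.sum_const, Finset.sum_const,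
    smul_eq_mul, smul_eq_mul]
  ring

end STSPos
section PosBound

theorem pos_bound {v ℓ : ℕ} (T : Finset (Finset ℕ)) (hl : 3 ≤ ℓ) (hv : 7 ≤ v)
    (hT1 : ∀ t ∈ T, t ⊆ Finset.Icc 1 v ∧ t.card = 3)
    (hT2 : ∀ i ∈ Finset.Icc 1 v, ∀ j ∈ Finset.Icc 1 v, i ≠ j →
      ∃! t, t ∈ T ∧ i ∈ t ∧ j ∈ t)
    (hT3 : ∀ t ∈ T, ∀ a b : ℕ, 1 ≤ a → (∀ z ∈ t, a ≤ z ∧ z ≤ b) → a + ℓ ≤ b) :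
    3 * ℓ ≤ v + 2 := by
  by_contra hcon
  push_neg at hcon
  have hbnd : ∀ t ∈ T, ∀ z ∈ t, 1 ≤ z ∧ z ≤ v := fun t ht z hz =>
    Finset.mem_Icc.mp ((hT1 t ht).1 hz)
  have hex : ∀ i j : ℕ, 1 ≤ i → i ≤ v → 1 ≤ j → j ≤ v → i ≠ j →
      ∃ t, t ∈ T ∧ i ∈ t ∧ j ∈ t := by
    intro i j h1 h2 h3 h4 h5
    obtain ⟨t, ht, -⟩ := hT2 i (Finset.mem_Icc.mpr ⟨h1, h2⟩) j (Finset.mem_Icc.mpr ⟨h3, h4⟩) h5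
    exact ⟨t, ht⟩
  rcases Nat.lt_or_ge v (2 * ℓ - 1) with hA | hA
  · -- v ≤ 2ℓ - 2
    rcases Nat.lt_or_ge v ℓ with hA1 | hA1
    · obtain ⟨t, ht, h1t, h2t⟩ := hex 1 2 (by omega) (by omega) (by omega) (by omega) (by omega)
      have := hT3 t ht 1 v (le_refl 1) (fun z hz => hbnd t ht z hz)
      omega
    · obtain ⟨t, ht, hit, hjt⟩ :=
        hex (ℓ - 1) ℓ (by omega) (by omega) (by omega) (by omega) (by omega)
      obtain ⟨k, hkt, hki, hkj, hcov⟩ := third_elt (hT1 t ht).2 hit hjt (by omega)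
      have hk := hbnd t ht k hkt
      rcases Nat.lt_or_ge k (ℓ - 1) with hk1 | hk1
      · have hb : ∀ z ∈ t, k ≤ z ∧ z ≤ ℓ := by
          intro z hz; rcases hcov z hz with rfl | rfl | rfl <;> omega
        have := hT3 t ht k ℓ (by omega) hb; omega
      · have hk2 : ℓ < k := by omega
        have hb : ∀ z ∈ t, ℓ - 1 ≤ z ∧ z ≤ k := by
          intro z hz; rcases hcov z hz with rfl | rfl | rfl <;> omega
        have := hT3 t ht (ℓ - 1) k (by omega) hb; omega
  rcases Nat.lt_or_ge v (2 * ℓ) with hB | hBmain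
  · -- v = 2ℓ - 1
    have hv2 : v = 2 * ℓ - 1 := by omega
    obtain ⟨t1, ht1, h1a, h1b⟩ :=
      hex ℓ (ℓ + 1) (by omega) (by omega) (by omega) (by omega) (by omega)
    obtain ⟨k1, hk1t, hk1a, hk1b, hcov1⟩ := third_elt (hT1 t1 ht1).2 h1a h1b (by omega)
    have hk1v := hbnd t1 ht1 k1 hk1t
    have hk1 : k1 = 1 := by
      rcases Nat.lt_or_ge k1 ℓ with h | h
      · have hb : ∀ z ∈ t1, k1 ≤ z ∧ z ≤ ℓ + 1 := by
          intro z hz; rcases hcov1 z hz with rfl | rfl | rfl <;> omega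
        have := hT3 t1 ht1 k1 (ℓ + 1) (by omega) hb; omega
      · have h2 : ℓ + 1 < k1 := by omega
        have hb : ∀ z ∈ t1, ℓ ≤ z ∧ z ≤ k1 := by
          intro z hz; rcases hcov1 z hz with rfl | rfl | rfl <;> omega
        have := hT3 t1 ht1 ℓ k1 (by omega) hb; omega
    obtain ⟨t2, ht2, h2a, h2b⟩ :=
      hex (ℓ - 1) ℓ (by omega) (by omega) (by omega) (by omega) (by omega)
    obtain ⟨k2, hk2t, hk2a, hk2b, hcov2⟩ := third_elt (hT1 t2 ht2).2 h2a h2b (by omega)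
    have hk2v := hbnd t2 ht2 k2 hk2t
    have hk2 : k2 = 2 * ℓ - 1 := by
      rcases Nat.lt_or_ge k2 (ℓ - 1) with h | h
      · have hb : ∀ z ∈ t2, k2 ≤ z ∧ z ≤ ℓ := by
          intro z hz; rcases hcov2 z hz with rfl | rfl | rfl <;> omega
        have := hT3 t2 ht2 k2 ℓ (by omega) hb; omega
      · have h2 : ℓ < k2 := by omega
        have hb : ∀ z ∈ t2, ℓ - 1 ≤ z ∧ z ≤ k2 := by
          intro z hz; rcases hcov2 z hz with rfl | rfl | rfl <;> omega
        have := hT3 t2 ht2 (ℓ - 1) k2 (by omega) hb; omega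
    obtain ⟨t3, ht3, h3a, h3b⟩ :=
      hex (ℓ - 1) (ℓ + 1) (by omega) (by omega) (by omega) (by omega) (by omega)
    obtain ⟨k3, hk3t, hk3a, hk3b, hcov3⟩ := third_elt (hT1 t3 ht3).2 h3a h3b (by omega)
    have hk3v := hbnd t3 ht3 k3 hk3t
    have htri : k3 < ℓ - 1 ∨ k3 = ℓ ∨ ℓ + 1 < k3 := by omega
    rcases htri with h | h | h
    · have hb : ∀ z ∈ t3, k3 ≤ z ∧ z ≤ ℓ + 1 := by
        intro z hz; rcases hcov3 z hz with rfl | rfl | rfl <;> omega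
      have h5 := hT3 t3 ht3 k3 (ℓ + 1) (by omega) hb
      have hk3 : k3 = 1 := by omega
      have heq : t3 = t1 :=
        uniq_block hT1 hT2 ht3 ht1 (show k3 ≠ ℓ + 1 by omega) hk3t h3b
          (by rw [hk3, ← hk1]; exact hk1t) h1b
      have := hcov1 (ℓ - 1) (heq ▸ h3a)
      omega
    · have hb : ∀ z ∈ t3, ℓ - 1 ≤ z ∧ z ≤ ℓ + 1 := by
        intro z hz; rcases hcov3 z hz with rfl | rfl | rfl <;> omega
      have := hT3 t3 ht3 (ℓ - 1) (ℓ + 1) (by omega) hb; omega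
    · have hb : ∀ z ∈ t3, ℓ - 1 ≤ z ∧ z ≤ k3 := by
        intro z hz; rcases hcov3 z hz with rfl | rfl | rfl <;> omega
      have h5 := hT3 t3 ht3 (ℓ - 1) k3 (by omega) hb
      have hk3 : k3 = 2 * ℓ - 1 := by omega
      have heq : t3 = t2 :=
        uniq_block hT1 hT2 ht3 ht2 (show ℓ - 1 ≠ k3 by omega) h3a hk3t h2a
          (by rw [hk3, ← hk2]; exact hk2t)
      have := hcov2 (ℓ + 1) (heq ▸ h3b)
      omega
  · -- main case : 2ℓ ≤ v ≤ 3ℓ - 3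
    obtain ⟨w, hw⟩ : ∃ w, v = 2 * ℓ + w := ⟨v - 2 * ℓ, by omega⟩
    have hwl : w + 3 ≤ ℓ := by omega
    set L : Finset ℕ := Finset.Icc 1 ℓ with hL
    set M : Finset ℕ := Finset.Icc (ℓ + 1) (ℓ + w) with hM
    set R : Finset ℕ := Finset.Icc (ℓ + w + 1) v with hR
    have hcL : L.card = ℓ := by rw [hL, Nat.card_Icc]; omega
    have hcM : M.card = w := by rw [hM, Nat.card_Icc]; omega
    have hcR : R.card = ℓ := by rw [hR, Nat.card_Icc]; omega
    have hLv : L ⊆ Finset.Icc 1 v := by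
      intro z hz; rw [hL, Finset.mem_Icc] at hz; rw [Finset.mem_Icc]; omega
    have hMv : M ⊆ Finset.Icc 1 v := by
      intro z hz; rw [hM, Finset.mem_Icc] at hz; rw [Finset.mem_Icc]; omega
    have hRv : R ⊆ Finset.Icc 1 v := by
      intro z hz; rw [hR, Finset.mem_Icc] at hz; rw [Finset.mem_Icc]; omega
    have hLR : Disjoint L R := by
      rw [Finset.disjoint_left]; intro z h1 h2
      rw [hL, Finset.mem_Icc] at h1; rw [hR, Finset.mem_Icc] at h2; omega
    -- no three points of a block in a short interval
    have hsmall : ∀ a b : ℕ, 1 ≤ a → b < a + ℓ → ∀ t ∈ T, (t ∩ Finset.Icc a b).card ≤ 2 := by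
      intro a b ha hab t ht
      by_contra hc
      push_neg at hc
      have hsub : t ∩ Finset.Icc a b = t :=
        Finset.eq_of_subset_of_card_le Finset.inter_subset_left
          (by have := (hT1 t ht).2; omega)
      have hb : ∀ z ∈ t, a ≤ z ∧ z ≤ b := by
        intro z hz
        have hz2 : z ∈ t ∩ Finset.Icc a b := hsub.symm ▸ hz
        exact Finset.mem_Icc.mp (Finset.mem_inter.mp hz2).2
      have := hT3 t ht a b ha hb
      omega
    have hsmallL : ∀ t ∈ T, (t ∩ L).card ≤ 2 := by
      rw [hL]; exact hsmall 1 ℓ (by omega) (by omega)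
    have hsmallM : ∀ t ∈ T, (t ∩ M).card ≤ 2 := by
      rw [hM]; exact hsmall (ℓ + 1) (ℓ + w) (by omega) (by omega)
    have hsmallR : ∀ t ∈ T, (t ∩ R).card ≤ 2 := by
      rw [hR]; exact hsmall (ℓ + w + 1) v (by omega) (by omega)
    -- the three regions partition each block
    have hpart : ∀ t ∈ T, (t ∩ L).card + (t ∩ M).card + (t ∩ R).card = 3 := by
      intro t ht
      have h1 : (t ∩ L) ∪ (t ∩ M) ∪ (t ∩ R) = t := by
        ext z
        simp only [Finset.mem_union, Finset.mem_inter, hL, hM, hR, Finset.mem_Icc]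
        constructor
        · rintro ((⟨h, -⟩ | ⟨h, -⟩) | ⟨h, -⟩) <;> exact h
        · intro hz
          have hzb := hbnd t ht z hz
          rcases Nat.lt_or_ge z (ℓ + 1) with h | h
          · exact Or.inl (Or.inl ⟨hz, by omega⟩)
          · rcases Nat.lt_or_ge z (ℓ + w + 1) with h2 | h2
            · exact Or.inl (Or.inr ⟨hz, by omega⟩)
            · exact Or.inr ⟨hz, by omega⟩
      have hd1 : Disjoint (t ∩ L) (t ∩ M) := by
        rw [Finset.disjoint_left]; intro z hz1 hz2
        rw [Finset.mem_inter, hL, Finset.mem_Icc] at hz1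
        rw [Finset.mem_inter, hM, Finset.mem_Icc] at hz2
        omega
      have hd2 : Disjoint ((t ∩ L) ∪ (t ∩ M)) (t ∩ R) := by
        rw [Finset.disjoint_left]; intro z hz1 hz2
        rw [Finset.mem_union, Finset.mem_inter, Finset.mem_inter, hL, hM, Finset.mem_Icc,
          Finset.mem_Icc] at hz1
        rw [Finset.mem_inter, hR, Finset.mem_Icc] at hz2
        omega
      have h2 := congrArg Finset.card h1
      rw [Finset.card_union_of_disjoint hd2, Finset.card_union_of_disjoint hd1,
        (hT1 t ht).2] at h2
      exact h2
    -- block type counts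
    set nA := (T.filter (fun t => (t ∩ L).card = 2 ∧ (t ∩ M).card = 1)).card with hnA
    set nA' := (T.filter (fun t => (t ∩ L).card = 2 ∧ (t ∩ R).card = 1)).card with hnA'
    set nC := (T.filter (fun t => (t ∩ M).card = 2 ∧ (t ∩ L).card = 1)).card with hnC
    set nD := (T.filter (fun t => (t ∩ M).card = 2 ∧ (t ∩ R).card = 1)).card with hnD
    set nE := (T.filter (fun t => (t ∩ R).card = 2 ∧ (t ∩ M).card = 1)).card with hnE
    set nE' := (T.filter (fun t => (t ∩ R).card = 2 ∧ (t ∩ L).card = 1)).card with hnE'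
    -- splitting the two-in-a-region counts
    have hsplitL : (T.filter (fun t => (t ∩ L).card = 2)).card = nA + nA' := by
      have hun : T.filter (fun t => (t ∩ L).card = 2)
          = (T.filter (fun t => (t ∩ L).card = 2 ∧ (t ∩ M).card = 1))
            ∪ (T.filter (fun t => (t ∩ L).card = 2 ∧ (t ∩ R).card = 1)) := by
        ext t
        simp only [Finset.mem_filter, Finset.mem_union]
        constructor
        · rintro ⟨ht, h2⟩
          have hp := hpart t ht
          have hor : (t ∩ M).card = 1 ∨ (t ∩ R).card = 1 := by omega
          rcases hor with h | h
          · exact Or.inl ⟨ht, h2, h⟩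
          · exact Or.inr ⟨ht, h2, h⟩
        · rintro (⟨ht, h2, -⟩ | ⟨ht, h2, -⟩) <;> exact ⟨ht, h2⟩
      have hdis : Disjoint (T.filter (fun t => (t ∩ L).card = 2 ∧ (t ∩ M).card = 1))
          (T.filter (fun t => (t ∩ L).card = 2 ∧ (t ∩ R).card = 1)) := by
        rw [Finset.disjoint_left]
        intro t h1 h2
        rw [Finset.mem_filter] at h1 h2
        have hp := hpart t h1.1
        omega
      rw [hun, Finset.card_union_of_disjoint hdis]
    have hsplitM : (T.filter (fun t => (t ∩ M).card = 2)).card = nC + nD := by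
      have hun : T.filter (fun t => (t ∩ M).card = 2)
          = (T.filter (fun t => (t ∩ M).card = 2 ∧ (t ∩ L).card = 1))
            ∪ (T.filter (fun t => (t ∩ M).card = 2 ∧ (t ∩ R).card = 1)) := by
        ext t
        simp only [Finset.mem_filter, Finset.mem_union]
        constructor
        · rintro ⟨ht, h2⟩
          have hp := hpart t ht
          have hor : (t ∩ L).card = 1 ∨ (t ∩ R).card = 1 := by omega
          rcases hor with h | h
          · exact Or.inl ⟨ht, h2, h⟩
          · exact Or.inr ⟨ht, h2, h⟩
        · rintro (⟨ht, h2, -⟩ | ⟨ht, h2, -⟩) <;> exact ⟨ht, h2⟩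
      have hdis : Disjoint (T.filter (fun t => (t ∩ M).card = 2 ∧ (t ∩ L).card = 1))
          (T.filter (fun t => (t ∩ M).card = 2 ∧ (t ∩ R).card = 1)) := by
        rw [Finset.disjoint_left]
        intro t h1 h2
        rw [Finset.mem_filter] at h1 h2
        have hp := hpart t h1.1
        omega
      rw [hun, Finset.card_union_of_disjoint hdis]
    have hsplitR : (T.filter (fun t => (t ∩ R).card = 2)).card = nE + nE' := by
      have hun : T.filter (fun t => (t ∩ R).card = 2)
          = (T.filter (fun t => (t ∩ R).card = 2 ∧ (t ∩ M).card = 1))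
            ∪ (T.filter (fun t => (t ∩ R).card = 2 ∧ (t ∩ L).card = 1)) := by
        ext t
        simp only [Finset.mem_filter, Finset.mem_union]
        constructor
        · rintro ⟨ht, h2⟩
          have hp := hpart t ht
          have hor : (t ∩ M).card = 1 ∨ (t ∩ L).card = 1 := by omega
          rcases hor with h | h
          · exact Or.inl ⟨ht, h2, h⟩
          · exact Or.inr ⟨ht, h2, h⟩
        · rintro (⟨ht, h2, -⟩ | ⟨ht, h2, -⟩) <;> exact ⟨ht, h2⟩
      have hdis : Disjoint (T.filter (fun t => (t ∩ R).card = 2 ∧ (t ∩ M).card = 1))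
          (T.filter (fun t => (t ∩ R).card = 2 ∧ (t ∩ L).card = 1)) := by
        rw [Finset.disjoint_left]
        intro t h1 h2
        rw [Finset.mem_filter] at h1 h2
        have hp := hpart t h1.1
        omega
      rw [hun, Finset.card_union_of_disjoint hdis]
    -- the pair-counting identities
    have hdL : 2 * (nA + nA') = ℓ * ℓ - ℓ := by
      have h := count_two hT1 hT2 hLv hsmallL
      rw [hsplitL, hcL] at h
      exact h
    have hdM : 2 * (nC + nD) = w * w - w := by
      have h := count_two hT1 hT2 hMv hsmallM
      rw [hsplitM, hcM] at h
      exact h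
    have hdR : 2 * (nE + nE') = ℓ * ℓ - ℓ := by
      have h := count_two hT1 hT2 hRv hsmallR
      rw [hsplitR, hcR] at h
      exact h
    -- L × R pairs bound
    have hsumge : 2 * nA' + 2 * nE' ≤ ℓ * ℓ := by
      have hcrossLR := card_cross hT1 hT2 hLv hRv hLR
      rw [hcL, hcR] at hcrossLR
      rw [hcrossLR]
      have hsub : (T.filter (fun t => (t ∩ L).card = 2 ∧ (t ∩ R).card = 1))
          ∪ (T.filter (fun t => (t ∩ R).card = 2 ∧ (t ∩ L).card = 1)) ⊆ T := by
        intro t ht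
        rcases Finset.mem_union.mp ht with h | h <;> exact (Finset.mem_filter.mp h).1
      have hdis : Disjoint (T.filter (fun t => (t ∩ L).card = 2 ∧ (t ∩ R).card = 1))
          (T.filter (fun t => (t ∩ R).card = 2 ∧ (t ∩ L).card = 1)) := by
        rw [Finset.disjoint_left]
        intro t h1 h2
        rw [Finset.mem_filter] at h1 h2
        omega
      have e1 : ∑ t ∈ T.filter (fun t => (t ∩ L).card = 2 ∧ (t ∩ R).card = 1),
          (t ∩ L).card * (t ∩ R).card = 2 * nA' := by
        calc ∑ t ∈ T.filter (fun t => (t ∩ L).card = 2 ∧ (t ∩ R).card = 1),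
            (t ∩ L).card * (t ∩ R).card
            = ∑ _t ∈ T.filter (fun t => (t ∩ L).card = 2 ∧ (t ∩ R).card = 1), 2 :=
              Finset.sum_congr rfl (fun t ht => by
                obtain ⟨-, h⟩ := Finset.mem_filter.mp ht
                rw [h.1, h.2])
          _ = 2 * nA' := by rw [Finset.sum_const, smul_eq_mul, mul_comm]
      have e2 : ∑ t ∈ T.filter (fun t => (t ∩ R).card = 2 ∧ (t ∩ L).card = 1),
          (t ∩ L).card * (t ∩ R).card = 2 * nE' := by
        calc ∑ t ∈ T.filter (fun t => (t ∩ R).card = 2 ∧ (t ∩ L).card = 1),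
            (t ∩ L).card * (t ∩ R).card
            = ∑ _t ∈ T.filter (fun t => (t ∩ R).card = 2 ∧ (t ∩ L).card = 1), 2 :=
              Finset.sum_congr rfl (fun t ht => by
                obtain ⟨-, h⟩ := Finset.mem_filter.mp ht
                rw [h.1, h.2])
          _ = 2 * nE' := by rw [Finset.sum_const, smul_eq_mul, mul_comm]
      calc 2 * nA' + 2 * nE'
          = ∑ t ∈ ((T.filter (fun t => (t ∩ L).card = 2 ∧ (t ∩ R).card = 1))
              ∪ (T.filter (fun t => (t ∩ R).card = 2 ∧ (t ∩ L).card = 1))),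
              (t ∩ L).card * (t ∩ R).card := by
            rw [Finset.sum_union hdis, e1, e2]
        _ ≤ ∑ t ∈ T, (t ∩ L).card * (t ∩ R).card :=
            Finset.sum_le_sum_of_subset hsub
    -- staircase injections
    set K1 : Finset (ℕ × ℕ) := (Finset.Icc 1 w).biUnion
      (fun a => (Finset.Icc (a + ℓ) (ℓ + w)).image (Prod.mk a)) with hK1def
    set K2 : Finset (ℕ × ℕ) := (Finset.Icc 1 w).biUnion
      (fun a => (Finset.Icc (a + 2 * ℓ) (2 * ℓ + w)).image (Prod.mk a)) with hK2def
    have hinj1 : nA + nC ≤ K1.card := by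
      have hdisAC : Disjoint (T.filter (fun t => (t ∩ L).card = 2 ∧ (t ∩ M).card = 1))
          (T.filter (fun t => (t ∩ M).card = 2 ∧ (t ∩ L).card = 1)) := by
        rw [Finset.disjoint_left]
        intro t h1 h2
        rw [Finset.mem_filter] at h1 h2
        omega
      rw [hnA, hnC, ← Finset.card_union_of_disjoint hdisAC]
      apply Finset.card_le_card_of_injOn
        (fun t => if h : t.Nonempty then (t.min' h, t.max' h) else (0, 0))
      · intro t ht
        have htT : t ∈ T := by
          rcases Finset.mem_union.mp ht with h | h <;> exact (Finset.mem_filter.mp h).1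
        have hcR0 : (t ∩ R).card = 0 := by
          have hp := hpart t htT
          rcases Finset.mem_union.mp ht with h | h <;>
            · have h2 := (Finset.mem_filter.mp h).2
              omega
        have hne : t.Nonempty := Finset.card_pos.mp (by rw [(hT1 t htT).2]; omega)
        have hmin := t.min'_mem hne
        have hmax := t.max'_mem hne
        have hminb := hbnd t htT _ hmin
        have hmaxb := hbnd t htT _ hmax
        have hsp := hT3 t htT (t.min' hne) (t.max' hne) hminb.1
          (fun z hz => ⟨Finset.min'_le t z hz, Finset.le_max' t z hz⟩)
        have hmaxM : t.max' hne ≤ ℓ + w := by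
          by_contra hcc
          push_neg at hcc
          have hmem : t.max' hne ∈ t ∩ R :=
            Finset.mem_inter.mpr ⟨hmax, by rw [hR, Finset.mem_Icc]; omega⟩
          rw [Finset.card_eq_zero.mp hcR0] at hmem
          exact absurd hmem (Finset.notMem_empty _)
        show (if h : t.Nonempty then (t.min' h, t.max' h) else (0, 0)) ∈ K1
        rw [dif_pos hne, hK1def]
        apply Finset.mem_biUnion.mpr
        exact ⟨t.min' hne, Finset.mem_Icc.mpr ⟨hminb.1, by omega⟩,
          Finset.mem_image.mpr ⟨t.max' hne, Finset.mem_Icc.mpr ⟨hsp, hmaxM⟩, rfl⟩⟩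
      · intro t1 h1 t2 h2 heq
        rw [Finset.mem_coe] at h1 h2
        have ht1T : t1 ∈ T := by
          rcases Finset.mem_union.mp h1 with h | h <;> exact (Finset.mem_filter.mp h).1
        have ht2T : t2 ∈ T := by
          rcases Finset.mem_union.mp h2 with h | h <;> exact (Finset.mem_filter.mp h).1
        have hne1 : t1.Nonempty := Finset.card_pos.mp (by rw [(hT1 t1 ht1T).2]; omega)
        have hne2 : t2.Nonempty := Finset.card_pos.mp (by rw [(hT1 t2 ht2T).2]; omega)
        simp only [dif_pos hne1, dif_pos hne2] at heq
        have e1 : t1.min' hne1 = t2.min' hne2 := congrArg Prod.fst heq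
        have e2 : t1.max' hne1 = t2.max' hne2 := congrArg Prod.snd heq
        have hsp := hT3 t1 ht1T (t1.min' hne1) (t1.max' hne1)
          (hbnd t1 ht1T _ (t1.min'_mem hne1)).1
          (fun z hz => ⟨Finset.min'_le t1 z hz, Finset.le_max' t1 z hz⟩)
        exact uniq_block hT1 hT2 ht1T ht2T (show t1.min' hne1 ≠ t1.max' hne1 by omega)
          (t1.min'_mem hne1) (t1.max'_mem hne1)
          (e1 ▸ t2.min'_mem hne2) (e2 ▸ t2.max'_mem hne2)
    have hinj2 : nE + nD ≤ K2.card := by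
      have hdisED : Disjoint (T.filter (fun t => (t ∩ R).card = 2 ∧ (t ∩ M).card = 1))
          (T.filter (fun t => (t ∩ M).card = 2 ∧ (t ∩ R).card = 1)) := by
        rw [Finset.disjoint_left]
        intro t h1 h2
        rw [Finset.mem_filter] at h1 h2
        omega
      rw [hnE, hnD, ← Finset.card_union_of_disjoint hdisED]
      apply Finset.card_le_card_of_injOn
        (fun t => if h : t.Nonempty then (t.min' h - ℓ, t.max' h) else (0, 0))
      · intro t ht
        have htT : t ∈ T := by
          rcases Finset.mem_union.mp ht with h | h <;> exact (Finset.mem_filter.mp h).1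
        have hcL0 : (t ∩ L).card = 0 := by
          have hp := hpart t htT
          rcases Finset.mem_union.mp ht with h | h <;>
            · have h2 := (Finset.mem_filter.mp h).2
              omega
        have hne : t.Nonempty := Finset.card_pos.mp (by rw [(hT1 t htT).2]; omega)
        have hmin := t.min'_mem hne
        have hmax := t.max'_mem hne
        have hminb := hbnd t htT _ hmin
        have hmaxb := hbnd t htT _ hmax
        have hsp := hT3 t htT (t.min' hne) (t.max' hne) hminb.1
          (fun z hz => ⟨Finset.min'_le t z hz, Finset.le_max' t z hz⟩)
        have hminM : ℓ + 1 ≤ t.min' hne := by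
          by_contra hcc
          push_neg at hcc
          have hmem : t.min' hne ∈ t ∩ L :=
            Finset.mem_inter.mpr ⟨hmin, by rw [hL, Finset.mem_Icc]; omega⟩
          rw [Finset.card_eq_zero.mp hcL0] at hmem
          exact absurd hmem (Finset.notMem_empty _)
        show (if h : t.Nonempty then (t.min' h - ℓ, t.max' h) else (0, 0)) ∈ K2
        rw [dif_pos hne, hK2def]
        apply Finset.mem_biUnion.mpr
        refine ⟨t.min' hne - ℓ, Finset.mem_Icc.mpr ⟨by omega, by omega⟩,
          Finset.mem_image.mpr ⟨t.max' hne, Finset.mem_Icc.mpr ⟨by omega, by omega⟩, rfl⟩⟩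
      · intro t1 h1 t2 h2 heq
        rw [Finset.mem_coe] at h1 h2
        have ht1T : t1 ∈ T := by
          rcases Finset.mem_union.mp h1 with h | h <;> exact (Finset.mem_filter.mp h).1
        have ht2T : t2 ∈ T := by
          rcases Finset.mem_union.mp h2 with h | h <;> exact (Finset.mem_filter.mp h).1
        have hcL01 : (t1 ∩ L).card = 0 := by
          have hp := hpart t1 ht1T
          rcases Finset.mem_union.mp h1 with h | h <;>
            · have h2' := (Finset.mem_filter.mp h).2
              omega
        have hcL02 : (t2 ∩ L).card = 0 := by
          have hp := hpart t2 ht2T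
          rcases Finset.mem_union.mp h2 with h | h <;>
            · have h2' := (Finset.mem_filter.mp h).2
              omega
        have hne1 : t1.Nonempty := Finset.card_pos.mp (by rw [(hT1 t1 ht1T).2]; omega)
        have hne2 : t2.Nonempty := Finset.card_pos.mp (by rw [(hT1 t2 ht2T).2]; omega)
        have hminM1 : ℓ + 1 ≤ t1.min' hne1 := by
          by_contra hcc
          push_neg at hcc
          have hmem : t1.min' hne1 ∈ t1 ∩ L :=
            Finset.mem_inter.mpr ⟨t1.min'_mem hne1,
              by rw [hL, Finset.mem_Icc]
                 exact ⟨(hbnd t1 ht1T _ (t1.min'_mem hne1)).1, by omega⟩⟩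
          rw [Finset.card_eq_zero.mp hcL01] at hmem
          exact absurd hmem (Finset.notMem_empty _)
        have hminM2 : ℓ + 1 ≤ t2.min' hne2 := by
          by_contra hcc
          push_neg at hcc
          have hmem : t2.min' hne2 ∈ t2 ∩ L :=
            Finset.mem_inter.mpr ⟨t2.min'_mem hne2,
              by rw [hL, Finset.mem_Icc]
                 exact ⟨(hbnd t2 ht2T _ (t2.min'_mem hne2)).1, by omega⟩⟩
          rw [Finset.card_eq_zero.mp hcL02] at hmem
          exact absurd hmem (Finset.notMem_empty _)
        simp only [dif_pos hne1, dif_pos hne2] at heq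
        have e1' : t1.min' hne1 - ℓ = t2.min' hne2 - ℓ := congrArg Prod.fst heq
        have e1 : t1.min' hne1 = t2.min' hne2 := by omega
        have e2 : t1.max' hne1 = t2.max' hne2 := congrArg Prod.snd heq
        have hsp := hT3 t1 ht1T (t1.min' hne1) (t1.max' hne1)
          (hbnd t1 ht1T _ (t1.min'_mem hne1)).1
          (fun z hz => ⟨Finset.min'_le t1 z hz, Finset.le_max' t1 z hz⟩)
        exact uniq_block hT1 hT2 ht1T ht2T (show t1.min' hne1 ≠ t1.max' hne1 by omega)
          (t1.min'_mem hne1) (t1.max'_mem hne1)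
          (e1 ▸ t2.min'_mem hne2) (e2 ▸ t2.max'_mem hne2)
    -- staircase cardinalities
    have hs1 : 2 * K1.card = w * (w + 1) := by rw [hK1def]; exact stair_card ℓ w
    have hs2 : 2 * K2.card = w * (w + 1) := by rw [hK2def]; exact stair_card (2 * ℓ) w
    -- final arithmetic
    have hmul1 : w * (w + 1) = w * w + w := by ring
    rw [hmul1] at hs1 hs2
    have hmul2 : w * w + 3 * w ≤ w * ℓ := by
      calc w * w + 3 * w = w * (w + 3) := by ring
        _ ≤ w * ℓ := Nat.mul_le_mul_left w hwl
    have hmul3 : w * ℓ + 3 * ℓ ≤ ℓ * ℓ := by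
      calc w * ℓ + 3 * ℓ = (w + 3) * ℓ := by ring
        _ ≤ ℓ * ℓ := Nat.mul_le_mul_right ℓ hwl
    omega

end PosBound
end GoodSeqAux

/-- If a Steiner triple system of order `v ≥ 7` has an `ℓ`-good sequencing (`ℓ ≥ 3`),
then `3ℓ ≤ v + 2`. -/
theorem good_sequencing_bound
    (v ℓ : ℕ) (hℓ : 3 ≤ ℓ) (hv : 7 ≤ v) (B : Finset (Finset ℕ)) (hSTS : IsSTS v B)
    (x : ℕ → ℕ) (hx : IsGoodSeq v ℓ B x) :
    3 * ℓ ≤ v + 2 := by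
  obtain ⟨hbij, hwin⟩ := hx
  obtain ⟨hBsub, hBpair⟩ := hSTS
  set pb : Finset ℕ → Finset ℕ := fun b => (Finset.Icc 1 v).filter (fun i => x i ∈ b) with hpb
  set T := B.image pb with hT
  have hmem : ∀ i, i ∈ Finset.Icc 1 v → i ∈ Set.Icc (1 : ℕ) v := by
    intro i hi
    rw [Finset.mem_Icc] at hi
    exact hi
  have hpbcard : ∀ b ∈ B, (pb b).card = b.card := by
    intro b hb
    apply Finset.card_bij (fun i _ => x i)
    · intro i hi
      exact (Finset.mem_filter.mp hi).2
    · intro i1 hi1 i2 hi2 hxe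
      exact hbij.injOn (hmem i1 (Finset.mem_filter.mp hi1).1)
        (hmem i2 (Finset.mem_filter.mp hi2).1) hxe
    · intro p hp
      have hpIcc : p ∈ Set.Icc (1 : ℕ) v := by
        have := (hBsub b hb).1 hp
        rw [Finset.mem_Icc] at this
        exact this
      obtain ⟨i, hi, hxi⟩ := hbij.surjOn hpIcc
      exact ⟨i, Finset.mem_filter.mpr ⟨Finset.mem_Icc.mpr ⟨hi.1, hi.2⟩, hxi ▸ hp⟩, hxi⟩
  have hT1 : ∀ t ∈ T, t ⊆ Finset.Icc 1 v ∧ t.card = 3 := by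
    intro t ht
    obtain ⟨b, hb, rfl⟩ := Finset.mem_image.mp ht
    exact ⟨Finset.filter_subset _ _, by rw [hpbcard b hb, (hBsub b hb).2]⟩
  have hT2 : ∀ i ∈ Finset.Icc 1 v, ∀ j ∈ Finset.Icc 1 v, i ≠ j →
      ∃! t, t ∈ T ∧ i ∈ t ∧ j ∈ t := by
    intro i hi j hj hij
    have hxi : x i ∈ Finset.Icc 1 v := by
      have := hbij.mapsTo (hmem i hi)
      exact Finset.mem_Icc.mpr ⟨this.1, this.2⟩
    have hxj : x j ∈ Finset.Icc 1 v := by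
      have := hbij.mapsTo (hmem j hj)
      exact Finset.mem_Icc.mpr ⟨this.1, this.2⟩
    have hxij : x i ≠ x j := fun h => hij (hbij.injOn (hmem i hi) (hmem j hj) h)
    obtain ⟨b, ⟨hbB, hbi, hbj⟩, hbu⟩ := hBpair (x i) hxi (x j) hxj hxij
    refine ⟨pb b, ⟨Finset.mem_image_of_mem pb hbB,
      Finset.mem_filter.mpr ⟨hi, hbi⟩, Finset.mem_filter.mpr ⟨hj, hbj⟩⟩, ?_⟩
    rintro t ⟨htT, hit, hjt⟩
    obtain ⟨b', hb', rfl⟩ := Finset.mem_image.mp htT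
    rw [hbu b' ⟨hb', (Finset.mem_filter.mp hit).2, (Finset.mem_filter.mp hjt).2⟩]
  have hT3 : ∀ t ∈ T, ∀ a b : ℕ, 1 ≤ a → (∀ z ∈ t, a ≤ z ∧ z ≤ b) → a + ℓ ≤ b := by
    intro t ht a b ha hbound
    by_contra hc
    push_neg at hc
    obtain ⟨bb, hbb, rfl⟩ := Finset.mem_image.mp ht
    apply hwin a ha bb hbb
    intro p hp
    rw [Finset.mem_coe] at hp
    have hpIcc : p ∈ Set.Icc (1 : ℕ) v := by
      have := (hBsub bb hbb).1 hp
      rw [Finset.mem_Icc] at this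
      exact this
    obtain ⟨i, hi, hxi⟩ := hbij.surjOn hpIcc
    have hifilter : i ∈ pb bb :=
      Finset.mem_filter.mpr ⟨Finset.mem_Icc.mpr ⟨hi.1, hi.2⟩, hxi ▸ hp⟩
    have hbd := hbound i hifilter
    exact ⟨i, ⟨⟨hbd.1, by omega⟩, hi⟩, hxi⟩
  exact pos_bound T hℓ hv hT1 hT2 hT3
end

section
/- If ℓ > 3 is an odd integer, then no Steiner triple system of order 3ℓ − 2 has an ℓ-good sequencing. -/
/-- Weight on pairs of positions; the two "halves" are `[1, ℓ+1]` and `[ℓ+2, 3ℓ-2]`.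
Same half & close: `2`; same half & far apart (distance `≥ ℓ`): `-4`; different halves: `-1`. -/
def gw (ℓ p q : ℕ) : ℤ :=
  if (p ≤ ℓ+1 ∧ q ≤ ℓ+1) ∨ (ℓ+1 < p ∧ ℓ+1 < q) then
    if p + ℓ ≤ q ∨ q + ℓ ≤ p then -4 else 2
  else -1

lemma gw_symm (ℓ p q : ℕ) : gw ℓ p q = gw ℓ q p := by
  unfold gw; split_ifs <;> first | rfl | omega

lemma gw_diag (ℓ p : ℕ) (hl : 1 ≤ ℓ) : gw ℓ p p = 2 := by
  unfold gw; split_ifs <;> omega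

/-- The key pointwise estimate: any triangle whose extreme positions are at distance `≥ ℓ`
has total weight at most `0`. -/
lemma gw_triangle (ℓ p q r : ℕ) (h : ℓ + min p (min q r) ≤ max p (max q r)) :
    gw ℓ p q + gw ℓ q r + gw ℓ p r ≤ 0 := by
  unfold gw; split_ifs <;> omega

lemma gw_eval (ℓ p q : ℕ) : gw ℓ p q =
    2 - 3 * (if (p ≤ ℓ+1 ∧ ℓ+1 < q) ∨ (ℓ+1 < p ∧ q ≤ ℓ+1) then (1:ℤ) else 0)
      - 6 * (if ((p ≤ ℓ+1 ∧ q ≤ ℓ+1) ∨ (ℓ+1 < p ∧ ℓ+1 < q)) ∧ (p + ℓ ≤ q ∨ q + ℓ ≤ p)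
          then (1:ℤ) else 0) := by
  unfold gw; split_ifs <;> omega

open Finset in
/-- Counting the ordered pairs of an interval at distance `≥ ℓ`. -/
lemma far_card (ℓ a b : ℕ) (hl : 1 ≤ ℓ) (hab : a + ℓ ≤ b + 1) :
    (((Finset.Icc a b) ×ˢ (Finset.Icc a b)).filter
        (fun z => z.1 + ℓ ≤ z.2 ∨ z.2 + ℓ ≤ z.1)).card
      = ((Finset.Icc a (b - (ℓ-1))).offDiag).card := by
  apply Finset.card_nbij'
    (i := fun z => if z.1 < z.2 then (z.1, z.2 - (ℓ-1)) else (z.1 - (ℓ-1), z.2))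
    (j := fun z => if z.1 < z.2 then (z.1, z.2 + (ℓ-1)) else (z.1 + (ℓ-1), z.2))
  · rintro ⟨p, q⟩ hz
    simp only [Finset.mem_coe, Finset.mem_filter, Finset.mem_product, Finset.mem_Icc] at hz
    dsimp only
    split_ifs with h <;>
      simp only [Finset.mem_coe, Finset.mem_offDiag, Finset.mem_Icc, ne_eq] <;> omega
  · rintro ⟨p, q⟩ hz
    simp only [Finset.mem_coe, Finset.mem_offDiag, Finset.mem_Icc, ne_eq] at hz
    dsimp only
    split_ifs with h <;>
      simp only [Finset.mem_coe, Finset.mem_filter, Finset.mem_product, Finset.mem_Icc] <;> omega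
  · rintro ⟨p, q⟩ hz
    simp only [Finset.mem_coe, Finset.mem_filter, Finset.mem_product, Finset.mem_Icc] at hz
    dsimp only
    split_ifs with h h2 h2 <;> simp_all [Prod.ext_iff] <;> omega
  · rintro ⟨p, q⟩ hz
    simp only [Finset.mem_coe, Finset.mem_offDiag, Finset.mem_Icc, ne_eq] at hz
    dsimp only
    split_ifs with h h2 h2 <;> simp_all [Prod.ext_iff] <;> omega

lemma sum_offDiag_three (f : ℕ → ℕ → ℤ) (u1 u2 u3 : ℕ)
    (h12 : u1 ≠ u2) (h13 : u1 ≠ u3) (h23 : u2 ≠ u3) :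
    ∑ z ∈ ({u1, u2, u3} : Finset ℕ).offDiag, f z.1 z.2
      = f u1 u2 + f u2 u1 + f u1 u3 + f u3 u1 + f u2 u3 + f u3 u2 := by
  have hset : ({u1, u2, u3} : Finset ℕ).offDiag =
      ({(u1,u2),(u2,u1),(u1,u3),(u3,u1),(u2,u3),(u3,u2)} : Finset (ℕ × ℕ)) := by
    ext ⟨a, b⟩
    simp only [Finset.mem_offDiag, Finset.mem_insert, Finset.mem_singleton, Prod.mk.injEq,
      ne_eq]
    constructor
    · rintro ⟨(rfl | rfl | rfl), (rfl | rfl | rfl), hab⟩ <;> tauto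
    · rintro (⟨rfl, rfl⟩ | ⟨rfl, rfl⟩ | ⟨rfl, rfl⟩ | ⟨rfl, rfl⟩ | ⟨rfl, rfl⟩ | ⟨rfl, rfl⟩) <;>
        tauto
  rw [hset]
  rw [Finset.sum_insert (by simp [Prod.ext_iff]; omega),
      Finset.sum_insert (by simp [Prod.ext_iff]; omega),
      Finset.sum_insert (by simp [Prod.ext_iff]; omega),
      Finset.sum_insert (by simp [Prod.ext_iff]; omega),
      Finset.sum_insert (by simp [Prod.ext_iff]; omega),
      Finset.sum_singleton]
  ring

open Finset in
/-- The total weight of all ordered pairs of distinct positions is `6ℓ - 18`. -/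
lemma total_weight (ℓ : ℕ) (hℓ : 3 < ℓ) :
    ∑ z ∈ (Finset.Icc 1 (3*ℓ-2)).offDiag, gw ℓ z.1 z.2 = 6 * (ℓ:ℤ) - 18 := by
  classical
  set v : ℕ := 3 * ℓ - 2 with hv
  set I : Finset ℕ := Finset.Icc 1 v with hI
  have hIcard : I.card = v := by rw [hI, Nat.card_Icc]; omega
  have hoff : (I ×ˢ I).filter (fun z => ¬ z.1 = z.2) = I.offDiag := by
    ext z
    simp [Finset.mem_offDiag, Finset.mem_filter, Finset.mem_product, and_assoc]
  have hsplit : ∑ z ∈ I ×ˢ I, gw ℓ z.1 z.2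
      = ∑ z ∈ (I ×ˢ I).filter (fun z => z.1 = z.2), gw ℓ z.1 z.2
        + ∑ z ∈ I.offDiag, gw ℓ z.1 z.2 := by
    rw [← hoff]
    exact (Finset.sum_filter_add_sum_filter_not _ _ _).symm
  have hdiagcard : ((I ×ˢ I).filter (fun z => z.1 = z.2)).card = v := by
    rw [← hIcard]
    apply Finset.card_nbij' (i := fun z : ℕ × ℕ => z.1) (j := fun u : ℕ => (u, u))
    · rintro ⟨a, b⟩ hz
      simp only [Finset.mem_coe, Finset.mem_filter, Finset.mem_product] at hz
      exact hz.1.1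
    · intro u hu
      simp only [Finset.mem_coe, Finset.mem_filter, Finset.mem_product]
      exact ⟨⟨hu, hu⟩, trivial⟩
    · rintro ⟨a, b⟩ hz
      simp only [Finset.mem_coe, Finset.mem_filter, Finset.mem_product] at hz
      simp [hz.2]
    · intro u hu
      rfl
  have hdiag : ∑ z ∈ (I ×ˢ I).filter (fun z => z.1 = z.2), gw ℓ z.1 z.2 = 2 * (v:ℤ) := by
    have hconst : ∀ z ∈ (I ×ˢ I).filter (fun z : ℕ × ℕ => z.1 = z.2), gw ℓ z.1 z.2 = 2 := by
      rintro ⟨a, b⟩ hz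
      simp only [Finset.mem_filter] at hz
      have : a = b := hz.2
      subst this
      exact gw_diag ℓ a (by omega)
    rw [Finset.sum_congr rfl hconst, Finset.sum_const, hdiagcard, nsmul_eq_mul]
    ring
  have hfA : I.filter (fun u => u ≤ ℓ+1) = Finset.Icc 1 (ℓ+1) := by
    ext u
    simp only [hI, Finset.mem_filter, Finset.mem_Icc]
    omega
  have hfB : I.filter (fun u => ℓ+1 < u) = Finset.Icc (ℓ+2) v := by
    ext u
    simp only [hI, Finset.mem_filter, Finset.mem_Icc]
    omega
  have hcardA : (Finset.Icc 1 (ℓ+1)).card = ℓ+1 := by rw [Nat.card_Icc]; omega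
  have hcardB : (Finset.Icc (ℓ+2) v).card = 2*ℓ-3 := by rw [Nat.card_Icc]; omega
  have hcross : (((I ×ˢ I)).filter
      (fun z => (z.1 ≤ ℓ+1 ∧ ℓ+1 < z.2) ∨ (ℓ+1 < z.1 ∧ z.2 ≤ ℓ+1))).card
      = (ℓ+1) * (2*ℓ-3) + (2*ℓ-3) * (ℓ+1) := by
    rw [Finset.filter_or, Finset.card_union_of_disjoint]
    · rw [Finset.filter_product (fun u : ℕ => u ≤ ℓ+1) (fun u : ℕ => ℓ+1 < u),
        Finset.filter_product (fun u : ℕ => ℓ+1 < u) (fun u : ℕ => u ≤ ℓ+1),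
        hfA, hfB, Finset.card_product, Finset.card_product, hcardA, hcardB]
    · simp only [Finset.disjoint_left, Finset.mem_filter]
      rintro ⟨a, b⟩ ⟨_, h1⟩ ⟨_, h2⟩
      omega
  have hfarA : ((I ×ˢ I).filter
      (fun z => (z.1 ≤ ℓ+1 ∧ z.2 ≤ ℓ+1) ∧ (z.1 + ℓ ≤ z.2 ∨ z.2 + ℓ ≤ z.1))).card = 2 := by
    rw [← Finset.filter_filter,
      Finset.filter_product (fun u : ℕ => u ≤ ℓ+1) (fun u : ℕ => u ≤ ℓ+1),
      hfA, far_card ℓ 1 (ℓ+1) (by omega) (by omega)]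
    have h2 : ℓ + 1 - (ℓ - 1) = 2 := by omega
    rw [h2, Finset.offDiag_card, Nat.card_Icc]
  have hfarB : ((I ×ˢ I).filter
      (fun z => (ℓ+1 < z.1 ∧ ℓ+1 < z.2) ∧ (z.1 + ℓ ≤ z.2 ∨ z.2 + ℓ ≤ z.1))).card
      = (ℓ-2) * (ℓ-2) - (ℓ-2) := by
    rw [← Finset.filter_filter,
      Finset.filter_product (fun u : ℕ => ℓ+1 < u) (fun u : ℕ => ℓ+1 < u),
      hfB, far_card ℓ (ℓ+2) v (by omega) (by omega)]
    have h2 : v - (ℓ - 1) = 2*ℓ-1 := by omega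
    rw [h2, Finset.offDiag_card, Nat.card_Icc]
    have h3 : 2*ℓ-1 + 1 - (ℓ+2) = ℓ-2 := by omega
    rw [h3]
  have hfar : ((I ×ˢ I).filter
      (fun z => ((z.1 ≤ ℓ+1 ∧ z.2 ≤ ℓ+1) ∨ (ℓ+1 < z.1 ∧ ℓ+1 < z.2))
        ∧ (z.1 + ℓ ≤ z.2 ∨ z.2 + ℓ ≤ z.1))).card
      = 2 + ((ℓ-2) * (ℓ-2) - (ℓ-2)) := by
    have hsplit2 : (I ×ˢ I).filter
        (fun z => ((z.1 ≤ ℓ+1 ∧ z.2 ≤ ℓ+1) ∨ (ℓ+1 < z.1 ∧ ℓ+1 < z.2))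
          ∧ (z.1 + ℓ ≤ z.2 ∨ z.2 + ℓ ≤ z.1))
        = (I ×ˢ I).filter
            (fun z => ((z.1 ≤ ℓ+1 ∧ z.2 ≤ ℓ+1) ∧ (z.1 + ℓ ≤ z.2 ∨ z.2 + ℓ ≤ z.1))
              ∨ ((ℓ+1 < z.1 ∧ ℓ+1 < z.2) ∧ (z.1 + ℓ ≤ z.2 ∨ z.2 + ℓ ≤ z.1))) := by
      apply Finset.filter_congr
      rintro ⟨a, b⟩ _
      constructor
      · rintro ⟨h | h, hf⟩
        · exact Or.inl ⟨h, hf⟩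
        · exact Or.inr ⟨h, hf⟩
      · rintro (⟨h, hf⟩ | ⟨h, hf⟩)
        · exact ⟨Or.inl h, hf⟩
        · exact ⟨Or.inr h, hf⟩
    rw [hsplit2, Finset.filter_or, Finset.card_union_of_disjoint, hfarA, hfarB]
    simp only [Finset.disjoint_left, Finset.mem_filter]
    rintro ⟨a, b⟩ ⟨_, h1⟩ ⟨_, h2⟩
    omega
  have hsq : ∑ z ∈ I ×ˢ I, gw ℓ z.1 z.2
      = 2 * ((v:ℤ) * v)
        - 3 * (((ℓ:ℤ)+1) * (2*ℓ-3) + (2*(ℓ:ℤ)-3) * (ℓ+1))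
        - 6 * (2 + (((ℓ:ℤ)-2) * (ℓ-2) - (ℓ-2))) := by
    rw [Finset.sum_congr rfl (fun z _ => gw_eval ℓ z.1 z.2)]
    rw [Finset.sum_sub_distrib, Finset.sum_sub_distrib, Finset.sum_const,
      ← Finset.mul_sum, ← Finset.mul_sum, Finset.sum_boole, Finset.sum_boole,
      Finset.card_product, hIcard, hcross, hfar]
    have c1 : ((2*ℓ-3 : ℕ) : ℤ) = 2*(ℓ:ℤ)-3 := by omega
    have c2 : ((ℓ-2 : ℕ) : ℤ) = (ℓ:ℤ)-2 := by omega
    have c3 : (((ℓ-2) * (ℓ-2) - (ℓ-2) : ℕ) : ℤ) = ((ℓ:ℤ)-2) * ((ℓ:ℤ)-2) - ((ℓ:ℤ)-2) := by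
      have h4 : (ℓ-2) ≤ (ℓ-2) * (ℓ-2) := Nat.le_mul_of_pos_left _ (by omega)
      push_cast [Nat.cast_sub h4, c2]
      ring
    push_cast [c1, c2, c3]
    ring
  have hfinal : ∑ z ∈ I.offDiag, gw ℓ z.1 z.2
      = (∑ z ∈ I ×ˢ I, gw ℓ z.1 z.2) - 2 * (v:ℤ) := by
    rw [hsplit, hdiag]
    ring
  rw [hfinal, hsq]
  have hvz : (v:ℤ) = 3 * (ℓ:ℤ) - 2 := by omega
  rw [hvz]
  ring

/-- If `ℓ > 3` is an odd integer, then no Steiner triple system of order `3ℓ − 2` has an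
`ℓ`-good sequencing. -/
theorem no_good_sequencing_of_sts_three_ell_sub_two
    (ℓ : ℕ) (hodd : Odd ℓ) (hℓ : 3 < ℓ) (B : Finset (Finset ℕ))
    (hSTS : IsSTS (3 * ℓ - 2) B) :
    ¬ ∃ x : ℕ → ℕ, IsGoodSeq (3 * ℓ - 2) ℓ B x := by
  rintro ⟨x, hbij, hgood⟩
  obtain ⟨hB, hpairs⟩ := hSTS
  classical
  set v : ℕ := 3 * ℓ - 2 with hv
  have hl1 : 1 ≤ ℓ := by omega
  have hv10 : 10 ≤ v := by omega
  have hinv : Set.InvOn (Function.invFunOn x (Set.Icc 1 v)) x (Set.Icc 1 v) (Set.Icc 1 v) :=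
    hbij.invOn_invFunOn
  set y := Function.invFunOn x (Set.Icc 1 v) with hy
  have hymaps : Set.MapsTo y (Set.Icc 1 v) (Set.Icc 1 v) := hbij.surjOn.mapsTo_invFunOn
  set I : Finset ℕ := Finset.Icc 1 v with hI
  have toSet : ∀ u : ℕ, u ∈ I → u ∈ Set.Icc 1 v := by
    intro u hu
    rw [hI, Finset.mem_Icc] at hu
    exact Set.mem_Icc.mpr hu
  have toFin : ∀ u : ℕ, u ∈ Set.Icc 1 v → u ∈ I := by
    intro u hu
    rw [hI, Finset.mem_Icc]
    exact Set.mem_Icc.mp hu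
  -- Step A : each block contributes a nonpositive amount
  have hblock : ∀ b ∈ B, ∑ z ∈ b.offDiag, gw ℓ (y z.1) (y z.2) ≤ 0 := by
    intro b hb
    obtain ⟨hsub, hcard⟩ := hB b hb
    obtain ⟨u1, u2, u3, h12, h13, h23, rfl⟩ := Finset.card_eq_three.mp hcard
    have hu1 : u1 ∈ Set.Icc 1 v := toSet _ (hsub (by simp))
    have hu2 : u2 ∈ Set.Icc 1 v := toSet _ (hsub (by simp))
    have hu3 : u3 ∈ Set.Icc 1 v := toSet _ (hsub (by simp))
    have hp1 := Set.mem_Icc.mp (hymaps hu1)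
    have hp2 := Set.mem_Icc.mp (hymaps hu2)
    have hp3 := Set.mem_Icc.mp (hymaps hu3)
    have hx1 : x (y u1) = u1 := hinv.2 hu1
    have hx2 : x (y u2) = u2 := hinv.2 hu2
    have hx3 : x (y u3) = u3 := hinv.2 hu3
    have hspan : ℓ + min (y u1) (min (y u2) (y u3)) ≤ max (y u1) (max (y u2) (y u3)) := by
      by_contra hcon
      push_neg at hcon
      refine hgood (min (y u1) (min (y u2) (y u3))) (by omega) _ hb ?_
      intro u hu
      simp only [Finset.coe_insert, Set.mem_insert_iff, Finset.coe_singleton,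
        Set.mem_singleton_iff] at hu
      rcases hu with rfl | rfl | rfl
      · exact ⟨y u, ⟨Set.mem_Icc.mpr ⟨by omega, by omega⟩, hymaps hu1⟩, hx1⟩
      · exact ⟨y u, ⟨Set.mem_Icc.mpr ⟨by omega, by omega⟩, hymaps hu2⟩, hx2⟩
      · exact ⟨y u, ⟨Set.mem_Icc.mpr ⟨by omega, by omega⟩, hymaps hu3⟩, hx3⟩
    rw [sum_offDiag_three (fun a b => gw ℓ (y a) (y b)) u1 u2 u3 h12 h13 h23]
    have ht := gw_triangle ℓ (y u1) (y u2) (y u3) hspan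
    have hs1 := gw_symm ℓ (y u1) (y u2)
    have hs2 := gw_symm ℓ (y u1) (y u3)
    have hs3 := gw_symm ℓ (y u2) (y u3)
    linarith
  -- Step B : every distinct pair of points lies in exactly one block
  have hcard1 : ∀ z ∈ I.offDiag, (B.filter (fun b => z.1 ∈ b ∧ z.2 ∈ b)).card = 1 := by
    rintro ⟨u, w⟩ hz
    rw [Finset.mem_offDiag] at hz
    obtain ⟨hu, hw, hne⟩ := hz
    obtain ⟨b0, hb0, huniq⟩ := hpairs u (by rwa [hI] at hu) w (by rwa [hI] at hw) hne
    rw [Finset.card_eq_one]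
    refine ⟨b0, ?_⟩
    ext b
    simp only [Finset.mem_filter, Finset.mem_singleton]
    constructor
    · rintro ⟨hbB, h1, h2⟩
      exact huniq b ⟨hbB, h1, h2⟩
    · rintro rfl
      exact ⟨hb0.1, hb0.2.1, hb0.2.2⟩
  -- Step C : the total weight is nonpositive, by double counting over blocks
  have step1 : ∑ z ∈ I.offDiag, gw ℓ (y z.1) (y z.2) ≤ 0 := by
    have e1 : ∀ z ∈ I.offDiag, gw ℓ (y z.1) (y z.2)
        = ∑ b ∈ B, (if z.1 ∈ b ∧ z.2 ∈ b then gw ℓ (y z.1) (y z.2) else 0) := by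
      intro z hz
      rw [← Finset.sum_filter, Finset.sum_const, hcard1 z hz, one_smul]
    rw [Finset.sum_congr rfl e1, Finset.sum_comm]
    apply Finset.sum_nonpos
    intro b hb
    have hsubI : b ⊆ I := fun t ht =>
      toFin t (Set.mem_Icc.mpr (Finset.mem_Icc.mp ((hB b hb).1 ht)))
    have heq : ∑ z ∈ I.offDiag, (if z.1 ∈ b ∧ z.2 ∈ b then gw ℓ (y z.1) (y z.2) else 0)
        = ∑ z ∈ b.offDiag, gw ℓ (y z.1) (y z.2) := by
      rw [← Finset.sum_filter]
      apply Finset.sum_congr _ (fun _ _ => rfl)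
      ext z
      simp only [Finset.mem_filter, Finset.mem_offDiag]
      constructor
      · rintro ⟨⟨_, _, hne⟩, h1, h2⟩
        exact ⟨h1, h2, hne⟩
      · rintro ⟨h1, h2, hne⟩
        exact ⟨⟨hsubI h1, hsubI h2, hne⟩, h1, h2⟩
    rw [heq]
    exact hblock b hb
  -- Step D : rewrite the sum in terms of positions
  have step2 : ∑ z ∈ I.offDiag, gw ℓ z.1 z.2 = ∑ z ∈ I.offDiag, gw ℓ (y z.1) (y z.2) := by
    apply Finset.sum_nbij' (i := fun z : ℕ × ℕ => (x z.1, x z.2))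
      (j := fun z : ℕ × ℕ => (y z.1, y z.2))
    · rintro ⟨p, q⟩ hz
      rw [Finset.mem_offDiag] at hz ⊢
      obtain ⟨hp, hq, hne⟩ := hz
      exact ⟨toFin _ (hbij.mapsTo (toSet _ hp)), toFin _ (hbij.mapsTo (toSet _ hq)),
        fun h => hne (hbij.injOn (toSet _ hp) (toSet _ hq) h)⟩
    · rintro ⟨u, w⟩ hz
      rw [Finset.mem_offDiag] at hz ⊢
      obtain ⟨hu, hw, hne⟩ := hz
      refine ⟨toFin _ (hymaps (toSet _ hu)), toFin _ (hymaps (toSet _ hw)), fun h => hne ?_⟩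
      have := congrArg x h
      rwa [hinv.2 (toSet _ hu), hinv.2 (toSet _ hw)] at this
    · rintro ⟨p, q⟩ hz
      rw [Finset.mem_offDiag] at hz
      simp only [Prod.mk.injEq]
      exact ⟨hinv.1 (toSet _ hz.1), hinv.1 (toSet _ hz.2.1)⟩
    · rintro ⟨u, w⟩ hz
      rw [Finset.mem_offDiag] at hz
      simp only [Prod.mk.injEq]
      exact ⟨hinv.2 (toSet _ hz.1), hinv.2 (toSet _ hz.2.1)⟩
    · rintro ⟨p, q⟩ hz
      rw [Finset.mem_offDiag] at hz
      dsimp only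
      rw [hinv.1 (toSet _ hz.1), hinv.1 (toSet _ hz.2.1)]
  -- Step E : but the total weight over positions is positive
  have step3 : ∑ z ∈ I.offDiag, gw ℓ z.1 z.2 = 6 * (ℓ:ℤ) - 18 := total_weight ℓ hℓ
  rw [step3] at step2
  rw [← step2] at step1
  omega
end

section
/- Let (X, B) be a Steiner triple system of order v on the point set {1, 2, …, v} such that the identity permutation [1 2 … v] is an ℓ-good sequencing, where ℓ ≥ 3 and v ≥ 7. Then the number of blocks B with B ∩ {1, …, ℓ} = ∅ is at most (v−2ℓ)(v−2ℓ+1)/2. -/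
/-- If the identity permutation is an `ℓ`-good sequencing of an STS(v) with `ℓ ≥ 3`, `v ≥ 7`,
then the number of blocks disjoint from `{1, …, ℓ}` is at most `(v−2ℓ)(v−2ℓ+1)/2`. -/
theorem type_zero_block_count_upper_bound
    (v ℓ : ℕ) (hℓ : 3 ≤ ℓ) (hv : 7 ≤ v) (B : Finset (Finset ℕ)) (hSTS : IsSTS v B)
    (hid : IsGoodSeq v ℓ B id) :
    (B.filter (fun b => b ∩ Finset.Icc 1 ℓ = ∅)).card
      ≤ (v - 2 * ℓ) * (v - 2 * ℓ + 1) / 2 := by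
  classical
  set n := v - 2 * ℓ with hn
  set S := B.filter (fun b => b ∩ Finset.Icc 1 ℓ = ∅) with hS
  -- key facts about a type-0 block
  have key : ∀ b ∈ S, ∀ h : b.Nonempty,
      ℓ + 1 ≤ b.min' h ∧ b.max' h ≤ v ∧ b.min' h + ℓ ≤ b.max' h := by
    intro b hb h
    obtain ⟨hbB, hbt⟩ := Finset.mem_filter.mp hb
    obtain ⟨hsub, hcard⟩ := hSTS.1 b hbB
    have hmin := b.min'_mem h
    have hmax := b.max'_mem h
    have hminIcc := Finset.mem_Icc.mp (hsub hmin)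
    have hmaxIcc := Finset.mem_Icc.mp (hsub hmax)
    have hminout : b.min' h ∉ Finset.Icc 1 ℓ := by
      intro hmem
      have : b.min' h ∈ b ∩ Finset.Icc 1 ℓ := Finset.mem_inter.mpr ⟨hmin, hmem⟩
      simp [hbt] at this
    rw [Finset.mem_Icc] at hminout
    have ha : ℓ + 1 ≤ b.min' h := by omega
    refine ⟨ha, hmaxIcc.2, ?_⟩
    by_contra hlt
    push_neg at hlt
    apply hid.2 (b.min' h) (by omega) b hbB
    rw [Set.image_id]
    intro x hx
    have hxb : x ∈ b := hx
    have hxIcc := Finset.mem_Icc.mp (hsub hxb)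
    have h1 := b.min'_le x hxb
    have h2 := b.le_max' x hxb
    simp only [Set.mem_inter_iff, Set.mem_Icc]
    exact ⟨⟨h1, by omega⟩, hxIcc.1, hxIcc.2⟩
  have hinj : S.card ≤ ((Finset.range n).sigma fun j => Finset.range (j + 1)).card := by
    apply Finset.card_le_card_of_injOn
      (fun b => if h : b.Nonempty then
        (⟨b.max' h - (2 * ℓ + 1), b.min' h - (ℓ + 1)⟩ : (_ : ℕ) × ℕ) else ⟨0, 0⟩)
    · intro b hb
      have hbB := (Finset.mem_filter.mp hb).1
      have hcard := (hSTS.1 b hbB).2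
      have hne : b.Nonempty := Finset.card_pos.mp (by omega)
      obtain ⟨ha, hc, hac⟩ := key b hb hne
      simp only [dif_pos hne, Finset.mem_coe, Finset.mem_sigma, Finset.mem_range]
      constructor <;> omega
    · intro b1 hb1 b2 hb2 heq
      replace hb1 : b1 ∈ S := hb1
      replace hb2 : b2 ∈ S := hb2
      have hbB1 := (Finset.mem_filter.mp hb1).1
      have hbB2 := (Finset.mem_filter.mp hb2).1
      have hne1 : b1.Nonempty := Finset.card_pos.mp (by have := (hSTS.1 b1 hbB1).2; omega)
      have hne2 : b2.Nonempty := Finset.card_pos.mp (by have := (hSTS.1 b2 hbB2).2; omega)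
      obtain ⟨ha1, hc1, hac1⟩ := key b1 hb1 hne1
      obtain ⟨ha2, hc2, hac2⟩ := key b2 hb2 hne2
      simp only [dif_pos hne1, dif_pos hne2] at heq
      injection heq with hx hy
      have hminEq : b1.min' hne1 = b2.min' hne2 := by omega
      have hmaxEq : b1.max' hne1 = b2.max' hne2 := by omega
      have hminIcc : b1.min' hne1 ∈ Finset.Icc 1 v :=
        (hSTS.1 b1 hbB1).1 (b1.min'_mem hne1)
      have hmaxIcc : b1.max' hne1 ∈ Finset.Icc 1 v :=
        (hSTS.1 b1 hbB1).1 (b1.max'_mem hne1)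
      obtain ⟨bb, -, huniq⟩ := hSTS.2 _ hminIcc _ hmaxIcc (by omega)
      have e1 := huniq b1 ⟨hbB1, b1.min'_mem hne1, b1.max'_mem hne1⟩
      have e2 := huniq b2 ⟨hbB2, by rw [hminEq]; exact b2.min'_mem hne2,
        by rw [hmaxEq]; exact b2.max'_mem hne2⟩
      rw [e1, e2]
  have hsum : (((Finset.range n).sigma fun j => Finset.range (j + 1)).card)
      = ∑ j ∈ Finset.range n, (j + 1) := by
    simp [Finset.card_sigma]
  have h2 : ∑ i ∈ Finset.range (n + 1), i = ∑ j ∈ Finset.range n, (j + 1) := by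
    rw [Finset.sum_range_succ']
    simp
  have h3 := Finset.sum_range_id_mul_two (n + 1)
  have hmul : n * (n + 1) = (∑ j ∈ Finset.range n, (j + 1)) * 2 := by
    rw [← h2, h3, Nat.add_sub_cancel, Nat.mul_comm]
  have hdiv : n * (n + 1) / 2 = ∑ j ∈ Finset.range n, (j + 1) := by
    rw [hmul, Nat.mul_div_cancel _ (by norm_num)]
  calc S.card ≤ _ := hinj
    _ = n * (n + 1) / 2 := by rw [hsum, hdiv]
end

section
/- Let (X, B) be a Steiner triple system of order v on the point set {1, 2, …, v} such that the identity permutation [1 2 … v] is an ℓ-good sequencing, where ℓ ≥ 3. If B ∈ B is a block containing the point ℓ+1 with |B ∩ {1, …, ℓ}| = 2, then 1 ∈ B; consequently, the point ℓ+1 lies in at most one block B with |B ∩ {1, …, ℓ}| = 2. -/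
/-- If the identity permutation is an `ℓ`-good sequencing of an STS(v) with `ℓ ≥ 3`, then any
block containing the point `ℓ+1` and meeting `{1, …, ℓ}` in exactly two points contains the
point `1`; consequently, the point `ℓ+1` lies in at most one such block. -/
theorem point_succ_ell_in_at_most_one_type_two_block
    (v ℓ : ℕ) (hℓ : 3 ≤ ℓ) (B : Finset (Finset ℕ)) (hSTS : IsSTS v B)
    (hid : IsGoodSeq v ℓ B id) :
    (∀ b ∈ B, ℓ + 1 ∈ b → (b ∩ Finset.Icc 1 ℓ).card = 2 → 1 ∈ b) ∧
    (B.filter (fun b => ℓ + 1 ∈ b ∧ (b ∩ Finset.Icc 1 ℓ).card = 2)).card ≤ 1 := by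
  obtain ⟨hblocks, huniq⟩ := hSTS
  obtain ⟨hbij, hgood⟩ := hid
  have key : ∀ b ∈ B, ℓ + 1 ∈ b → (b ∩ Finset.Icc 1 ℓ).card = 2 → 1 ∈ b := by
    intro b hb hmem hcard
    by_contra h1
    have hsub : b ⊆ Finset.Icc 1 v := (hblocks b hb).1
    have hcard3 : b.card = 3 := (hblocks b hb).2
    have hsdiff : (b \ Finset.Icc 1 ℓ).card = 1 := by
      have := Finset.card_inter_add_card_sdiff b (Finset.Icc 1 ℓ)
      omega
    have hone : ∀ x ∈ b, x ∉ Finset.Icc 1 ℓ → x = ℓ + 1 := by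
      intro x hx hx2
      have ha1 : x ∈ b \ Finset.Icc 1 ℓ := Finset.mem_sdiff.2 ⟨hx, hx2⟩
      have ha2 : ℓ + 1 ∈ b \ Finset.Icc 1 ℓ :=
        Finset.mem_sdiff.2 ⟨hmem, by simp⟩
      rcases Finset.card_eq_one.1 hsdiff with ⟨a, ha⟩
      rw [ha] at ha1 ha2
      simp at ha1 ha2
      omega
    apply hgood 2 (by norm_num) b hb
    intro x hx
    have hxb : x ∈ b := hx
    have hxv := Finset.mem_Icc.1 (hsub hxb)
    refine ⟨x, ⟨?_, ?_⟩, rfl⟩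
    · by_cases hc : x ∈ Finset.Icc 1 ℓ
      · have hc' := Finset.mem_Icc.1 hc
        have hne : x ≠ 1 := fun h => h1 (h ▸ hxb)
        exact Set.mem_Icc.2 ⟨by omega, by omega⟩
      · have := hone x hxb hc
        exact Set.mem_Icc.2 ⟨by omega, by omega⟩
    · exact Set.mem_Icc.2 ⟨hxv.1, hxv.2⟩
  refine ⟨key, ?_⟩
  rw [Finset.card_le_one]
  intro b1 hb1 b2 hb2
  simp only [Finset.mem_filter] at hb1 hb2
  obtain ⟨hb1B, hm1, hc1⟩ := hb1
  obtain ⟨hb2B, hm2, hc2⟩ := hb2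
  have h11 : 1 ∈ b1 := key b1 hb1B hm1 hc1
  have h12 : 1 ∈ b2 := key b2 hb2B hm2 hc2
  have hv := Finset.mem_Icc.1 ((hblocks b1 hb1B).1 hm1)
  have hp1 : (1 : ℕ) ∈ Finset.Icc 1 v := Finset.mem_Icc.2 ⟨le_refl _, by omega⟩
  have hp2 : ℓ + 1 ∈ Finset.Icc 1 v := Finset.mem_Icc.2 ⟨by omega, hv.2⟩
  obtain ⟨b, _, hbu⟩ := huniq 1 hp1 (ℓ + 1) hp2 (by omega)
  rw [hbu b1 ⟨hb1B, h11, hm1⟩, hbu b2 ⟨hb2B, h12, hm2⟩]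
end
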